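/- arXiv:1304.0228 — 10 statements merged into one kernel-verified Lean document; each statement's English description precedes it below -/
import Mathlib

section
/- Every closeness preserving transformation of G is an adjacency preserving transformation: if f : G → G is a bijection such that both f and f⁻¹ map close pairs to close pairs, then both f and f⁻¹ map adjacent pairs to adjacent pairs. -/
open Module

variable (K V : Type*) [DivisionRing K] [AddCommGroup V] [Module K V]

/-- Two subspaces `P`, `T` are adjacent: `dim P = dim T = dim (P ⊓ T) + 1`. -/
def SubAdj (P T : Submodule K V) : Prop :=
  finrank K P = finrank K T ∧ finrank K P = finrank K ↥(P ⊓ T) + 1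

/-- Two subspaces are complementary. -/
def SubCompl (S U : Submodule K V) : Prop := S ⊓ U = ⊥ ∧ S ⊔ U = ⊤

/-- The set 𝒢 of pairs of complementary subspaces of dimensions `k` and `n - k`. -/
def GSet (n k : ℕ) : Set (Submodule K V × Submodule K V) :=
  {p | finrank K p.1 = k ∧ finrank K p.2 = n - k ∧ SubCompl K V p.1 p.2}

/-- Adjacency of pairs. -/
def PairAdj (p q : Submodule K V × Submodule K V) : Prop :=
  (p.1 = q.1 ∧ SubAdj K V p.2 q.2) ∨ (SubAdj K V p.1 q.1 ∧ p.2 = q.2)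

/-- Closeness of pairs. -/
def PairClose (p q : Submodule K V × Submodule K V) : Prop :=
  (p.1 = q.1 ∧ p.2 ≠ q.2) ∨ (p.1 ≠ q.1 ∧ p.2 = q.2)

/-! ### Auxiliary definitions and lemmas -/

section Aux

variable {K V}

open Submodule

lemma myspan_inf_bot {D : Submodule K V} {x : V} (hx : x ∉ D) : D ⊓ (K ∙ x) = ⊥ := by
  rw [eq_bot_iff]
  rintro v ⟨hv1, hv2⟩
  obtain ⟨c, rfl⟩ := mem_span_singleton.1 hv2
  rcases eq_or_ne c 0 with rfl | hc
  · simp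
  · have : x ∈ D := by
      have := D.smul_mem c⁻¹ hv1
      rwa [smul_smul, inv_mul_cancel₀ hc, one_smul] at this
    exact absurd this hx

variable [FiniteDimensional K V]

lemma myfinrank_sup_span {D : Submodule K V} {x : V} (hx : x ∉ D) :
    finrank K ↥(D ⊔ K ∙ x) = finrank K D + 1 := by
  have hx0 : x ≠ 0 := fun h => hx (h ▸ D.zero_mem)
  have h := Submodule.finrank_sup_add_finrank_inf_eq D (K ∙ x)
  rw [myspan_inf_bot hx, finrank_span_singleton hx0] at h
  simpa using h

lemma lemA_fwd {m : ℕ} {U0 U1 : Submodule K V}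
    (h0 : finrank K U0 = m) (h1 : finrank K U1 = m)
    (hadj : finrank K ↥(U0 ⊓ U1) + 1 = m) :
    ∃ W : Submodule K V, finrank K W = m ∧ W ≠ U0 ∧ W ≠ U1 ∧
      ∀ S : Submodule K V, S ⊓ W = ⊥ → (S ⊓ U0 = ⊥ ∨ S ⊓ U1 = ⊥) := by
  have hle0 : U0 ⊓ U1 ≤ U0 := inf_le_left
  have hle1 : U0 ⊓ U1 ≤ U1 := inf_le_right
  have hDU0 : U0 ⊓ U1 < U0 := lt_of_le_of_ne hle0 (by
    intro h; rw [h, h0] at hadj; omega)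
  have hDU1 : U0 ⊓ U1 < U1 := lt_of_le_of_ne hle1 (by
    intro h; rw [h, h1] at hadj; omega)
  obtain ⟨x, hxU0, hxD⟩ := SetLike.exists_of_lt hDU0
  obtain ⟨y, hyU1, hyD⟩ := SetLike.exists_of_lt hDU1
  have hxyD : x + y ∉ U0 ⊓ U1 := by
    intro h
    have hx1 : x ∈ U1 := by
      have h2 : x + y - y ∈ U1 := U1.sub_mem (hle1 h) hyU1
      simpa using h2
    exact hxD (mem_inf.2 ⟨hxU0, hx1⟩)
  refine ⟨(U0 ⊓ U1) ⊔ K ∙ (x + y), ?_, ?_, ?_, ?_⟩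
  · rw [myfinrank_sup_span hxyD]; exact hadj
  · intro h
    have hxy : x + y ∈ U0 := h ▸ (le_sup_right : (K ∙ (x+y)) ≤ _) (mem_span_singleton_self (x+y))
    have hy0 : y ∈ U0 := by
      have h2 : x + y - x ∈ U0 := U0.sub_mem hxy hxU0
      simpa using h2
    exact hyD (mem_inf.2 ⟨hy0, hyU1⟩)
  · intro h
    have hxy : x + y ∈ U1 := h ▸ (le_sup_right : (K ∙ (x+y)) ≤ _) (mem_span_singleton_self (x+y))
    have hx1 : x ∈ U1 := by
      have h2 : x + y - y ∈ U1 := U1.sub_mem hxy hyU1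
      simpa using h2
    exact hxD (mem_inf.2 ⟨hxU0, hx1⟩)
  · intro S hSW
    by_contra hcon
    push_neg at hcon
    obtain ⟨u, hu, hu0⟩ := Submodule.exists_mem_ne_zero_of_ne_bot hcon.1
    obtain ⟨v, hv, hv0⟩ := Submodule.exists_mem_ne_zero_of_ne_bot hcon.2
    rw [mem_inf] at hu hv
    have hDW : U0 ⊓ U1 ≤ (U0 ⊓ U1) ⊔ K ∙ (x + y) := le_sup_left
    have huD : u ∉ U0 ⊓ U1 := by
      intro h
      have h2 : u ∈ S ⊓ ((U0 ⊓ U1) ⊔ K ∙ (x+y)) := mem_inf.2 ⟨hu.1, hDW h⟩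
      rw [hSW] at h2
      exact hu0 ((mem_bot K).1 h2)
    have hvD : v ∉ U0 ⊓ U1 := by
      intro h
      have h2 : v ∈ S ⊓ ((U0 ⊓ U1) ⊔ K ∙ (x+y)) := mem_inf.2 ⟨hv.1, hDW h⟩
      rw [hSW] at h2
      exact hv0 ((mem_bot K).1 h2)
    have hU0eq : U0 = (U0 ⊓ U1) ⊔ K ∙ u := by
      refine (Submodule.eq_of_le_of_finrank_eq
        (sup_le hle0 ((span_singleton_le_iff_mem u U0).2 hu.2)) ?_).symm
      rw [myfinrank_sup_span huD, hadj, h0]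
    have hU1eq : U1 = (U0 ⊓ U1) ⊔ K ∙ v := by
      refine (Submodule.eq_of_le_of_finrank_eq
        (sup_le hle1 ((span_singleton_le_iff_mem v U1).2 hv.2)) ?_).symm
      rw [myfinrank_sup_span hvD, hadj, h1]
    obtain ⟨d, hd, cu, hcu, hxeq⟩ : ∃ d ∈ U0 ⊓ U1, ∃ cu ∈ (K ∙ u), d + cu = x := by
      have := hU0eq ▸ hxU0
      exact mem_sup.1 this
    obtain ⟨d', hd', cv, hcv, hyeq⟩ : ∃ d' ∈ U0 ⊓ U1, ∃ cv ∈ (K ∙ v), d' + cv = y := by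
      have := hU1eq ▸ hyU1
      exact mem_sup.1 this
    obtain ⟨a, rfl⟩ := mem_span_singleton.1 hcu
    obtain ⟨b, rfl⟩ := mem_span_singleton.1 hcv
    have ha : a ≠ 0 := by
      rintro rfl
      rw [zero_smul, add_zero] at hxeq
      exact hxD (hxeq ▸ hd)
    have hb : b ≠ 0 := by
      rintro rfl
      rw [zero_smul, add_zero] at hyeq
      exact hyD (hyeq ▸ hd')
    have hkeyW : a • u + b • v ∈ (U0 ⊓ U1) ⊔ K ∙ (x + y) := by
      have heq : a • u + b • v = (x + y) - d - d' := by
        rw [← hxeq, ← hyeq]; abel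
      rw [heq]
      have hxyW : x + y ∈ (U0 ⊓ U1) ⊔ K ∙ (x + y) :=
        (le_sup_right : (K ∙ (x+y)) ≤ _) (mem_span_singleton_self (x+y))
      exact Submodule.sub_mem _ (Submodule.sub_mem _ hxyW (hDW hd)) (hDW hd')
    have hkeyS : a • u + b • v ∈ S := S.add_mem (S.smul_mem a hu.1) (S.smul_mem b hv.1)
    have hzero : a • u + b • v = 0 := by
      have h2 : a • u + b • v ∈ S ⊓ ((U0 ⊓ U1) ⊔ K ∙ (x+y)) := mem_inf.2 ⟨hkeyS, hkeyW⟩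
      rw [hSW] at h2
      exact (mem_bot K).1 h2
    have hauD : a • u ∈ U0 ⊓ U1 := by
      have hav : a • u = -(b • v) := by
        rw [eq_neg_iff_add_eq_zero]; exact hzero
      refine mem_inf.2 ⟨U0.smul_mem a hu.2, ?_⟩
      rw [hav]
      exact U1.neg_mem (U1.smul_mem b hv.2)
    have : u ∈ U0 ⊓ U1 := by
      have := (U0 ⊓ U1).smul_mem a⁻¹ hauD
      rwa [smul_smul, inv_mul_cancel₀ ha, one_smul] at this
    exact huD this

lemma lemA_bwd {n m : ℕ} (hV : finrank K V = n) {U0 U1 : Submodule K V}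
    (h0 : finrank K U0 = m) (h1 : finrank K U1 = m) (hne : U0 ≠ U1)
    (hnadj : finrank K ↥(U0 ⊓ U1) + 1 ≠ m)
    (W : Submodule K V) (hWm : finrank K W = m) (hWU0 : W ≠ U0) (hWU1 : W ≠ U1) :
    ∃ S : Submodule K V, finrank K S = n - m ∧ S ⊓ W = ⊥ ∧ S ⊓ U0 ≠ ⊥ ∧ S ⊓ U1 ≠ ⊥ := by
  have hDlt : finrank K ↥(U0 ⊓ U1) + 2 ≤ m := by
    have hle : finrank K ↥(U0 ⊓ U1) ≤ m := h0 ▸ Submodule.finrank_mono inf_le_left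
    rcases Nat.lt_or_ge (finrank K ↥(U0 ⊓ U1) + 1) m with h | h
    · omega
    · exfalso
      have heq : finrank K ↥(U0 ⊓ U1) = m := by omega
      have : U0 ⊓ U1 = U0 := Submodule.eq_of_le_of_finrank_eq inf_le_left (by rw [heq, h0])
      have hle01 : U0 ≤ U1 := by rw [← this]; exact inf_le_right
      exact hne (Submodule.eq_of_le_of_finrank_eq hle01 (by rw [h0, h1]))
  have hsup : m + 2 ≤ finrank K ↥(U0 ⊔ U1) := by
    have h' := Submodule.finrank_sup_add_finrank_inf_eq U0 U1
    rw [h0, h1] at h'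
    omega
  obtain ⟨y, hyU1, hyW, hyU0⟩ :
      ∃ y ∈ U1, y ∉ W ∧ ¬ (U0 ≤ W ⊔ K ∙ y) := by
    by_contra hcon
    push_neg at hcon
    have hU1W : ¬ U1 ≤ W := by
      intro h
      exact hWU1 (Submodule.eq_of_le_of_finrank_eq h (by rw [h1, hWm]) |>.symm)
    obtain ⟨y1, hy1U1, hy1W⟩ := SetLike.not_le_iff_exists.1 hU1W
    by_cases hcase : ∃ y2 ∈ U1, y2 ∉ W ⊔ K ∙ y1
    · obtain ⟨y2, hy2U1, hy2⟩ := hcase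
      have hy2W : y2 ∉ W := fun h => hy2 ((le_sup_left : W ≤ _) h)
      have hA := hcon y1 hy1U1 hy1W
      have hB := hcon y2 hy2U1 hy2W
      have hU0W : U0 ≤ W := by
        intro v hv
        obtain ⟨w1, hw1, c1, hc1, hveq1⟩ := mem_sup.1 (hA hv)
        obtain ⟨w2, hw2, c2, hc2, hveq2⟩ := mem_sup.1 (hB hv)
        obtain ⟨a, rfl⟩ := mem_span_singleton.1 hc1
        obtain ⟨b, rfl⟩ := mem_span_singleton.1 hc2
        have hb0 : b = 0 := by
          by_contra hb
          apply hy2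
          have hmem : b • y2 ∈ W ⊔ K ∙ y1 := by
            have heq : b • y2 = w1 + a • y1 - w2 := by
              rw [hveq1, ← hveq2]; abel
            rw [heq]
            exact Submodule.sub_mem _
              (Submodule.add_mem _ ((le_sup_left : W ≤ _) hw1)
                ((le_sup_right : (K ∙ y1) ≤ _) (Submodule.smul_mem _ a (mem_span_singleton_self y1))))
              ((le_sup_left : W ≤ _) hw2)
          have := Submodule.smul_mem (W ⊔ K ∙ y1) b⁻¹ hmem
          rwa [smul_smul, inv_mul_cancel₀ hb, one_smul] at this
        rw [hb0, zero_smul, add_zero] at hveq2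
        rw [← hveq2]; exact hw2
      exact hWU0 (Submodule.eq_of_le_of_finrank_eq hU0W (by rw [h0, hWm]) |>.symm)
    · push_neg at hcase
      have hU1le : U1 ≤ W ⊔ K ∙ y1 := fun v hv => hcase v hv
      have hU0le : U0 ≤ W ⊔ K ∙ y1 := hcon y1 hy1U1 hy1W
      have hsuple : U0 ⊔ U1 ≤ W ⊔ K ∙ y1 := sup_le hU0le hU1le
      have hy10 : y1 ≠ 0 := fun h => hy1W (h ▸ W.zero_mem)
      have hb1 : finrank K ↥(W ⊔ K ∙ y1) ≤ m + 1 := by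
        have h' := Submodule.finrank_sup_add_finrank_inf_eq W (K ∙ y1)
        rw [hWm, finrank_span_singleton hy10] at h'
        omega
      have := Submodule.finrank_mono hsuple
      omega
  obtain ⟨x, hxU0, hxWy⟩ := SetLike.not_le_iff_exists.1 hyU0
  have hxW : x ∉ W := fun h => hxWy ((le_sup_left : W ≤ _) h)
  have hx0 : x ≠ 0 := fun h => hxW (h ▸ W.zero_mem)
  have hy0 : y ≠ 0 := fun h => hyW (h ▸ W.zero_mem)
  have hPW : ((K ∙ x) ⊔ (K ∙ y)) ⊓ W = ⊥ := by
    rw [eq_bot_iff]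
    rintro v ⟨hvP, hvW⟩
    obtain ⟨c1, hc1, c2, hc2, hveq⟩ := mem_sup.1 hvP
    obtain ⟨a, rfl⟩ := mem_span_singleton.1 hc1
    obtain ⟨b, rfl⟩ := mem_span_singleton.1 hc2
    have ha0 : a = 0 := by
      by_contra ha
      apply hxWy
      have hmem : a • x ∈ W ⊔ K ∙ y := by
        have heq : a • x = v - b • y := by rw [← hveq]; abel
        rw [heq]
        exact Submodule.sub_mem _ ((le_sup_left : W ≤ _) hvW)
          ((le_sup_right : (K ∙ y) ≤ _) (Submodule.smul_mem _ b (mem_span_singleton_self y)))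
      have := Submodule.smul_mem (W ⊔ K ∙ y) a⁻¹ hmem
      rwa [smul_smul, inv_mul_cancel₀ ha, one_smul] at this
    rw [ha0, zero_smul, zero_add] at hveq
    have hb0 : b = 0 := by
      by_contra hb
      apply hyW
      have hmem : b • y ∈ W := hveq ▸ hvW
      have := W.smul_mem b⁻¹ hmem
      rwa [smul_smul, inv_mul_cancel₀ hb, one_smul] at this
    rw [← hveq, hb0, zero_smul]
    exact Submodule.zero_mem _
  obtain ⟨C, hC⟩ := Submodule.exists_isCompl (W ⊔ ((K ∙ x) ⊔ (K ∙ y)))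
  have hdisj : ((K ∙ x) ⊔ (K ∙ y) ⊔ C) ⊓ W = ⊥ := by
    rw [eq_bot_iff]
    rintro v ⟨hvS, hvW⟩
    obtain ⟨p, hp, c, hc, hveq⟩ := mem_sup.1 hvS
    have hcmem : c ∈ (W ⊔ ((K ∙ x) ⊔ (K ∙ y))) ⊓ C := by
      refine mem_inf.2 ⟨?_, hc⟩
      have heq : c = v - p := by rw [← hveq]; abel
      rw [heq]
      exact Submodule.sub_mem _ ((le_sup_left : W ≤ _) hvW)
        ((le_sup_right : ((K ∙ x) ⊔ (K ∙ y)) ≤ _) hp)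
    rw [hC.inf_eq_bot] at hcmem
    rw [(mem_bot K).1 hcmem, add_zero] at hveq
    have : v ∈ ((K ∙ x) ⊔ (K ∙ y)) ⊓ W := mem_inf.2 ⟨hveq ▸ hp, hvW⟩
    rw [hPW] at this
    exact this
  refine ⟨(K ∙ x) ⊔ (K ∙ y) ⊔ C, ?_, hdisj, ?_, ?_⟩
  · have hsupeq : ((K ∙ x) ⊔ (K ∙ y) ⊔ C) ⊔ W = ⊤ := by
      rw [← hC.sup_eq_top]; ac_rfl
    have hic : IsCompl ((K ∙ x) ⊔ (K ∙ y) ⊔ C) W :=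
      ⟨disjoint_iff.2 hdisj, codisjoint_iff.2 hsupeq⟩
    have := Submodule.finrank_add_eq_of_isCompl hic
    rw [hWm, hV] at this
    omega
  · intro h
    have hxS : x ∈ (K ∙ x) ⊔ (K ∙ y) ⊔ C :=
      (le_sup_left : ((K ∙ x) ⊔ (K ∙ y)) ≤ _) ((le_sup_left : (K ∙ x) ≤ _) (mem_span_singleton_self x))
    have : x ∈ (⊥ : Submodule K V) := h ▸ mem_inf.2 ⟨hxS, hxU0⟩
    exact hx0 ((mem_bot K).1 this)
  · intro h
    have hyS : y ∈ (K ∙ x) ⊔ (K ∙ y) ⊔ C :=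
      (le_sup_left : ((K ∙ x) ⊔ (K ∙ y)) ≤ _) ((le_sup_right : (K ∙ y) ≤ _) (mem_span_singleton_self y))
    have : y ∈ (⊥ : Submodule K V) := h ▸ mem_inf.2 ⟨hyS, hyU1⟩
    exact hy0 ((mem_bot K).1 this)

end Aux

/-- `t` lies in the same "column" as `p` (relative to the close pair `p`, `q`). -/
def ScolV (p q t : Submodule K V × Submodule K V) : Prop :=
  t = p ∨ (PairClose K V t p ∧ ¬ PairClose K V t q ∧ t ≠ q)

/-- A first-order formula over the closeness graph characterizing adjacency of
close pairs. -/
def PsiGen {X : Set (Submodule K V × Submodule K V)} (p q : X) : Prop :=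
  ∃ w : X, ¬ ScolV K V p.val q.val w.val ∧ ¬ ScolV K V q.val p.val w.val ∧
    ∀ s : X, (s = w ∨ PairClose K V s.val w.val) →
      (∃ t : X, ScolV K V p.val q.val t.val ∧ (t = s ∨ PairClose K V t.val s.val)) ∨
      (∃ t : X, ScolV K V q.val p.val t.val ∧ (t = s ∨ PairClose K V t.val s.val))

section Comb

variable {K V}

lemma scol_iff_col {p q : Submodule K V × Submodule K V}
    (h1 : p.1 = q.1) (h2 : p.2 ≠ q.2) (t : Submodule K V × Submodule K V) :
    ScolV K V p q t ↔ t.2 = p.2 := by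
  constructor
  · rintro (rfl | ⟨hc, hnc, hne⟩)
    · rfl
    · rcases hc with ⟨he1, hne2⟩ | ⟨hne1, he2⟩
      · exfalso
        by_cases ht2 : t.2 = q.2
        · exact hne (Prod.ext (he1.trans h1) ht2)
        · exact hnc (Or.inl ⟨he1.trans h1, ht2⟩)
      · exact he2
  · intro ht2
    by_cases ht1 : t.1 = p.1
    · exact Or.inl (Prod.ext ht1 ht2)
    · refine Or.inr ⟨Or.inr ⟨ht1, ht2⟩, ?_, ?_⟩
      · rintro (⟨he1, -⟩ | ⟨-, he2⟩)
        · exact ht1 (he1.trans h1.symm)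
        · exact h2 (ht2.symm.trans he2)
      · intro h
        exact h2 (ht2.symm.trans (congrArg Prod.snd h))

lemma scol_iff_row {p q : Submodule K V × Submodule K V}
    (h1 : p.1 ≠ q.1) (h2 : p.2 = q.2) (t : Submodule K V × Submodule K V) :
    ScolV K V p q t ↔ t.1 = p.1 := by
  constructor
  · rintro (rfl | ⟨hc, hnc, hne⟩)
    · rfl
    · rcases hc with ⟨he1, hne2⟩ | ⟨hne1, he2⟩
      · exact he1
      · exfalso
        by_cases ht1 : t.1 = q.1
        · exact hne (Prod.ext ht1 (he2.trans h2))
        · exact hnc (Or.inr ⟨ht1, he2.trans h2⟩)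
  · intro ht1
    by_cases ht2 : t.2 = p.2
    · exact Or.inl (Prod.ext ht1 ht2)
    · refine Or.inr ⟨Or.inl ⟨ht1, ht2⟩, ?_, ?_⟩
      · rintro (⟨he1, -⟩ | ⟨-, he2⟩)
        · exact h1 (ht1.symm.trans he1)
        · exact ht2 (he2.trans h2.symm)
      · intro h
        exact h1 (ht1.symm.trans (congrArg Prod.fst h))

lemma psi_imp {X Y : Set (Submodule K V × Submodule K V)} (g : X → Y)
    (hinj : Function.Injective g) (hsurj : Function.Surjective g)
    (hc : ∀ a b : X, PairClose K V a.val b.val ↔ PairClose K V (g a).val (g b).val)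
    (p q : X) (h : PsiGen K V p q) : PsiGen K V (g p) (g q) := by
  have he : ∀ u v : X, u.val = v.val ↔ (g u).val = (g v).val := by
    intro u v
    rw [← Subtype.ext_iff, ← Subtype.ext_iff, hinj.eq_iff]
  have hscol : ∀ a b t : X,
      ScolV K V a.val b.val t.val ↔ ScolV K V (g a).val (g b).val (g t).val := by
    intro a b t
    unfold ScolV
    simp only [ne_eq, he t a, he t b, hc t a, hc t b]
  obtain ⟨w, hw1, hw2, H⟩ := h
  refine ⟨g w, by rw [← hscol]; exact hw1, by rw [← hscol]; exact hw2, ?_⟩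
  intro s' hs'
  obtain ⟨s, rfl⟩ := hsurj s'
  have hs : s = w ∨ PairClose K V s.val w.val := by
    rcases hs' with h' | h'
    · exact Or.inl (hinj h')
    · exact Or.inr ((hc s w).2 h')
  rcases H s hs with ⟨t, ht1, ht2⟩ | ⟨t, ht1, ht2⟩
  · refine Or.inl ⟨g t, (hscol p q t).1 ht1, ?_⟩
    rcases ht2 with rfl | h'
    · exact Or.inl rfl
    · exact Or.inr ((hc t s).1 h')
  · refine Or.inr ⟨g t, (hscol q p t).1 ht1, ?_⟩
    rcases ht2 with rfl | h'
    · exact Or.inl rfl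
    · exact Or.inr ((hc t s).1 h')

end Comb

section Main

variable {K V} [FiniteDimensional K V]

open Submodule

lemma gset_spec {n k : ℕ} {x : Submodule K V × Submodule K V} (hx : x ∈ GSet K V n k) :
    finrank K x.1 = k ∧ finrank K x.2 = n - k ∧ SubCompl K V x.1 x.2 := hx

lemma subadj_ne {P T : Submodule K V} (h : SubAdj K V P T) : P ≠ T := by
  rintro rfl
  have h2 := h.2
  rw [inf_idem] at h2
  omega

lemma pairAdj_close {p q : Submodule K V × Submodule K V} (h : PairAdj K V p q) :
    PairClose K V p q := by
  rcases h with ⟨h1, h2⟩ | ⟨h1, h2⟩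
  · exact Or.inl ⟨h1, subadj_ne h2⟩
  · exact Or.inr ⟨subadj_ne h1, h2⟩

lemma compl_of_inf {n : ℕ} (hV : finrank K V = n) {A B : Submodule K V}
    (hab : finrank K A + finrank K B = n) (h : A ⊓ B = ⊥) : SubCompl K V A B := by
  refine ⟨h, ?_⟩
  apply Submodule.eq_top_of_finrank_eq
  have h' := Submodule.finrank_sup_add_finrank_inf_eq A B
  rw [h, finrank_bot] at h'
  rw [hV]
  omega

lemma mem_gset_mk {n k : ℕ} (hV : finrank K V = n) (hkn : k ≤ n) {A B : Submodule K V}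
    (hA : finrank K A = k) (hB : finrank K B = n - k) (h : A ⊓ B = ⊥) :
    (A, B) ∈ GSet K V n k :=
  ⟨hA, hB, compl_of_inf hV (by rw [hA, hB]; omega) h⟩

lemma caseA {n k : ℕ} (hn : 2 ≤ n) (hV : finrank K V = n) (hk1 : 1 ≤ k) (hk2 : k ≤ n - 1)
    (p q : GSet K V n k) (h1 : p.val.1 = q.val.1) (h2 : p.val.2 ≠ q.val.2) :
    PairAdj K V p.val q.val ↔ PsiGen K V p q := by
  have hkn : k ≤ n := by omega
  obtain ⟨hp1, hp2, hpc⟩ := gset_spec p.property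
  obtain ⟨hq1, hq2, hqc⟩ := gset_spec q.property
  have hscolp := scol_iff_col (K := K) (V := V) h1 h2
  have hscolq := scol_iff_col (K := K) (V := V) h1.symm (Ne.symm h2)
  have hadj_iff : PairAdj K V p.val q.val ↔
      finrank K ↥(p.val.2 ⊓ q.val.2) + 1 = n - k := by
    constructor
    · intro h
      unfold PairAdj at h
      rcases h with ⟨-, hsub⟩ | ⟨-, he⟩
      · exact hsub.2.symm.trans hp2
      · exact absurd he h2
    · intro h
      exact Or.inl ⟨h1, hp2.trans hq2.symm, hp2.trans h.symm⟩
  rw [hadj_iff]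
  constructor
  · intro hadj
    obtain ⟨W, hWm, hWU0, hWU1, Hprop⟩ := lemA_fwd hp2 hq2 hadj
    obtain ⟨T, hT⟩ := Submodule.exists_isCompl W
    have hTW : T ⊓ W = ⊥ := by rw [inf_comm]; exact hT.inf_eq_bot
    have hTrank : finrank K T = k := by
      have h' := Submodule.finrank_add_eq_of_isCompl hT
      rw [hWm, hV] at h'
      omega
    refine ⟨⟨(T, W), mem_gset_mk hV hkn hTrank hWm hTW⟩, ?_, ?_, ?_⟩
    · rw [hscolp]; exact hWU0
    · rw [hscolq]; exact hWU1
    · intro s hs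
      obtain ⟨hs1, hs2, hsc⟩ := gset_spec s.property
      rcases hs with rfl | hclose
      · -- s is w itself
        rcases Hprop T hTW with hTU0 | hTU1
        · refine Or.inl ⟨⟨(T, p.val.2), mem_gset_mk hV hkn hTrank hp2 hTU0⟩,
            (hscolp _).2 rfl, Or.inr (Or.inl ⟨rfl, fun h => hWU0 h.symm⟩)⟩
        · refine Or.inr ⟨⟨(T, q.val.2), mem_gset_mk hV hkn hTrank hq2 hTU1⟩,
            (hscolq _).2 rfl, Or.inr (Or.inl ⟨rfl, fun h => hWU1 h.symm⟩)⟩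
      · unfold PairClose at hclose
        rcases hclose with ⟨hx, hy⟩ | ⟨hx, hy⟩
        · -- s shares first coordinate T with w
          rcases Hprop T hTW with hTU0 | hTU1
          · refine Or.inl ⟨⟨(T, p.val.2), mem_gset_mk hV hkn hTrank hp2 hTU0⟩,
              (hscolp _).2 rfl, ?_⟩
            by_cases hY : s.val.2 = p.val.2
            · exact Or.inl (Subtype.ext (Prod.ext hx.symm hY.symm))
            · exact Or.inr (Or.inl ⟨hx.symm, fun h => hY h.symm⟩)
          · refine Or.inr ⟨⟨(T, q.val.2), mem_gset_mk hV hkn hTrank hq2 hTU1⟩,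
              (hscolq _).2 rfl, ?_⟩
            by_cases hY : s.val.2 = q.val.2
            · exact Or.inl (Subtype.ext (Prod.ext hx.symm hY.symm))
            · exact Or.inr (Or.inl ⟨hx.symm, fun h => hY h.symm⟩)
        · -- s shares second coordinate W with w
          have hsW : s.val.1 ⊓ W = ⊥ := by
            have hb := hsc.1
            rw [hy] at hb
            exact hb
          rcases Hprop s.val.1 hsW with h0 | h0
          · refine Or.inl ⟨⟨(s.val.1, p.val.2), mem_gset_mk hV hkn hs1 hp2 h0⟩,
              (hscolp _).2 rfl, Or.inr (Or.inl ⟨rfl, fun h => hWU0 (h.trans hy).symm⟩)⟩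
          · refine Or.inr ⟨⟨(s.val.1, q.val.2), mem_gset_mk hV hkn hs1 hq2 h0⟩,
              (hscolq _).2 rfl, Or.inr (Or.inl ⟨rfl, fun h => hWU1 (h.trans hy).symm⟩)⟩
  · rintro ⟨w, hw1, hw2, H⟩
    obtain ⟨hwT, hwW, hwc⟩ := gset_spec w.property
    rw [hscolp] at hw1
    rw [hscolq] at hw2
    by_contra hnadj
    obtain ⟨S'', hSrank, hSW, hSU0, hSU1⟩ :=
      lemA_bwd hV hp2 hq2 h2 hnadj w.val.2 hwW hw1 hw2
    have hSk : finrank K S'' = k := by rw [hSrank]; omega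
    have hs_mem := mem_gset_mk hV hkn hSk hwW hSW
    have hs : (⟨(S'', w.val.2), hs_mem⟩ : GSet K V n k) = w ∨
        PairClose K V (S'', w.val.2) w.val := by
      by_cases hTeq : S'' = w.val.1
      · exact Or.inl (Subtype.ext (Prod.ext hTeq rfl))
      · exact Or.inr (Or.inr ⟨hTeq, rfl⟩)
    rcases H ⟨(S'', w.val.2), hs_mem⟩ hs with ⟨t, ht1, ht2⟩ | ⟨t, ht1, ht2⟩
    · rw [hscolp] at ht1
      rcases ht2 with rfl | hcl
      · exact hw1 ht1
      · unfold PairClose at hcl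
        rcases hcl with ⟨e1, e2⟩ | ⟨e1, e2⟩
        · obtain ⟨ht1', ht2', htc⟩ := gset_spec t.property
          apply hSU0
          have hb : t.val.1 ⊓ t.val.2 = ⊥ := htc.1
          rw [ht1] at hb
          rw [e1] at hb
          exact hb
        · exact hw1 (e2.symm.trans ht1)
    · rw [hscolq] at ht1
      rcases ht2 with rfl | hcl
      · exact hw2 ht1
      · unfold PairClose at hcl
        rcases hcl with ⟨e1, e2⟩ | ⟨e1, e2⟩
        · obtain ⟨ht1', ht2', htc⟩ := gset_spec t.property
          apply hSU1
          have hb : t.val.1 ⊓ t.val.2 = ⊥ := htc.1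
          rw [ht1] at hb
          rw [e1] at hb
          exact hb
        · exact hw2 (e2.symm.trans ht1)

lemma gswap_mem {n k : ℕ} (hkn : k ≤ n) {x : Submodule K V × Submodule K V}
    (hx : x ∈ GSet K V n k) : (x.2, x.1) ∈ GSet K V n (n - k) := by
  obtain ⟨h1, h2, h3⟩ := gset_spec hx
  exact ⟨h2, by rw [h1]; omega, ⟨by rw [inf_comm]; exact h3.1, by rw [sup_comm]; exact h3.2⟩⟩

lemma gswap_mem' {n k : ℕ} (hkn : k ≤ n) {x : Submodule K V × Submodule K V}
    (hx : x ∈ GSet K V n (n - k)) : (x.2, x.1) ∈ GSet K V n k := by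
  obtain ⟨h1, h2, h3⟩ := gset_spec hx
  exact ⟨by rw [h2]; omega, h1,
    ⟨by rw [inf_comm]; exact h3.1, by rw [sup_comm]; exact h3.2⟩⟩

lemma pairclose_swap (a b : Submodule K V × Submodule K V) :
    PairClose K V a b ↔ PairClose K V (a.2, a.1) (b.2, b.1) := by
  unfold PairClose
  dsimp only
  tauto

lemma pairadj_swap (a b : Submodule K V × Submodule K V) :
    PairAdj K V a b ↔ PairAdj K V (a.2, a.1) (b.2, b.1) := by
  unfold PairAdj
  dsimp only
  tauto

lemma caseB {n k : ℕ} (hn : 2 ≤ n) (hV : finrank K V = n) (hk1 : 1 ≤ k) (hk2 : k ≤ n - 1)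
    (p q : GSet K V n k) (h1 : p.val.1 ≠ q.val.1) (h2 : p.val.2 = q.val.2) :
    PairAdj K V p.val q.val ↔ PsiGen K V p q := by
  have hkn : k ≤ n := by omega
  let σ : GSet K V n k → GSet K V n (n - k) :=
    fun r => ⟨(r.val.2, r.val.1), gswap_mem hkn r.property⟩
  let σ' : GSet K V n (n - k) → GSet K V n k :=
    fun r => ⟨(r.val.2, r.val.1), gswap_mem' hkn r.property⟩
  have hli : ∀ r, σ' (σ r) = r := fun r => Subtype.ext rfl
  have hri : ∀ r, σ (σ' r) = r := fun r => Subtype.ext rfl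
  have hinj : Function.Injective σ := fun a b h => by rw [← hli a, h, hli b]
  have hsurj : Function.Surjective σ := fun y => ⟨σ' y, hri y⟩
  have hinj' : Function.Injective σ' := fun a b h => by rw [← hri a, h, hri b]
  have hsurj' : Function.Surjective σ' := fun y => ⟨σ y, hli y⟩
  have hc : ∀ a b : GSet K V n k,
      PairClose K V a.val b.val ↔ PairClose K V (σ a).val (σ b).val :=
    fun a b => pairclose_swap a.val b.val
  have hc' : ∀ a b : GSet K V n (n - k),
      PairClose K V a.val b.val ↔ PairClose K V (σ' a).val (σ' b).val :=
    fun a b => pairclose_swap a.val b.val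
  have hA := caseA (n := n) (k := n - k) hn hV (by omega) (by omega) (σ p) (σ q) h2 h1
  calc PairAdj K V p.val q.val
      ↔ PairAdj K V (σ p).val (σ q).val := pairadj_swap p.val q.val
    _ ↔ PsiGen K V (σ p) (σ q) := hA
    _ ↔ PsiGen K V p q := by
        constructor
        · intro h
          have h' := psi_imp σ' hinj' hsurj' hc' (σ p) (σ q) h
          rwa [hli p, hli q] at h'
        · exact psi_imp σ hinj hsurj hc p q

lemma adj_iff {n k : ℕ} (hn : 2 ≤ n) (hV : finrank K V = n) (hk1 : 1 ≤ k) (hk2 : k ≤ n - 1)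
    (p q : GSet K V n k) :
    PairAdj K V p.val q.val ↔ (PairClose K V p.val q.val ∧ PsiGen K V p q) := by
  constructor
  · intro h
    have hc := pairAdj_close h
    refine ⟨hc, ?_⟩
    unfold PairClose at hc
    rcases hc with ⟨ha, hb⟩ | ⟨ha, hb⟩
    · exact (caseA hn hV hk1 hk2 p q ha hb).1 h
    · exact (caseB hn hV hk1 hk2 p q ha hb).1 h
  · rintro ⟨hc, hpsi⟩
    unfold PairClose at hc
    rcases hc with ⟨ha, hb⟩ | ⟨ha, hb⟩
    · exact (caseA hn hV hk1 hk2 p q ha hb).2 hpsi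
    · exact (caseB hn hV hk1 hk2 p q ha hb).2 hpsi

end Main

/-- Every closeness preserving transformation of 𝒢 is an adjacency preserving
transformation. -/
theorem closeness_preserving_is_adjacency_preserving
    {K V : Type*} [DivisionRing K] [AddCommGroup V] [Module K V]
    [FiniteDimensional K V] {n k : ℕ} (hn : 2 ≤ n) (hV : finrank K V = n)
    (hk1 : 1 ≤ k) (hk2 : k ≤ n - 1)
    (f : GSet K V n k → GSet K V n k) (hf : Function.Bijective f)
    (hclose : ∀ p q : GSet K V n k,
      PairClose K V p.val q.val ↔ PairClose K V (f p).val (f q).val) :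
    ∀ p q : GSet K V n k,
      PairAdj K V p.val q.val ↔ PairAdj K V (f p).val (f q).val := by
  intro p q
  set e := Equiv.ofBijective f hf with he_def
  have hfe : ∀ x, f (e.symm x) = x := fun x => e.apply_symm_apply x
  have hc' : ∀ a b : GSet K V n k,
      PairClose K V a.val b.val ↔ PairClose K V (e.symm a).val (e.symm b).val := by
    intro a b
    have h' := hclose (e.symm a) (e.symm b)
    rw [hfe a, hfe b] at h'
    exact h'.symm
  have hpsi_iff : PsiGen K V p q ↔ PsiGen K V (f p) (f q) := by
    constructor
    · exact psi_imp f hf.injective hf.surjective hclose p q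
    · intro h
      have h' := psi_imp e.symm e.symm.injective e.symm.surjective hc' (f p) (f q) h
      have hp : e.symm (f p) = p := e.symm_apply_apply p
      have hq : e.symm (f q) = q := e.symm_apply_apply q
      rwa [hp, hq] at h'
  rw [adj_iff hn hV hk1 hk2 p q, adj_iff hn hV hk1 hk2 (f p) (f q)]
  exact and_congr (hclose p q) hpsi_iff
end

section
/- Suppose n = 2 and k = 1, so G is the set of pairs (S,U) of distinct 1-dimensional subspaces of V. Every closeness preserving transformation f of G is of one of the forms f(S,U) = (h(S), h(U)) for all (S,U) ∈ G, or f(S,U) = (h(U), h(S)) for all (S,U) ∈ G, where h is a bijection of the set G_1 of 1-dimensional subspaces of V onto itself. -/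
open Module

variable (K V : Type*) [DivisionRing K] [AddCommGroup V] [Module K V]

section Abstract

variable {G' L : Type*}

/-- Abstract closeness wrt two "coordinate" projections. -/
def AClose (π1 π2 : G' → L) (p q : G') : Prop :=
  (π1 p = π1 q ∧ π2 p ≠ π2 q) ∨ (π1 p ≠ π1 q ∧ π2 p = π2 q)

lemma aclose_comm (π1 π2 : G' → L) (p q : G') :
    AClose π2 π1 p q ↔ AClose π1 π2 p q := by
  unfold AClose; tauto

lemma lemX (π1 π2 : G' → L)
    (hext : ∀ p q : G', π1 p = π1 q → π2 p = π2 q → p = q)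
    (f : G' → G') (hinj : Function.Injective f)
    (hclose : ∀ p q, AClose π1 π2 p q ↔ AClose π1 π2 (f p) (f q))
    (p q r : G') (hpq1 : π1 p = π1 q) (hpq : p ≠ q)
    (hqr2 : π2 q = π2 r) (hqr : q ≠ r) :
    (π1 (f p) = π1 (f q)) ↔ (π2 (f q) = π2 (f r)) := by
  have h2pq : π2 p ≠ π2 q := fun h => hpq (hext _ _ hpq1 h)
  have h1qr : π1 q ≠ π1 r := fun h => hqr (hext _ _ h hqr2)
  have h1pr : π1 p ≠ π1 r := fun h => h1qr (hpq1.symm.trans h)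
  have h2pr : π2 p ≠ π2 r := fun h => h2pq (h.trans hqr2.symm)
  have hpr : p ≠ r := fun h => h1pr (congrArg π1 h)
  have cpq : AClose π1 π2 (f p) (f q) := (hclose p q).1 (.inl ⟨hpq1, h2pq⟩)
  have cqr : AClose π1 π2 (f q) (f r) := (hclose q r).1 (.inr ⟨h1qr, hqr2⟩)
  have npr : ¬ AClose π1 π2 (f p) (f r) := by
    intro h
    rcases (hclose p r).2 h with ⟨h1, _⟩ | ⟨_, h2⟩
    · exact h1pr h1
    · exact h2pr h2
  have hfpr : f p ≠ f r := fun h => hpr (hinj h)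
  constructor
  · intro h1
    rcases cqr with ⟨hq1, _⟩ | ⟨_, hq2⟩
    · exact absurd (Or.inl ⟨h1.trans hq1,
        fun h2 => hfpr (hext _ _ (h1.trans hq1) h2)⟩) npr
    · exact hq2
  · intro h2
    rcases cpq with ⟨h1, _⟩ | ⟨_, hp2⟩
    · exact h1
    · exact absurd (Or.inr ⟨fun h1 => hfpr (hext _ _ h1 (hp2.trans h2)),
        hp2.trans h2⟩) npr

lemma lemC1 (π1 π2 : G' → L)
    (hext : ∀ p q : G', π1 p = π1 q → π2 p = π2 q → p = q)
    (f : G' → G')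
    (hclose : ∀ p q, AClose π1 π2 p q ↔ AClose π1 π2 (f p) (f q))
    (p q r : G') (hpq1 : π1 p = π1 q) (hqr1 : π1 q = π1 r)
    (hpq : p ≠ q) (hqr : q ≠ r) (hpr : p ≠ r) :
    (π1 (f p) = π1 (f q)) ↔ (π1 (f q) = π1 (f r)) := by
  have h2pq : π2 p ≠ π2 q := fun h => hpq (hext _ _ hpq1 h)
  have h2qr : π2 q ≠ π2 r := fun h => hqr (hext _ _ hqr1 h)
  have h2pr : π2 p ≠ π2 r := fun h => hpr (hext _ _ (hpq1.trans hqr1) h)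
  have cpq := (hclose p q).1 (.inl ⟨hpq1, h2pq⟩)
  have cqr := (hclose q r).1 (.inl ⟨hqr1, h2qr⟩)
  have cpr := (hclose p r).1 (.inl ⟨hpq1.trans hqr1, h2pr⟩)
  constructor
  · intro h1
    by_contra h1'
    rcases cqr with ⟨hq1, _⟩ | ⟨hq1, hq2⟩
    · exact h1' hq1
    · have hfp2 : π2 (f p) ≠ π2 (f q) := by
        rcases cpq with ⟨_, h⟩ | ⟨h, _⟩
        · exact h
        · exact absurd h1 h
      rcases cpr with ⟨ha, _⟩ | ⟨_, hb⟩
      · exact h1' (h1.symm.trans ha)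
      · exact hfp2 (hb.trans hq2.symm)
  · intro h1
    by_contra h1'
    rcases cpq with ⟨hq1, _⟩ | ⟨hq1, hq2⟩
    · exact h1' hq1
    · have hfq2 : π2 (f q) ≠ π2 (f r) := by
        rcases cqr with ⟨_, h⟩ | ⟨h, _⟩
        · exact h
        · exact absurd h1 h
      rcases cpr with ⟨ha, _⟩ | ⟨_, hb⟩
      · exact h1' (ha.trans h1.symm)
      · exact hfq2 (hq2.symm.trans hb)

lemma lemSameRow (π1 π2 : G' → L)
    (hext : ∀ p q : G', π1 p = π1 q → π2 p = π2 q → p = q)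
    (f : G' → G')
    (hclose : ∀ p q, AClose π1 π2 p q ↔ AClose π1 π2 (f p) (f q))
    (p q r s : G') (hpq1 : π1 p = π1 q) (hqr1 : π1 q = π1 r)
    (hrs1 : π1 r = π1 s) (hpq : p ≠ q) (hrs : r ≠ s) :
    (π1 (f p) = π1 (f q)) ↔ (π1 (f r) = π1 (f s)) := by
  by_cases hqr : q = r
  · subst hqr
    by_cases hps : p = s
    · subst hps
      exact eq_comm
    · exact lemC1 π1 π2 hext f hclose p q s hpq1 hrs1 hpq hrs hps
  · by_cases hpr : p = r
    · subst hpr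
      by_cases hqs : q = s
      · subst hqs; exact Iff.rfl
      · exact eq_comm.trans
          (lemC1 π1 π2 hext f hclose q p s hpq1.symm hrs1 (Ne.symm hpq) hrs hqs)
    · have step1 := lemC1 π1 π2 hext f hclose p q r hpq1 hqr1 hpq hqr hpr
      by_cases hqs : q = s
      · subst hqs
        exact step1.trans eq_comm
      · exact step1.trans (lemC1 π1 π2 hext f hclose q r s hqr1 hrs1 hqr hrs hqs)

lemma lemSame (π1 π2 : G' → L)
    (hext : ∀ p q : G', π1 p = π1 q → π2 p = π2 q → p = q)
    (hsur : ∀ a b : L, a ≠ b → ∃ p : G', π1 p = a ∧ π2 p = b)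
    (hL : ∀ a b : L, ∃ c : L, c ≠ a ∧ c ≠ b)
    (f : G' → G') (hinj : Function.Injective f)
    (hclose : ∀ p q, AClose π1 π2 p q ↔ AClose π1 π2 (f p) (f q))
    (p q r s : G') (hpq1 : π1 p = π1 q) (hpq : p ≠ q)
    (hrs1 : π1 r = π1 s) (hrs : r ≠ s) :
    (π1 (f p) = π1 (f q)) ↔ (π1 (f r) = π1 (f s)) := by
  rcases eq_or_ne (π1 p) (π1 r) with hpr1 | hpr1
  · exact lemSameRow π1 π2 hext f hclose p q r s hpq1 (hpq1.symm.trans hpr1) hrs1 hpq hrs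
  · obtain ⟨u, hu1, hu2⟩ := hL (π1 p) (π1 r)
    obtain ⟨x, hx1, hx2⟩ := hsur (π1 p) u (Ne.symm hu1)
    obtain ⟨y, hy1, hy2⟩ := hsur (π1 r) u (Ne.symm hu2)
    obtain ⟨z, hz1, hz2⟩ := hL (π1 p) u
    obtain ⟨t, ht1, ht2⟩ := hsur (π1 p) z (Ne.symm hz1)
    obtain ⟨z', hz1', hz2'⟩ := hL (π1 r) u
    obtain ⟨t', ht1', ht2'⟩ := hsur (π1 r) z' (Ne.symm hz1')
    have htx : t ≠ x := fun e => hz2 (ht2.symm.trans ((congrArg π2 e).trans hx2))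
    have hxy : x ≠ y := fun e => hpr1 (hx1.symm.trans ((congrArg π1 e).trans hy1))
    have hyt' : y ≠ t' := fun e =>
      hz2' (ht2'.symm.trans (((congrArg π2 e).symm).trans hy2))
    have hext' : ∀ p q : G', π2 p = π2 q → π1 p = π1 q → p = q :=
      fun a b h2 h1 => hext a b h1 h2
    have hclose' : ∀ a b, AClose π2 π1 a b ↔ AClose π2 π1 (f a) (f b) := fun a b =>
      (aclose_comm π1 π2 a b).trans ((hclose a b).trans (aclose_comm π1 π2 (f a) (f b)).symm)
    have i1 := lemSameRow π1 π2 hext f hclose p q t x hpq1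
      (hpq1.symm.trans ht1.symm) (ht1.trans hx1.symm) hpq htx
    have i2 := lemX π1 π2 hext f hinj hclose t x y
      (ht1.trans hx1.symm) htx (hx2.trans hy2.symm) hxy
    have i3 := lemX π2 π1 hext' f hinj hclose' x y t'
      (hx2.trans hy2.symm) hxy (hy1.trans ht1'.symm) hyt'
    have i4 := lemSameRow π1 π2 hext f hclose y t' r s
      (hy1.trans ht1'.symm) ht1' hrs1 hyt' hrs
    exact i1.trans (i2.trans (i3.trans i4))

end Abstract


section Abstract2

variable {G' L : Type*}

lemma abstract_half (π1 π2 : G' → L)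
    (hext : ∀ p q : G', π1 p = π1 q → π2 p = π2 q → p = q)
    (hne : ∀ p : G', π1 p ≠ π2 p)
    (hsur : ∀ a b : L, a ≠ b → ∃ p : G', π1 p = a ∧ π2 p = b)
    (hL : ∀ a b : L, ∃ c : L, c ≠ a ∧ c ≠ b)
    (f : G' → G') (hf : Function.Bijective f)
    (hclose : ∀ p q, AClose π1 π2 p q ↔ AClose π1 π2 (f p) (f q))
    (A1 : ∀ p q, π1 p = π1 q → π1 (f p) = π1 (f q)) :
    ∃ h : L → L, Function.Bijective h ∧
      ∀ p, π1 (f p) = h (π1 p) ∧ π2 (f p) = h (π2 p) := by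
  have A2 : ∀ p q, π2 p = π2 q → π2 (f p) = π2 (f q) := by
    intro p q h2
    rcases eq_or_ne p q with rfl | hpq
    · rfl
    · have h1 : π1 p ≠ π1 q := fun h => hpq (hext p q h h2)
      rcases (hclose p q).1 (.inr ⟨h1, h2⟩) with ⟨hf1, hf2⟩ | ⟨_, hgoal⟩
      · exfalso
        obtain ⟨z, hz1, hz2⟩ := hL (π1 q) (π2 q)
        obtain ⟨r, hr1, hr2⟩ := hsur (π1 q) z (Ne.symm hz1)
        have hfr1 : π1 (f r) = π1 (f p) := (A1 r q hr1).trans hf1.symm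
        have hrp1 : π1 r ≠ π1 p := fun h => h1 (h.symm.trans hr1)
        have hrp2 : π2 r ≠ π2 p := fun h => hz2 (hr2.symm.trans (h.trans h2))
        have hfrp : f r ≠ f p := fun h => hrp1 (congrArg π1 (hf.1 h))
        have hfr2 : π2 (f r) ≠ π2 (f p) := fun h => hfrp (hext _ _ hfr1 h)
        rcases (hclose r p).2 (.inl ⟨hfr1, hfr2⟩) with ⟨h, _⟩ | ⟨_, h⟩
        · exact hrp1 h
        · exact hrp2 h
      · exact hgoal
  have B1 : ∀ p q, π1 (f p) = π1 (f q) → π1 p = π1 q := by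
    intro p q hf1
    by_contra h1
    have hfpq : f p ≠ f q := fun h => h1 (congrArg π1 (hf.1 h))
    have hf2 : π2 (f p) ≠ π2 (f q) := fun h => hfpq (hext _ _ hf1 h)
    rcases (hclose p q).2 (.inl ⟨hf1, hf2⟩) with ⟨h, _⟩ | ⟨_, h2⟩
    · exact h1 h
    · exact hf2 (A2 p q h2)
  obtain ⟨w, hw⟩ : ∃ w : L → L, ∀ a, w a ≠ a :=
    ⟨fun a => (hL a a).choose, fun a => (hL a a).choose_spec.1⟩
  choose P hP1 hP2 using fun a => hsur a (w a) (Ne.symm (hw a))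
  choose Q hQ1 hQ2 using fun a => hsur (w a) a (hw a)
  set h : L → L := fun a => π1 (f (P a)) with hdef
  set h' : L → L := fun a => π2 (f (Q a)) with hdef'
  have key1 : ∀ p, π1 (f p) = h (π1 p) := fun p => A1 p (P (π1 p)) (hP1 (π1 p)).symm
  have key2 : ∀ p, π2 (f p) = h' (π2 p) := fun p => A2 p (Q (π2 p)) (hQ2 (π2 p)).symm
  have hinj : Function.Injective h := by
    intro a a' e
    have := B1 (P a) (P a') e
    rwa [hP1, hP1] at this
  have hsurj : Function.Surjective h := by
    intro y
    obtain ⟨r, hr1, hr2⟩ := hsur y (w y) (Ne.symm (hw y))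
    obtain ⟨p, hp⟩ := hf.2 r
    exact ⟨π1 p, by rw [← key1 p, hp, hr1]⟩
  have hne' : ∀ a b : L, b ≠ a → h b ≠ h' a := by
    intro a b hba e
    obtain ⟨r, hr1, hr2⟩ := hsur b a hba
    apply hne (f r)
    rw [key1 r, key2 r, hr1, hr2, e]
  have heq : ∀ a, h' a = h a := by
    intro a
    obtain ⟨b, hb⟩ := hsurj (h' a)
    rcases eq_or_ne b a with rfl | hba
    · exact hb.symm
    · exact absurd hb (hne' a b hba)
  exact ⟨h, ⟨hinj, hsurj⟩, fun p => ⟨key1 p, (key2 p).trans (heq _)⟩⟩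

theorem abstract_main (π1 π2 : G' → L)
    (hext : ∀ p q : G', π1 p = π1 q → π2 p = π2 q → p = q)
    (hne : ∀ p : G', π1 p ≠ π2 p)
    (hsur : ∀ a b : L, a ≠ b → ∃ p : G', π1 p = a ∧ π2 p = b)
    (hL : ∀ a b : L, ∃ c : L, c ≠ a ∧ c ≠ b)
    (hNE : Nonempty L)
    (f : G' → G') (hf : Function.Bijective f)
    (hclose : ∀ p q, AClose π1 π2 p q ↔ AClose π1 π2 (f p) (f q)) :
    ∃ h : L → L, Function.Bijective h ∧
      ((∀ p, π1 (f p) = h (π1 p) ∧ π2 (f p) = h (π2 p)) ∨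
       (∀ p, π1 (f p) = h (π2 p) ∧ π2 (f p) = h (π1 p))) := by
  obtain ⟨a₀⟩ := hNE
  obtain ⟨b₀, hb₀, -⟩ := hL a₀ a₀
  obtain ⟨c₀, hc₀a, hc₀b⟩ := hL a₀ b₀
  obtain ⟨p₀, hp₀1, hp₀2⟩ := hsur a₀ b₀ (Ne.symm hb₀)
  obtain ⟨q₀, hq₀1, hq₀2⟩ := hsur a₀ c₀ (Ne.symm hc₀a)
  have hpq₀1 : π1 p₀ = π1 q₀ := hp₀1.trans hq₀1.symm
  have hpq₀ : p₀ ≠ q₀ := by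
    intro e
    have : b₀ = c₀ := by rw [← hp₀2, ← hq₀2, e]
    exact hc₀b this.symm
  by_cases hD : π1 (f p₀) = π1 (f q₀)
  · have A1 : ∀ p q, π1 p = π1 q → π1 (f p) = π1 (f q) := by
      intro p q h1
      rcases eq_or_ne p q with rfl | hpq
      · rfl
      · exact (lemSame π1 π2 hext hsur hL f hf.1 hclose p q p₀ q₀ h1 hpq hpq₀1 hpq₀).2 hD
    obtain ⟨h, hbij, hkey⟩ := abstract_half π1 π2 hext hne hsur hL f hf hclose A1
    exact ⟨h, hbij, .inl hkey⟩
  · choose σ hσ1 hσ2 using fun p => hsur (π2 p) (π1 p) (Ne.symm (hne p))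
    have hσinv : ∀ p, σ (σ p) = p := fun p =>
      hext _ _ ((hσ1 _).trans (hσ2 p)) ((hσ2 _).trans (hσ1 p))
    have hσbij : Function.Bijective σ :=
      ⟨fun a b e => by rw [← hσinv a, e, hσinv], fun b => ⟨σ b, hσinv b⟩⟩
    set g : G' → G' := fun p => σ (f p) with hg
    have hgbij : Function.Bijective g := hσbij.comp hf
    have hcloseσ : ∀ p q, AClose π1 π2 (σ p) (σ q) ↔ AClose π1 π2 p q := by
      intro p q
      unfold AClose
      rw [hσ1, hσ1, hσ2, hσ2]
      tauto
    have hcloseg : ∀ p q, AClose π1 π2 p q ↔ AClose π1 π2 (g p) (g q) := fun p q =>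
      (hclose p q).trans (hcloseσ (f p) (f q)).symm
    have A1g : ∀ p q, π1 p = π1 q → π1 (g p) = π1 (g q) := by
      intro p q h1
      rcases eq_or_ne p q with rfl | hpq
      · rfl
      · have hnd : ¬ π1 (f p) = π1 (f q) := fun hcontra =>
          hD ((lemSame π1 π2 hext hsur hL f hf.1 hclose p q p₀ q₀ h1 hpq hpq₀1 hpq₀).1 hcontra)
        have h2 : π2 p ≠ π2 q := fun e => hpq (hext _ _ h1 e)
        rcases (hclose p q).1 (.inl ⟨h1, h2⟩) with ⟨ha, _⟩ | ⟨_, hb⟩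
        · exact absurd ha hnd
        · show π1 (σ (f p)) = π1 (σ (f q))
          rw [hσ1, hσ1]
          exact hb
    obtain ⟨h, hbij, hkey⟩ := abstract_half π1 π2 hext hne hsur hL g hgbij hcloseg A1g
    refine ⟨h, hbij, .inr fun p => ⟨?_, ?_⟩⟩
    · have := (hkey p).2
      rwa [show π2 (g p) = π1 (f p) from hσ2 (f p)] at this
    · have := (hkey p).1
      rwa [show π1 (g p) = π2 (f p) from hσ1 (f p)] at this

end Abstract2

section Concrete
variable {K V : Type*} [DivisionRing K] [AddCommGroup V] [Module K V]

lemma compl_of_ne [FiniteDimensional K V] (hV : finrank K V = 2)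
    {S U : Submodule K V} (hS : finrank K S = 1) (hU : finrank K U = 1)
    (hSU : S ≠ U) : SubCompl K V S U := by
  have hinf : S ⊓ U = ⊥ := by
    by_contra hne
    have h1 : finrank K ↥(S ⊓ U) ≤ 1 := hS ▸ Submodule.finrank_mono inf_le_left
    have h0 : finrank K ↥(S ⊓ U) ≠ 0 := fun e => hne (Submodule.finrank_eq_zero.1 e)
    have he : finrank K ↥(S ⊓ U) = 1 := le_antisymm h1 (Nat.one_le_iff_ne_zero.2 h0)
    have hSle : S ⊓ U = S :=
      Submodule.eq_of_le_of_finrank_le inf_le_left (by rw [hS, he])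
    have hle : S ≤ U := hSle.symm.trans_le inf_le_right
    exact hSU (Submodule.eq_of_le_of_finrank_le hle (by rw [hS, hU]))
  refine ⟨hinf, ?_⟩
  have hsum := Submodule.finrank_sup_add_finrank_inf_eq S U
  rw [hinf, hS, hU, finrank_bot] at hsum
  exact Submodule.eq_top_of_finrank_eq (by rw [hV]; omega)

lemma line_ne_of_compl {S U : Submodule K V} (hS : finrank K S = 1)
    (hc : SubCompl K V S U) : S ≠ U := by
  intro e
  subst e
  have h1 : S ⊓ S = ⊥ := hc.1
  rw [inf_idem] at h1
  rw [h1, finrank_bot] at hS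
  exact absurd hS (by norm_num)

lemma exists_third_line [FiniteDimensional K V] (hV : finrank K V = 2)
    (A B : Submodule K V) :
    ∃ C : Submodule K V, finrank K C = 1 ∧ C ≠ A ∧ C ≠ B := by
  let b : Basis (Fin 2) K V := (Module.finBasis K V).reindex (finCongr hV)
  have hvw : ∀ c : K, b 1 ≠ c • b 0 := by
    intro c e
    have h1 : (b.repr (b 1)) 1 = 1 := by
      rw [Basis.repr_self, Finsupp.single_eq_same]
    have h2 : (b.repr (c • b 0)) 1 = 0 := by
      rw [map_smul, Basis.repr_self]
      simp [Finsupp.single_apply]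
    rw [e, h2] at h1
    exact zero_ne_one h1
  have hwv : ∀ c : K, b 0 ≠ c • b 1 := by
    intro c e
    have h1 : (b.repr (b 0)) 0 = 1 := by
      rw [Basis.repr_self, Finsupp.single_eq_same]
    have h2 : (b.repr (c • b 1)) 0 = 0 := by
      rw [map_smul, Basis.repr_self]
      simp [Finsupp.single_apply]
    rw [e, h2] at h1
    exact zero_ne_one h1
  have hv0 : b 0 ≠ 0 := b.ne_zero 0
  have hw0 : b 1 ≠ 0 := b.ne_zero 1
  have hx0 : b 0 + b 1 ≠ 0 := by
    intro e
    apply hvw (-1)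
    have : b 1 = -(b 0) := eq_neg_of_add_eq_zero_right e
    rw [this, neg_one_smul]
  have r1 : finrank K ↥(Submodule.span K {b 0}) = 1 := finrank_span_singleton hv0
  have r2 : finrank K ↥(Submodule.span K {b 1}) = 1 := finrank_span_singleton hw0
  have r3 : finrank K ↥(Submodule.span K {b 0 + b 1}) = 1 := finrank_span_singleton hx0
  have d12 : Submodule.span K {b 0} ≠ Submodule.span K {b 1} := by
    intro e
    have : b 1 ∈ Submodule.span K {b 0} := e ▸ Submodule.mem_span_singleton_self _
    obtain ⟨c, hc⟩ := Submodule.mem_span_singleton.1 this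
    exact hvw c hc.symm
  have d13 : Submodule.span K {b 0} ≠ Submodule.span K {b 0 + b 1} := by
    intro e
    have : b 0 + b 1 ∈ Submodule.span K {b 0} := e ▸ Submodule.mem_span_singleton_self _
    obtain ⟨c, hc⟩ := Submodule.mem_span_singleton.1 this
    apply hvw (c - 1)
    have : b 1 = c • b 0 - b 0 := by rw [hc]; abel
    rw [this, sub_smul, one_smul]
  have d23 : Submodule.span K {b 1} ≠ Submodule.span K {b 0 + b 1} := by
    intro e
    have : b 0 + b 1 ∈ Submodule.span K {b 1} := e ▸ Submodule.mem_span_singleton_self _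
    obtain ⟨c, hc⟩ := Submodule.mem_span_singleton.1 this
    apply hwv (c - 1)
    have : b 0 = c • b 1 - b 1 := by rw [hc]; abel
    rw [this, sub_smul, one_smul]
  by_cases h1 : Submodule.span K {b 0} ≠ A ∧ Submodule.span K {b 0} ≠ B
  · exact ⟨_, r1, h1.1, h1.2⟩
  by_cases h2 : Submodule.span K {b 1} ≠ A ∧ Submodule.span K {b 1} ≠ B
  · exact ⟨_, r2, h2.1, h2.2⟩
  push_neg at h1 h2
  refine ⟨_, r3, ?_, ?_⟩
  · intro e
    have hA : Submodule.span K {b 0} ≠ A := fun h => d13 (h.trans e.symm)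
    have hA2 : Submodule.span K {b 1} ≠ A := fun h => d23 (h.trans e.symm)
    exact d12 ((h1 hA).trans (h2 hA2).symm)
  · intro e
    have h1' : Submodule.span K {b 0} = A := by
      by_contra h
      exact d13 ((h1 h).trans e.symm)
    have h2' : Submodule.span K {b 1} = A := by
      by_contra h
      exact d23 ((h2 h).trans e.symm)
    exact d12 (h1'.trans h2'.symm)

end Concrete

/-- For `n = 2`, `k = 1`: every closeness preserving transformation of 𝒢 is of the
form `(S,U) ↦ (h S, h U)` or `(S,U) ↦ (h U, h S)` for a bijection `h` of `𝒢₁`. -/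
theorem closeness_preserving_dim_two
    {K V : Type*} [DivisionRing K] [AddCommGroup V] [Module K V]
    [FiniteDimensional K V] (hV : finrank K V = 2)
    (f : GSet K V 2 1 → GSet K V 2 1) (hf : Function.Bijective f)
    (hclose : ∀ p q : GSet K V 2 1,
      PairClose K V p.val q.val ↔ PairClose K V (f p).val (f q).val) :
    ∃ h : {S : Submodule K V // finrank K S = 1} → {S : Submodule K V // finrank K S = 1},
      Function.Bijective h ∧
      ((∀ p : GSet K V 2 1,
          (f p).val.1 = (h ⟨p.val.1, p.property.1⟩).val ∧
          (f p).val.2 = (h ⟨p.val.2, p.property.2.1⟩).val) ∨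
       (∀ p : GSet K V 2 1,
          (f p).val.1 = (h ⟨p.val.2, p.property.2.1⟩).val ∧
          (f p).val.2 = (h ⟨p.val.1, p.property.1⟩).val)) := by
  classical
  let L := {S : Submodule K V // finrank K S = 1}
  let π1 : ↥(GSet K V 2 1) → L := fun p => ⟨p.val.1, p.prop.1⟩
  let π2 : ↥(GSet K V 2 1) → L := fun p => ⟨p.val.2, p.prop.2.1⟩
  have hext : ∀ p q, π1 p = π1 q → π2 p = π2 q → p = q := by
    intro p q h1 h2
    apply Subtype.ext
    exact Prod.ext (congrArg Subtype.val h1) (congrArg Subtype.val h2)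
  have hne : ∀ p, π1 p ≠ π2 p := by
    intro p e
    exact line_ne_of_compl p.prop.1 p.prop.2.2 (congrArg Subtype.val e)
  have hsur : ∀ a b : L, a ≠ b → ∃ p, π1 p = a ∧ π2 p = b := by
    intro a b hab
    have hv : a.val ≠ b.val := fun e => hab (Subtype.ext e)
    have hmem : (a.val, b.val) ∈ GSet K V 2 1 :=
      ⟨a.prop, b.prop, compl_of_ne hV a.prop b.prop hv⟩
    exact ⟨⟨(a.val, b.val), hmem⟩, Subtype.ext rfl, Subtype.ext rfl⟩
  have hL : ∀ a b : L, ∃ c : L, c ≠ a ∧ c ≠ b := by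
    intro a b
    obtain ⟨C, hC1, hCa, hCb⟩ := exists_third_line hV a.val b.val
    exact ⟨⟨C, hC1⟩, fun e => hCa (congrArg Subtype.val e),
      fun e => hCb (congrArg Subtype.val e)⟩
  have hNE : Nonempty L := by
    obtain ⟨C, hC1, -, -⟩ := exists_third_line hV (⊥ : Submodule K V) ⊥
    exact ⟨⟨C, hC1⟩⟩
  have hAC : ∀ p q : ↥(GSet K V 2 1),
      AClose π1 π2 p q ↔ PairClose K V p.val q.val := by
    intro p q
    have e1 : (π1 p = π1 q) ↔ (p.val.1 = q.val.1) := Subtype.ext_iff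
    have e2 : (π2 p = π2 q) ↔ (p.val.2 = q.val.2) := Subtype.ext_iff
    unfold AClose PairClose
    simp only [ne_eq]
    rw [e1, e2]
  have hclose' : ∀ p q, AClose π1 π2 p q ↔ AClose π1 π2 (f p) (f q) := fun p q =>
    (hAC p q).trans ((hclose p q).trans (hAC (f p) (f q)).symm)
  obtain ⟨h, hbij, hkey⟩ := abstract_main π1 π2 hext hne hsur hL hNE f hf hclose'
  refine ⟨h, hbij, ?_⟩
  rcases hkey with hkey | hkey
  · left
    intro p
    exact ⟨congrArg Subtype.val (hkey p).1, congrArg Subtype.val (hkey p).2⟩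
  · right
    intro p
    exact ⟨congrArg Subtype.val (hkey p).1, congrArg Subtype.val (hkey p).2⟩
end

section
/- Let 1 ≤ k ≤ n−1 and let S₁, S₂ be two distinct k-dimensional subspaces of V. Then S₁ and S₂ are adjacent if and only if there exists a k-dimensional subspace S with S ≠ S₁ and S ≠ S₂ such that for every (n−k)-dimensional subspace U of V: if U is complementary to S, then U is complementary to S₁ or U is complementary to S₂. -/
open Module

variable (K V : Type*) [DivisionRing K] [AddCommGroup V] [Module K V]

section Aux

variable {K V : Type*} [DivisionRing K] [AddCommGroup V] [Module K V]

lemma span_pair_inf_eq_bot (S : Submodule K V) {w₁ w₂ : V} (h1 : w₁ ∉ S)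
    (h2 : w₂ ∉ S ⊔ Submodule.span K {w₁}) :
    Submodule.span K {w₁, w₂} ⊓ S = ⊥ := by
  rw [eq_bot_iff]
  rintro x ⟨hxT, hxS⟩
  obtain ⟨c, e, rfl⟩ := Submodule.mem_span_pair.mp hxT
  by_cases he : e = 0
  · subst he
    simp only [zero_smul, add_zero] at hxS ⊢
    by_cases hcz : c = 0
    · simp [hcz]
    · exfalso
      apply h1
      have := S.smul_mem c⁻¹ hxS
      rwa [smul_smul, inv_mul_cancel₀ hcz, one_smul] at this
  · exfalso
    apply h2
    have : w₂ = e⁻¹ • (c • w₁ + e • w₂) - (e⁻¹ * c) • w₁ := by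
      rw [smul_add, smul_smul, smul_smul, inv_mul_cancel₀ he, one_smul]
      abel
    rw [this]
    exact sub_mem (Submodule.mem_sup_left (S.smul_mem _ hxS))
      (Submodule.mem_sup_right (Submodule.smul_mem _ _ (Submodule.mem_span_singleton_self w₁)))

lemma exists_compl_containing [FiniteDimensional K V] (S : Submodule K V) {w₁ w₂ : V}
    (h1 : w₁ ∉ S) (h2 : w₂ ∉ S ⊔ Submodule.span K {w₁}) :
    ∃ U : Submodule K V, finrank K U + finrank K S = finrank K V ∧
      SubCompl K V S U ∧ w₁ ∈ U ∧ w₂ ∈ U := by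
  set T := Submodule.span K {w₁, w₂} with hT
  have hTS : T ⊓ S = ⊥ := span_pair_inf_eq_bot S h1 h2
  obtain ⟨U₀, hU₀⟩ := Submodule.exists_isCompl (S ⊔ T)
  refine ⟨T ⊔ U₀, ?_, ⟨?_, ?_⟩, ?_, ?_⟩
  · have e1 := Submodule.finrank_sup_add_finrank_inf_eq S T
    have e2 := Submodule.finrank_sup_add_finrank_inf_eq T U₀
    have e3 := Submodule.finrank_sup_add_finrank_inf_eq (S ⊔ T) U₀
    rw [hU₀.sup_eq_top, hU₀.inf_eq_bot] at e3
    have hST : S ⊓ T = ⊥ := by rw [inf_comm]; exact hTS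
    have hTU : T ⊓ U₀ = ⊥ := by
      rw [eq_bot_iff, ← hU₀.inf_eq_bot]
      exact inf_le_inf_right _ le_sup_right
    rw [hST] at e1
    rw [hTU] at e2
    simp only [finrank_bot, finrank_top, add_zero] at e1 e2 e3
    omega
  · rw [eq_bot_iff]
    rintro x ⟨hxS, hxU⟩
    obtain ⟨t, ht, u, hu, rfl⟩ := Submodule.mem_sup.mp hxU
    have hu0 : u ∈ (S ⊔ T) ⊓ U₀ := ⟨by
      have huv : u = (t + u) - t := by abel
      rw [huv]
      exact sub_mem (Submodule.mem_sup_left hxS) (Submodule.mem_sup_right ht), hu⟩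
    rw [hU₀.inf_eq_bot] at hu0
    rw [hu0, add_zero] at hxS ⊢
    have : t ∈ T ⊓ S := ⟨ht, hxS⟩
    rw [hTS] at this
    exact this
  · rw [← sup_assoc, hU₀.sup_eq_top]
  · exact Submodule.mem_sup_left (Submodule.subset_span (by simp))
  · exact Submodule.mem_sup_left (Submodule.subset_span (by simp))

end Aux

/-- Two distinct `k`-dimensional subspaces `S₁`, `S₂` are adjacent iff there is a
`k`-dimensional subspace `S ∉ {S₁, S₂}` such that every `(n-k)`-dimensional
complement of `S` is a complement of `S₁` or of `S₂`. -/
theorem adjacent_iff_common_complements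
    {K V : Type*} [DivisionRing K] [AddCommGroup V] [Module K V]
    [FiniteDimensional K V] {n k : ℕ} (hn : 2 ≤ n) (hV : finrank K V = n)
    (hk1 : 1 ≤ k) (hk2 : k ≤ n - 1)
    (S₁ S₂ : Submodule K V) (h1 : finrank K S₁ = k) (h2 : finrank K S₂ = k)
    (hne : S₁ ≠ S₂) :
    SubAdj K V S₁ S₂ ↔
      ∃ S : Submodule K V, finrank K S = k ∧ S ≠ S₁ ∧ S ≠ S₂ ∧
        ∀ U : Submodule K V, finrank K U = n - k → SubCompl K V S U →
          (SubCompl K V S₁ U ∨ SubCompl K V S₂ U) := by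
  have hkn : k ≤ n := le_trans hk2 (Nat.sub_le n 1)
  constructor
  · rintro ⟨-, hadj⟩
    have hd : finrank K ↥(S₁ ⊓ S₂) + 1 = k := by rw [← hadj, h1]
    have hn1 : ¬ (S₁ ≤ S₂) := fun h =>
      hne (Submodule.eq_of_le_of_finrank_le h (by rw [h1, h2]))
    have hn2 : ¬ (S₂ ≤ S₁) := fun h =>
      hne (Submodule.eq_of_le_of_finrank_le h (by rw [h1, h2])).symm
    obtain ⟨x₁, hx₁S₁, hx₁S₂⟩ := SetLike.not_le_iff_exists.mp hn1
    obtain ⟨x₂, hx₂S₂, hx₂S₁⟩ := SetLike.not_le_iff_exists.mp hn2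
    have hvS₁ : x₁ + x₂ ∉ S₁ := fun h => hx₂S₁ (by simpa using sub_mem h hx₁S₁)
    have hvS₂ : x₁ + x₂ ∉ S₂ := fun h => hx₁S₂ (by simpa using sub_mem h hx₂S₂)
    have hv0 : x₁ + x₂ ≠ 0 := fun h => hvS₁ (h ▸ S₁.zero_mem)
    refine ⟨(S₁ ⊓ S₂) ⊔ Submodule.span K {x₁ + x₂}, ?_, ?_, ?_, ?_⟩
    · have hDv : (S₁ ⊓ S₂) ⊓ Submodule.span K {x₁ + x₂} = ⊥ := by
        rw [eq_bot_iff]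
        rintro x ⟨hxD, hxv⟩
        obtain ⟨c, rfl⟩ := Submodule.mem_span_singleton.mp hxv
        by_cases hcz : c = 0
        · simp [hcz]
        · exfalso
          apply hvS₁
          have := S₁.smul_mem c⁻¹ (Submodule.mem_inf.mp hxD).1
          rwa [smul_smul, inv_mul_cancel₀ hcz, one_smul] at this
      have e1 := Submodule.finrank_sup_add_finrank_inf_eq (S₁ ⊓ S₂)
        (Submodule.span K {x₁ + x₂})
      rw [hDv, finrank_span_singleton hv0] at e1
      simp only [finrank_bot, add_zero] at e1
      omega
    · intro h
      exact hvS₁ (h ▸ Submodule.mem_sup_right (Submodule.mem_span_singleton_self _))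
    · intro h
      exact hvS₂ (h ▸ Submodule.mem_sup_right (Submodule.mem_span_singleton_self _))
    · intro U hUn hcompl
      by_contra hcon
      push_neg at hcon
      obtain ⟨hc1, hc2⟩ := hcon
      have key : ∀ P : Submodule K V, finrank K P = k → P ⊓ U = ⊥ → SubCompl K V P U := by
        intro P hP hPU
        refine ⟨hPU, ?_⟩
        apply Submodule.eq_top_of_finrank_eq
        have e := Submodule.finrank_sup_add_finrank_inf_eq P U
        rw [hPU] at e
        simp only [finrank_bot, add_zero] at e
        rw [hV]
        omega
      have h1U : S₁ ⊓ U ≠ ⊥ := fun h => hc1 (key S₁ h1 h)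
      have h2U : S₂ ⊓ U ≠ ⊥ := fun h => hc2 (key S₂ h2 h)
      have hSW : (S₁ ⊓ S₂) ⊔ Submodule.span K {x₁ + x₂} ≤ S₁ ⊔ S₂ := by
        apply sup_le (le_trans inf_le_left le_sup_left)
        rw [Submodule.span_singleton_le_iff_mem]
        exact add_mem (Submodule.mem_sup_left hx₁S₁) (Submodule.mem_sup_right hx₂S₂)
      have hWU : (S₁ ⊔ S₂) ⊔ U = ⊤ :=
        top_le_iff.mp (by rw [← hcompl.2]; exact sup_le_sup_right hSW U)
      have hWk : finrank K ↥(S₁ ⊔ S₂) = k + 1 := by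
        have e := Submodule.finrank_sup_add_finrank_inf_eq S₁ S₂
        rw [h1, h2] at e
        omega
      have hL : finrank K ↥((S₁ ⊔ S₂) ⊓ U) = 1 := by
        have e := Submodule.finrank_sup_add_finrank_inf_eq (S₁ ⊔ S₂) U
        rw [hWU, hWk, hUn, finrank_top, hV] at e
        omega
      have hfin1 : S₁ ⊓ U = (S₁ ⊔ S₂) ⊓ U := by
        apply Submodule.eq_of_le_of_finrank_le (inf_le_inf_right U le_sup_left)
        rw [hL]
        have hz : finrank K ↥(S₁ ⊓ U) ≠ 0 := by
          simpa [Submodule.finrank_eq_zero] using h1U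
        omega
      have hfin2 : S₂ ⊓ U = (S₁ ⊔ S₂) ⊓ U := by
        apply Submodule.eq_of_le_of_finrank_le (inf_le_inf_right U le_sup_right)
        rw [hL]
        have hz : finrank K ↥(S₂ ⊓ U) ≠ 0 := by
          simpa [Submodule.finrank_eq_zero] using h2U
        omega
      have hWUS : (S₁ ⊔ S₂) ⊓ U ≤
          ((S₁ ⊓ S₂) ⊔ Submodule.span K {x₁ + x₂}) ⊓ U := by
        refine le_inf ?_ inf_le_right
        have hle1 : (S₁ ⊔ S₂) ⊓ U ≤ S₁ := hfin1 ▸ inf_le_left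
        have hle2 : (S₁ ⊔ S₂) ⊓ U ≤ S₂ := hfin2 ▸ inf_le_left
        exact le_trans (le_inf hle1 hle2) le_sup_left
      rw [hcompl.1, le_bot_iff] at hWUS
      rw [hWUS] at hL
      simp [finrank_bot] at hL
  · rintro ⟨S, hSk, hS1, hS2, hmain⟩
    refine ⟨h1.trans h2.symm, ?_⟩
    by_contra hadj
    have hd_lt : finrank K ↥(S₁ ⊓ S₂) < k := by
      rw [← h1]
      apply Submodule.finrank_lt_finrank_of_lt
      rcases lt_or_eq_of_le (inf_le_left : S₁ ⊓ S₂ ≤ S₁) with h | h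
      · exact h
      · exact absurd (Submodule.eq_of_le_of_finrank_le
          (h ▸ inf_le_right : S₁ ≤ S₂) (by rw [h1, h2])) hne
    have hd2 : finrank K ↥(S₁ ⊓ S₂) + 2 ≤ k := by
      rw [h1] at hadj
      omega
    have hnS1 : ¬ (S₁ ≤ S) := fun h =>
      hS1 (Submodule.eq_of_le_of_finrank_le h (by rw [h1, hSk])).symm
    obtain ⟨w₁, hw₁S₁, hw₁S⟩ := SetLike.not_le_iff_exists.mp hnS1
    have hw₁0 : w₁ ≠ 0 := fun h => hw₁S (h ▸ S.zero_mem)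
    by_cases hc : ∃ w₂ ∈ S₂, w₂ ∉ S ⊔ Submodule.span K {w₁}
    · obtain ⟨w₂, hw₂S₂, hw₂⟩ := hc
      obtain ⟨U, hUdim, hUc, hw₁U, hw₂U⟩ := exists_compl_containing S hw₁S hw₂
      have hUn : finrank K U = n - k := by rw [hSk, hV] at hUdim; omega
      rcases hmain U hUn hUc with h | h
      · have hm : w₁ ∈ S₁ ⊓ U := ⟨hw₁S₁, hw₁U⟩
        rw [h.1] at hm
        exact hw₁0 ((Submodule.mem_bot K).mp hm)
      · have hw₂S : w₂ ∉ S := fun hh => hw₂ (Submodule.mem_sup_left hh)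
        have hw₂0 : w₂ ≠ 0 := fun hh => hw₂S (hh ▸ S.zero_mem)
        have hm : w₂ ∈ S₂ ⊓ U := ⟨hw₂S₂, hw₂U⟩
        rw [h.1] at hm
        exact hw₂0 ((Submodule.mem_bot K).mp hm)
    · push_neg at hc
      have hS₂le : S₂ ≤ S ⊔ Submodule.span K {w₁} := hc
      have hnS2 : ¬ (S₂ ≤ S) := fun h =>
        hS2 (Submodule.eq_of_le_of_finrank_le h (by rw [h2, hSk])).symm
      obtain ⟨w₂, hw₂S₂, hw₂S⟩ := SetLike.not_le_iff_exists.mp hnS2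
      by_cases hc' : ∃ w₁' ∈ S₁, w₁' ∉ S ⊔ Submodule.span K {w₂}
      · obtain ⟨w₁', hw₁'S₁, hw₁'⟩ := hc'
        obtain ⟨U, hUdim, hUc, hw₂U, hw₁'U⟩ := exists_compl_containing S hw₂S hw₁'
        have hUn : finrank K U = n - k := by rw [hSk, hV] at hUdim; omega
        have hw₂0 : w₂ ≠ 0 := fun h => hw₂S (h ▸ S.zero_mem)
        rcases hmain U hUn hUc with h | h
        · have hw₁'S : w₁' ∉ S := fun hh => hw₁' (Submodule.mem_sup_left hh)
          have hw₁'0 : w₁' ≠ 0 := fun hh => hw₁'S (hh ▸ S.zero_mem)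
          have hm : w₁' ∈ S₁ ⊓ U := ⟨hw₁'S₁, hw₁'U⟩
          rw [h.1] at hm
          exact hw₁'0 ((Submodule.mem_bot K).mp hm)
        · have hm : w₂ ∈ S₂ ⊓ U := ⟨hw₂S₂, hw₂U⟩
          rw [h.1] at hm
          exact hw₂0 ((Submodule.mem_bot K).mp hm)
      · push_neg at hc'
        have hS₁le : S₁ ≤ S ⊔ Submodule.span K {w₂} := hc'
        have hle : S₁ ⊔ S₂ ≤ S ⊔ Submodule.span K {w₁} := by
          apply sup_le _ hS₂le
          refine le_trans hS₁le (sup_le le_sup_left ?_)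
          rw [Submodule.span_singleton_le_iff_mem]
          exact hS₂le hw₂S₂
        have hM : finrank K ↥(S ⊔ Submodule.span K {w₁}) ≤ k + 1 := by
          have e := Submodule.finrank_sup_add_finrank_inf_eq S (Submodule.span K {w₁})
          rw [hSk, finrank_span_singleton hw₁0] at e
          omega
        have hmono := Submodule.finrank_mono hle
        have e2 := Submodule.finrank_sup_add_finrank_inf_eq S₁ S₂
        rw [h1, h2] at e2
        omega
end

section
/- Let l : V → V be a semilinear bijection (over some automorphism of K). If there exists j with 1 ≤ j ≤ n−1 such that l(S) = S for every j-dimensional subspace S of V, then l(W) = W for every subspace W of V. -/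
open Module

variable (K V : Type*) [DivisionRing K] [AddCommGroup V] [Module K V]

section Aux
variable {K V : Type*} [DivisionRing K] [AddCommGroup V] [Module K V] [FiniteDimensional K V]

lemma aux_finrank_sup_span {W : Submodule K V} {w : V} (hw : w ∉ W) :
    finrank K ↥(W ⊔ K ∙ w) = finrank K W + 1 := by
  have hw0 : w ≠ 0 := fun h => hw (h ▸ W.zero_mem)
  have hdisj : W ⊓ (K ∙ w) = ⊥ := by
    rw [eq_bot_iff]
    rintro x ⟨hx1, hx2⟩
    obtain ⟨c, rfl⟩ := Submodule.mem_span_singleton.mp hx2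
    rcases eq_or_ne c 0 with rfl | hc
    · simp
    · exact absurd (by simpa [smul_smul, inv_mul_cancel₀ hc] using W.smul_mem c⁻¹ hx1) hw
  have := Submodule.finrank_sup_add_finrank_inf_eq W (K ∙ w)
  rw [hdisj, finrank_bot, finrank_span_singleton hw0] at this
  omega

lemma aux_extend_in : ∀ (m : ℕ) (T W : Submodule K V), T ≤ W →
    finrank K T + m ≤ finrank K W →
    ∃ S : Submodule K V, T ≤ S ∧ S ≤ W ∧ finrank K S = finrank K T + m := by
  intro m
  induction m with
  | zero => exact fun T W hTW _ => ⟨T, le_rfl, hTW, by omega⟩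
  | succ m ih =>
    intro T W hTW hle
    have hlt : T < W := Submodule.lt_of_le_of_finrank_lt_finrank hTW (by omega)
    obtain ⟨w, hwW, hwT⟩ := SetLike.exists_of_lt hlt
    obtain ⟨S, hS1, hS2, hS3⟩ := ih (T ⊔ K ∙ w) W
      (sup_le hTW ((Submodule.span_singleton_le_iff_mem w W).mpr hwW))
      (by rw [aux_finrank_sup_span hwT]; omega)
    exact ⟨S, le_trans le_sup_left hS1, hS2, by rw [hS3, aux_finrank_sup_span hwT]; omega⟩

lemma aux_extend_avoid : ∀ (m : ℕ) (W : Submodule K V) (u : V), u ∉ W →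
    finrank K W + m < finrank K V →
    ∃ S : Submodule K V, W ≤ S ∧ u ∉ S ∧ finrank K S = finrank K W + m := by
  intro m
  induction m with
  | zero => exact fun W u hu _ => ⟨W, le_rfl, hu, by omega⟩
  | succ m ih =>
    intro W u hu hlt
    have h1 : finrank K ↥(W ⊔ K ∙ u) < finrank K V := by
      have := aux_finrank_sup_span hu
      omega
    obtain ⟨w, hw⟩ := (W ⊔ K ∙ u).exists_of_finrank_lt h1
    have hw' : w ∉ W ⊔ K ∙ u := by simpa using hw 1 one_ne_zero
    have hwW : w ∉ W := fun h => hw' (Submodule.mem_sup_left h)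
    have hu' : u ∉ W ⊔ K ∙ w := by
      intro h
      obtain ⟨x, hx, y, hy, hxy⟩ := Submodule.mem_sup.mp h
      obtain ⟨c, rfl⟩ := Submodule.mem_span_singleton.mp hy
      rcases eq_or_ne c 0 with rfl | hc
      · exact hu (by rw [← hxy]; simpa using hx)
      · apply hw'
        have : w = c⁻¹ • (u - x) := by
          rw [← hxy]; simp [smul_smul, inv_mul_cancel₀ hc]
        rw [this]
        exact Submodule.smul_mem _ _ (Submodule.sub_mem _
          (Submodule.mem_sup_right (Submodule.mem_span_singleton_self u))
          (Submodule.mem_sup_left hx))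
    obtain ⟨S, hS1, hS2, hS3⟩ := ih (W ⊔ K ∙ w) u hu'
      (by rw [aux_finrank_sup_span hwW]; omega)
    exact ⟨S, le_trans le_sup_left hS1, hS2, by rw [hS3, aux_finrank_sup_span hwW]; omega⟩

lemma aux_key {j : ℕ} (hj1 : 1 ≤ j) (hjn : j < finrank K V) (f : V → V)
    (hfix : ∀ S : Submodule K V, finrank K S = j → f '' (S : Set V) = (S : Set V))
    (W : Submodule K V) {v : V} (hv : v ∈ W) : f v ∈ W := by
  rcases le_or_gt j (finrank K W) with hle | hlt
  · have hT : (K ∙ v) ≤ W := (Submodule.span_singleton_le_iff_mem v W).mpr hv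
    have hTr : finrank K ↥(K ∙ v) ≤ 1 := (finrank_span_le_card ({v} : Set V)).trans (by simp)
    obtain ⟨S, hS1, hS2, hS3⟩ := aux_extend_in (j - finrank K ↥(K ∙ v)) (K ∙ v) W hT (by omega)
    have hSj : finrank K S = j := by omega
    have : f v ∈ (S : Set V) := by
      rw [← hfix S hSj]
      exact ⟨v, hS1 (Submodule.mem_span_singleton_self v), rfl⟩
    exact hS2 this
  · by_contra hfv
    obtain ⟨S, hS1, hS2, hS3⟩ := aux_extend_avoid (j - finrank K W) W (f v) hfv (by omega)
    have hSj : finrank K S = j := by omega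
    apply hS2
    have : f v ∈ (S : Set V) := by
      rw [← hfix S hSj]
      exact ⟨v, hS1 hv, rfl⟩
    exact this

end Aux

/-- If a semilinear bijection `l : V → V` fixes every `j`-dimensional subspace for
some `1 ≤ j ≤ n - 1`, then it fixes every subspace of `V`. -/
theorem semilinear_fixing_one_grassmannian_fixes_all
    {K V : Type*} [DivisionRing K] [AddCommGroup V] [Module K V]
    [FiniteDimensional K V] {n : ℕ} (hn : 2 ≤ n) (hV : finrank K V = n)
    (σ : K ≃+* K) (l : V → V) (hb : Function.Bijective l)
    (hadd : ∀ x y : V, l (x + y) = l x + l y)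
    (hsmul : ∀ (c : K) (v : V), l (c • v) = σ c • l v)
    (j : ℕ) (hj1 : 1 ≤ j) (hj2 : j ≤ n - 1)
    (hfix : ∀ S : Submodule K V, finrank K S = j → l '' (S : Set V) = (S : Set V)) :
    ∀ W : Submodule K V, l '' (W : Set V) = (W : Set V) := by
  have hjn : j < finrank K V := by omega
  obtain ⟨g, hgl, hlg⟩ := Function.bijective_iff_has_inverse.mp hb
  have hfixg : ∀ S : Submodule K V, finrank K S = j → g '' (S : Set V) = (S : Set V) := by
    intro S hS
    conv_lhs => rw [← hfix S hS]
    rw [← Set.image_comp]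
    rw [hgl.comp_eq_id, Set.image_id]
  intro W
  ext x
  constructor
  · rintro ⟨v, hv, rfl⟩
    exact aux_key hj1 hjn l hfix W hv
  · intro hx
    exact ⟨g x, aux_key hj1 hjn g hfixg W hx, hlg x⟩
end

section
/- Let l₁, l₂ : V → V be semilinear bijections (each over some automorphism of K) such that for every k-dimensional subspace S and every (n−k)-dimensional subspace U of V, S and U are complementary if and only if l₁(S) and l₂(U) are complementary. Then l₁(W) = l₂(W) for every subspace W of V. -/
open Module

variable (K V : Type*) [DivisionRing K] [AddCommGroup V] [Module K V]

namespace SemiPairAux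

variable {K V : Type*} [DivisionRing K] [AddCommGroup V] [Module K V]

/-- A bundled semilinear bijection of `V`. -/
structure SLB (K V : Type*) [DivisionRing K] [AddCommGroup V] [Module K V] where
  σ : K ≃+* K
  l : V → V
  hb : Function.Bijective l
  hadd : ∀ x y : V, l (x + y) = l x + l y
  hsmul : ∀ (c : K) (v : V), l (c • v) = σ c • l v

namespace SLB

variable (T : SLB K V)

lemma map_zero : T.l 0 = 0 := by
  have h := T.hadd 0 0
  rw [add_zero] at h
  have h2 : T.l 0 + 0 = T.l 0 + T.l 0 := by rw [add_zero]; exact h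
  exact (add_left_cancel h2).symm

/-- The semilinear bijection as an `Equiv`. -/
noncomputable def e : V ≃ V := Equiv.ofBijective T.l T.hb

lemma l_symm_apply (z : V) : T.l (T.e.symm z) = z := T.e.apply_symm_apply z

/-- The inverse semilinear bijection. -/
noncomputable def inv : SLB K V where
  σ := T.σ.symm
  l := T.e.symm
  hb := T.e.symm.bijective
  hadd := by
    intro x y
    apply T.hb.injective
    rw [T.hadd, T.l_symm_apply, T.l_symm_apply, T.l_symm_apply]
  hsmul := by
    intro c v
    apply T.hb.injective
    rw [T.hsmul, T.l_symm_apply, T.l_symm_apply, RingEquiv.apply_symm_apply]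

/-- Image of a submodule under a semilinear bijection. -/
def mapS (W : Submodule K V) : Submodule K V where
  carrier := T.l '' W
  add_mem' := by
    rintro a b ⟨x, hx, rfl⟩ ⟨y, hy, rfl⟩
    exact ⟨x + y, W.add_mem hx hy, T.hadd x y⟩
  zero_mem' := ⟨0, W.zero_mem, T.map_zero⟩
  smul_mem' := by
    rintro c a ⟨x, hx, rfl⟩
    refine ⟨T.σ.symm c • x, W.smul_mem _ hx, ?_⟩
    rw [T.hsmul, RingEquiv.apply_symm_apply]

lemma coe_mapS (W : Submodule K V) : (T.mapS W : Set V) = T.l '' W := rfl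

lemma inv_mapS_mapS (W : Submodule K V) : T.inv.mapS (T.mapS W) = W := by
  apply SetLike.ext'
  show T.e.symm '' (T.e '' (W : Set V)) = W
  exact T.e.symm_image_image (W : Set V)

lemma mapS_inv_mapS (W : Submodule K V) : T.mapS (T.inv.mapS W) = W := by
  apply SetLike.ext'
  show T.e '' (T.e.symm '' (W : Set V)) = W
  exact T.e.image_symm_image (W : Set V)

lemma mapS_mono {A B : Submodule K V} (h : A ≤ B) : T.mapS A ≤ T.mapS B := by
  rintro a ⟨x, hx, rfl⟩
  exact ⟨x, h hx, rfl⟩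

/-- The lattice automorphism induced by a semilinear bijection. -/
noncomputable def oi : Submodule K V ≃o Submodule K V where
  toFun := T.mapS
  invFun := T.inv.mapS
  left_inv := T.inv_mapS_mapS
  right_inv := T.mapS_inv_mapS
  map_rel_iff' := by
    intro A B
    show T.mapS A ≤ T.mapS B ↔ A ≤ B
    constructor
    · intro h
      have h2 := T.inv.mapS_mono h
      rwa [T.inv_mapS_mapS, T.inv_mapS_mapS] at h2
    · exact fun h => T.mapS_mono h

lemma oi_apply (W : Submodule K V) : T.oi W = T.mapS W := rfl

lemma mapS_inj : Function.Injective T.mapS := fun A B h => by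
  have h2 := congrArg T.inv.mapS h
  rwa [T.inv_mapS_mapS, T.inv_mapS_mapS] at h2

lemma mapS_inf (A B : Submodule K V) : T.mapS (A ⊓ B) = T.mapS A ⊓ T.mapS B :=
  map_inf T.oi A B

lemma mapS_sup (A B : Submodule K V) : T.mapS (A ⊔ B) = T.mapS A ⊔ T.mapS B :=
  map_sup T.oi A B

lemma mapS_bot : T.mapS ⊥ = (⊥ : Submodule K V) := T.oi.map_bot

lemma mapS_top : T.mapS ⊤ = (⊤ : Submodule K V) := T.oi.map_top

lemma mapS_span (s : Set V) :
    T.mapS (Submodule.span K s) = Submodule.span K (T.l '' s) := by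
  apply le_antisymm
  · rintro a ⟨y, hy, rfl⟩
    induction hy using Submodule.span_induction with
    | mem z hz => exact Submodule.subset_span ⟨z, hz, rfl⟩
    | zero => rw [T.map_zero]; exact Submodule.zero_mem _
    | add a b _ _ ha hb => rw [T.hadd]; exact Submodule.add_mem _ ha hb
    | smul c a _ ha => rw [T.hsmul]; exact Submodule.smul_mem _ _ ha
  · rw [Submodule.span_le]
    rintro a ⟨y, hy, rfl⟩
    exact ⟨y, Submodule.subset_span hy, rfl⟩

lemma finrank_mapS_le [FiniteDimensional K V] (W : Submodule K V) :
    finrank K (T.mapS W) ≤ finrank K W := by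
  classical
  let b := Module.finBasis K W
  let v : Fin (finrank K W) → V := fun i => ((b i : W) : V)
  have h1 : Submodule.map W.subtype (Submodule.span K (Set.range ⇑b)) = W := by
    rw [b.span_eq, Submodule.map_subtype_top]
  rw [Submodule.map_span] at h1
  have hre : ⇑W.subtype '' Set.range ⇑b = Set.range v := by
    rw [← Set.range_comp]; rfl
  rw [hre] at h1
  have h2 := congrArg T.mapS h1
  rw [T.mapS_span] at h2
  have h3 := finrank_range_le_card (R := K) (T.l ∘ v)
  rw [Set.range_comp] at h3
  rw [← h2]
  simpa [Set.finrank] using h3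

lemma finrank_mapS [FiniteDimensional K V] (W : Submodule K V) :
    finrank K (T.mapS W) = finrank K W := by
  refine le_antisymm (T.finrank_mapS_le W) ?_
  conv_lhs => rw [← T.inv_mapS_mapS W]
  exact T.inv.finrank_mapS_le _

lemma compl_iff (S U : Submodule K V) :
    SubCompl K V (T.mapS S) (T.mapS U) ↔ SubCompl K V S U := by
  constructor
  · rintro ⟨h1, h2⟩
    constructor
    · apply T.mapS_inj
      rw [T.mapS_inf, h1, T.mapS_bot]
    · apply T.mapS_inj
      rw [T.mapS_sup, h2, T.mapS_top]
  · rintro ⟨h1, h2⟩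
    constructor
    · rw [← T.mapS_inf, h1, T.mapS_bot]
    · rw [← T.mapS_sup, h2, T.mapS_top]

end SLB

section Geometry

variable [FiniteDimensional K V]

lemma span_singleton_inf_eq_bot {v : V} {B : Submodule K V} (hv : v ∉ B) :
    Submodule.span K {v} ⊓ B = ⊥ := by
  rw [eq_bot_iff]
  intro x hx
  rw [Submodule.mem_inf] at hx
  obtain ⟨h1, h2⟩ := hx
  obtain ⟨c, rfl⟩ := Submodule.mem_span_singleton.mp h1
  rcases eq_or_ne c 0 with rfl | hc
  · simp
  · exfalso
    apply hv
    have h3 := B.smul_mem c⁻¹ h2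
    rwa [smul_smul, inv_mul_cancel₀ hc, one_smul] at h3

lemma exists_compl_of_disjoint {A B : Submodule K V} (h : A ⊓ B = ⊥) :
    ∃ D : Submodule K V, A ≤ D ∧ SubCompl K V B D := by
  obtain ⟨C, hC⟩ := Submodule.exists_isCompl (A ⊔ B)
  refine ⟨A ⊔ C, le_sup_left, ?_, ?_⟩
  · rw [eq_bot_iff]
    intro x hx
    rw [Submodule.mem_inf] at hx
    obtain ⟨hxB, hxAC⟩ := hx
    obtain ⟨a, ha, c, hc, hac⟩ := Submodule.mem_sup.mp hxAC
    have hceq : c = x - a := by rw [← hac]; abel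
    have hcmem : c ∈ (A ⊔ B) ⊓ C := by
      rw [Submodule.mem_inf]
      refine ⟨?_, hc⟩
      rw [hceq]
      exact Submodule.sub_mem _ ((le_sup_right : B ≤ A ⊔ B) hxB)
        ((le_sup_left : A ≤ A ⊔ B) ha)
    have hc0 : c = 0 := by
      rw [disjoint_iff.mp hC.disjoint] at hcmem
      simpa using hcmem
    have hxA : x ∈ A := by rw [← hac, hc0, add_zero]; exact ha
    have hfin : x ∈ A ⊓ B := Submodule.mem_inf.mpr ⟨hxA, hxB⟩
    rw [h] at hfin
    exact hfin
  · have htop : (A ⊔ B) ⊔ C = ⊤ := codisjoint_iff.mp hC.codisjoint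
    rw [← htop]
    rw [sup_comm A B, sup_assoc]

lemma compl_iff_isCompl {S U : Submodule K V} : SubCompl K V S U ↔ IsCompl S U := by
  constructor
  · rintro ⟨h1, h2⟩
    exact ⟨disjoint_iff.mpr h1, codisjoint_iff.mpr h2⟩
  · intro h
    exact ⟨disjoint_iff.mp h.disjoint, codisjoint_iff.mp h.codisjoint⟩

lemma finrank_of_compl {S U : Submodule K V} {n : ℕ} (hV : finrank K V = n)
    (h : SubCompl K V S U) : finrank K S + finrank K U = n := by
  rw [← hV]
  exact Submodule.finrank_add_eq_of_isCompl (compl_iff_isCompl.mp h)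

lemma exists_between (j : ℕ) : ∀ (W D : Submodule K V), W ≤ D →
    finrank K W + j ≤ finrank K D →
    ∃ S : Submodule K V, W ≤ S ∧ S ≤ D ∧ finrank K S = finrank K W + j := by
  induction j with
  | zero => exact fun W D h _ => ⟨W, le_refl _, h, by simp⟩
  | succ j ih =>
    intro W D hWD hrank
    have hlt : finrank K W < finrank K D := by omega
    have hne : W ≠ D := fun h => by rw [h] at hlt; omega
    have hex : ∃ v ∈ D, v ∉ W := by
      by_contra hcon
      push_neg at hcon
      exact hne (le_antisymm hWD hcon)
    obtain ⟨v, hvD, hvW⟩ := hex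
    have hv0 : v ≠ 0 := fun h => hvW (h ▸ W.zero_mem)
    have hdisj : Submodule.span K {v} ⊓ W = ⊥ := span_singleton_inf_eq_bot hvW
    have hrk : finrank K ↥(W ⊔ Submodule.span K {v}) = finrank K W + 1 := by
      have h1 := Submodule.finrank_sup_add_finrank_inf_eq W (Submodule.span K {v})
      rw [show W ⊓ Submodule.span K {v} = ⊥ by rw [inf_comm]; exact hdisj,
        finrank_bot, finrank_span_singleton hv0] at h1
      omega
    have hle : W ⊔ Submodule.span K {v} ≤ D := by
      refine sup_le hWD ?_
      rw [Submodule.span_le, Set.singleton_subset_iff]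
      exact hvD
    obtain ⟨S, h1, h2, h3⟩ := ih (W ⊔ Submodule.span K {v}) D hle (by rw [hrk]; omega)
    exact ⟨S, le_trans le_sup_left h1, h2, by rw [h3, hrk]; omega⟩

lemma eq_of_same_compl {n kk : ℕ} (hV : finrank K V = n) {S S' : Submodule K V}
    (hS : finrank K S = kk) (hS' : finrank K S' = kk)
    (h : ∀ U : Submodule K V, finrank K U = n - kk →
      (SubCompl K V S U ↔ SubCompl K V S' U)) : S = S' := by
  have hle : S ≤ S' := by
    intro v hv
    by_contra hvS'
    have hdisj := span_singleton_inf_eq_bot (K := K) hvS'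
    obtain ⟨D, hD1, hD2⟩ := exists_compl_of_disjoint hdisj
    have hsum := finrank_of_compl hV hD2
    have hdim : finrank K D = n - kk := by omega
    have hc : SubCompl K V S D := (h D hdim).mpr hD2
    have hv0 : v ≠ 0 := fun h0 => hvS' (h0 ▸ S'.zero_mem)
    have hvD : v ∈ D := hD1 (Submodule.mem_span_singleton_self v)
    have hmem : v ∈ S ⊓ D := Submodule.mem_inf.mpr ⟨hv, hvD⟩
    rw [hc.1] at hmem
    exact hv0 (by simpa using hmem)
  exact Submodule.eq_of_le_of_finrank_eq hle (by rw [hS, hS'])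

end Geometry

end SemiPairAux

/-- If semilinear bijections `l₁, l₂ : V → V` are such that `S` and `U` are
complementary iff `l₁(S)` and `l₂(U)` are complementary (for `dim S = k`,
`dim U = n - k`), then `l₁` and `l₂` agree on all subspaces. -/
theorem semilinear_pair_compatible_with_compl_agree
    {K V : Type*} [DivisionRing K] [AddCommGroup V] [Module K V]
    [FiniteDimensional K V] {n k : ℕ} (hn : 2 ≤ n) (hV : finrank K V = n)
    (hk1 : 1 ≤ k) (hk2 : k ≤ n - 1)
    (σ₁ σ₂ : K ≃+* K) (l₁ l₂ : V → V)
    (hb₁ : Function.Bijective l₁) (hb₂ : Function.Bijective l₂)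
    (hadd₁ : ∀ x y : V, l₁ (x + y) = l₁ x + l₁ y)
    (hadd₂ : ∀ x y : V, l₂ (x + y) = l₂ x + l₂ y)
    (hsmul₁ : ∀ (c : K) (v : V), l₁ (c • v) = σ₁ c • l₁ v)
    (hsmul₂ : ∀ (c : K) (v : V), l₂ (c • v) = σ₂ c • l₂ v)
    (hcompl : ∀ S U S' U' : Submodule K V,
      finrank K S = k → finrank K U = n - k →
      (S' : Set V) = l₁ '' (S : Set V) → (U' : Set V) = l₂ '' (U : Set V) →
      (SubCompl K V S U ↔ SubCompl K V S' U')) :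
    ∀ W : Submodule K V, l₁ '' (W : Set V) = l₂ '' (W : Set V) := by
  intro W
  open SemiPairAux in
  let T₁ : SLB K V := ⟨σ₁, l₁, hb₁, hadd₁, hsmul₁⟩
  let T₂ : SLB K V := ⟨σ₂, l₂, hb₂, hadd₂, hsmul₂⟩
  suffices h : T₁.mapS W = T₂.mapS W by
    exact congrArg (fun P : Submodule K V => (P : Set V)) h
  have hc : ∀ S U : Submodule K V, finrank K S = k → finrank K U = n - k →
      (SubCompl K V S U ↔ SubCompl K V (T₁.mapS S) (T₂.mapS U)) := fun S U hS hU =>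
    hcompl S U (T₁.mapS S) (T₂.mapS U) hS hU rfl rfl
  -- Step 1: l₁ and l₂ agree on k-dimensional subspaces.
  have step1 : ∀ S : Submodule K V, finrank K S = k → T₁.mapS S = T₂.mapS S := by
    intro S hS
    refine SemiPairAux.eq_of_same_compl hV ((T₁.finrank_mapS S).trans hS)
      ((T₂.finrank_mapS S).trans hS) ?_
    intro U' hU'
    have hU'eq : U' = T₂.mapS (T₂.inv.mapS U') := (T₂.mapS_inv_mapS U').symm
    set U := T₂.inv.mapS U' with hUdef
    have hUdim : finrank K U = n - k := (T₂.inv.finrank_mapS U').trans hU'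
    rw [hU'eq]
    rw [T₂.compl_iff S U]
    exact (hc S U hS hUdim).symm
  -- Step 2: l₁ and l₂ agree on all lines.
  have step2 : ∀ v : V, T₁.mapS (Submodule.span K {v}) = T₂.mapS (Submodule.span K {v}) := by
    intro v
    rcases eq_or_ne v 0 with rfl | hv
    · rw [Submodule.span_zero_singleton, T₁.mapS_bot, T₂.mapS_bot]
    · set 𝒯 : Set (Submodule K V) := {S | finrank K S = k ∧ v ∈ S} with h𝒯
      have hinf : Submodule.span K {v} = sInf 𝒯 := by
        apply le_antisymm
        · apply le_sInf
          intro S hS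
          rw [Submodule.span_le, Set.singleton_subset_iff]
          exact hS.2
        · intro x hx
          by_contra hxv
          have hx0 : x ≠ 0 := fun h => hxv (h ▸ (Submodule.span K {v}).zero_mem)
          have hvx : v ∉ Submodule.span K {x} := by
            intro hmem
            obtain ⟨c, hc⟩ := Submodule.mem_span_singleton.mp hmem
            have hcne : c ≠ 0 := by
              rintro rfl
              rw [zero_smul] at hc
              exact hv hc.symm
            apply hxv
            rw [Submodule.mem_span_singleton]
            refine ⟨c⁻¹, ?_⟩
            rw [← hc, smul_smul, inv_mul_cancel₀ hcne, one_smul]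
          have hdisj : Submodule.span K {v} ⊓ Submodule.span K {x} = ⊥ :=
            SemiPairAux.span_singleton_inf_eq_bot hvx
          obtain ⟨D, hD1, hD2⟩ := SemiPairAux.exists_compl_of_disjoint hdisj
          have hsum := SemiPairAux.finrank_of_compl hV hD2
          rw [finrank_span_singleton hx0] at hsum
          have hvd : finrank K (Submodule.span K {v} : Submodule K V) = 1 :=
            finrank_span_singleton hv
          obtain ⟨S, hS1, hS2, hS3⟩ := SemiPairAux.exists_between (k - 1)
            (Submodule.span K {v}) D hD1 (by rw [hvd]; omega)
          have hSk : finrank K S = k := by rw [hS3, hvd]; omega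
          have hvS : v ∈ S := hS1 (Submodule.mem_span_singleton_self v)
          have hxS : x ∉ S := by
            intro hxS
            have hmem2 : x ∈ Submodule.span K {x} ⊓ D :=
              Submodule.mem_inf.mpr ⟨Submodule.mem_span_singleton_self x, hS2 hxS⟩
            rw [hD2.1] at hmem2
            exact hx0 (by simpa using hmem2)
          exact hxS (Submodule.mem_sInf.mp hx S ⟨hSk, hvS⟩)
      have himg : T₁.oi '' 𝒯 = T₂.oi '' 𝒯 := by
        apply Set.image_congr
        intro S hS
        exact step1 S hS.1
      show T₁.oi (Submodule.span K {v}) = T₂.oi (Submodule.span K {v})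
      rw [hinf, map_sInf T₁.oi, map_sInf T₂.oi, himg]
  -- Step 3: conclude for arbitrary W, writing it as a sup of lines.
  have hW : W = sSup ((fun v => Submodule.span K {v}) '' (W : Set V)) := by
    apply le_antisymm
    · intro x hx
      have hle : Submodule.span K {x} ≤ sSup ((fun v => Submodule.span K {v}) '' (W : Set V)) :=
        le_sSup ⟨x, hx, rfl⟩
      exact hle (Submodule.mem_span_singleton_self x)
    · apply sSup_le
      rintro P ⟨v, hv, rfl⟩
      rw [Submodule.span_le, Set.singleton_subset_iff]
      exact hv
  show T₁.oi W = T₂.oi W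
  rw [hW, map_sSup T₁.oi, map_sSup T₂.oi]
  congr 1
  apply Set.image_congr
  rintro P ⟨v, hv, rfl⟩
  exact step2 v
end

section
/- Let K be a field and let s₁, s₂ : V → Dual V be semilinear bijections (each over some automorphism of K) such that for every k-dimensional subspace S and every (n−k)-dimensional subspace U of V, S and U are complementary if and only if (s₂(U))° and (s₁(S))° are complementary. Then (s₁(W))° = (s₂(W))° for every subspace W of V. -/
open Module

variable (K V : Type*) [DivisionRing K] [AddCommGroup V] [Module K V]

namespace DSP

open Submodule

section Basic

variable {K V : Type*} [Field K] [AddCommGroup V] [Module K V] [FiniteDimensional K V]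

lemma compl_comm' (S U : Submodule K V) :
    (S ⊓ U = ⊥ ∧ S ⊔ U = ⊤) ↔ (U ⊓ S = ⊥ ∧ U ⊔ S = ⊤) := by
  rw [inf_comm, sup_comm]

lemma exists_between (Q : Submodule K V) :
    ∀ (d : ℕ) (P : Submodule K V), P ≤ Q → finrank K P + d ≤ finrank K Q →
    ∃ S : Submodule K V, P ≤ S ∧ S ≤ Q ∧ finrank K S = finrank K P + d := by
  intro d
  induction d with
  | zero => exact fun P hPQ _ => ⟨P, le_rfl, hPQ, by simp⟩
  | succ d ih =>
    intro P hPQ h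
    have hlt : P < Q := by
      rcases eq_or_lt_of_le hPQ with rfl | h'
      · omega
      · exact h'
    obtain ⟨x, hxQ, hxP⟩ := SetLike.exists_of_lt hlt
    have hx0 : x ≠ 0 := fun h => hxP (h ▸ P.zero_mem)
    have hspan : P ⊔ (K ∙ x) ≤ Q := sup_le hPQ ((span_singleton_le_iff_mem x Q).mpr hxQ)
    have hinf : P ⊓ (K ∙ x) = ⊥ := by
      rw [eq_bot_iff]
      rintro y ⟨hyP, hyx⟩
      obtain ⟨c, rfl⟩ := mem_span_singleton.mp hyx
      rcases eq_or_ne c 0 with rfl | hc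
      · simp
      · have hm := P.smul_mem c⁻¹ hyP
        rw [smul_smul, inv_mul_cancel₀ hc, one_smul] at hm
        exact absurd hm hxP
    have hfr : finrank K ↥(P ⊔ (K ∙ x)) = finrank K P + 1 := by
      have h2 := Submodule.finrank_sup_add_finrank_inf_eq P (K ∙ x)
      rw [hinf, finrank_bot, finrank_span_singleton hx0] at h2
      omega
    obtain ⟨S, h1, h2, h3⟩ := ih (P ⊔ (K ∙ x)) hspan (by omega)
    exact ⟨S, le_trans le_sup_left h1, h2, by omega⟩

lemma exists_compl_ge (Y P : Submodule K V) (h : P ⊓ Y = ⊥) :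
    ∃ A : Submodule K V, P ≤ A ∧ A ⊓ Y = ⊥ ∧ A ⊔ Y = ⊤ := by
  obtain ⟨Q, hQ⟩ := Submodule.exists_isCompl (P ⊔ Y)
  have hQinf : (P ⊔ Y) ⊓ Q = ⊥ := disjoint_iff.mp hQ.disjoint
  have hQsup : (P ⊔ Y) ⊔ Q = ⊤ := codisjoint_iff.mp hQ.codisjoint
  refine ⟨P ⊔ Q, le_sup_left, ?_, ?_⟩
  · rw [eq_bot_iff]
    rintro v ⟨hv1, hv2⟩
    obtain ⟨p, hp, q, hq, rfl⟩ := Submodule.mem_sup.mp hv1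
    have hq' : q ∈ (P ⊔ Y) ⊓ Q := by
      refine ⟨?_, hq⟩
      have : q = (p + q) - p := by abel
      rw [this]
      exact sub_mem (le_sup_right (α := Submodule K V) hv2) (le_sup_left (α := Submodule K V) hp)
    rw [hQinf] at hq'
    rw [(mem_bot K).mp hq', add_zero] at hv2 ⊢
    have : p ∈ P ⊓ Y := ⟨hp, hv2⟩
    rw [h] at this
    exact this
  · rw [sup_right_comm, hQsup]

end Basic

section Corr

variable {K V : Type*} [Field K] [AddCommGroup V] [Module K V] [FiniteDimensional K V]
  (τ : K ≃+* K) [RingHomInvPair (τ : K →+* K) (τ.symm : K →+* K)]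
  [RingHomInvPair (τ.symm : K →+* K) (τ : K →+* K)]
  (e : V ≃ₛₗ[(τ : K →+* K)] Module.Dual K V)

/-- The correlation `W ↦ (e(W))°`. -/
noncomputable def corr (W : Submodule K V) : Submodule K V :=
  (Submodule.map (e : V →ₛₗ[(τ : K →+* K)] Module.Dual K V) W).dualCoannihilator

lemma mem_corr (W : Submodule K V) (v : V) :
    v ∈ corr τ e W ↔ ∀ w ∈ W, e w v = 0 := by
  rw [corr, Submodule.mem_dualCoannihilator]
  constructor
  · intro h w hw
    exact h (e w) (Submodule.mem_map_of_mem hw)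
  · rintro h φ hφ
    obtain ⟨w, hw, rfl⟩ := Submodule.mem_map.mp hφ
    exact h w hw

lemma corr_coe (W : Submodule K V) :
    ((corr τ e W : Submodule K V) : Set V) = {v : V | ∀ w ∈ W, e w v = 0} := by
  ext v; exact mem_corr τ e W v

universe uM uN

lemma finrank_map_eq' {M : Type uM} {N : Type uN} [AddCommGroup M] [Module K M] [AddCommGroup N] [Module K N]
    {σ σ' : K →+* K} [RingHomInvPair σ σ'] [RingHomInvPair σ' σ] (hσ : Function.Bijective σ)
    (f : M ≃ₛₗ[σ] N) (P : Submodule K M) :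
    finrank K (Submodule.map (f : M →ₛₗ[σ] N) P) = finrank K P := by
  have hr : Cardinal.lift.{uN} (Module.rank K ↥P) =
      Cardinal.lift.{uM} (Module.rank K ↥(Submodule.map (f : M →ₛₗ[σ] N) P)) := by
    refine lift_rank_eq_of_equiv_equiv (⟨(σ : K → K), map_zero σ⟩ : ZeroHom K K)
      (f.submoduleMap P).toAddEquiv hσ ?_
    intro r m
    ext
    show f ((r • m : P) : M) = σ r • f (m : M)
    rw [Submodule.coe_smul, map_smulₛₗ]
  have := congrArg Cardinal.toNat hr
  rw [Cardinal.toNat_lift, Cardinal.toNat_lift] at this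
  rw [Module.finrank, Module.finrank, this]

lemma finrank_corr (W : Submodule K V) :
    finrank K (corr τ e W) + finrank K W = finrank K V := by
  have h1 := Subspace.finrank_add_finrank_dualCoannihilator_eq
    (Submodule.map (e : V →ₛₗ[(τ : K →+* K)] Module.Dual K V) W)
  have h2 := finrank_map_eq' (σ := (τ : K →+* K)) (σ' := (τ.symm : K →+* K)) (show Function.Bijective ⇑((τ : K →+* K)) from τ.bijective) e W
  rw [corr]
  omega

lemma corr_inj : Function.Injective (corr τ e) := by
  intro W₁ W₂ h
  have h2 : Submodule.map (e : V →ₛₗ[(τ : K →+* K)] Module.Dual K V) W₁ =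
      Submodule.map (e : V →ₛₗ[(τ : K →+* K)] Module.Dual K V) W₂ := by
    have := congrArg Submodule.dualAnnihilator h
    rwa [corr, corr, Subspace.dualCoannihilator_dualAnnihilator_eq,
      Subspace.dualCoannihilator_dualAnnihilator_eq] at this
  have hinj : Function.Injective (e : V →ₛₗ[(τ : K →+* K)] Module.Dual K V) := by
    simpa using e.injective
  exact Submodule.map_injective_of_injective hinj h2

lemma corr_surj (A : Submodule K V) :
    ∃ W : Submodule K V, corr τ e W = A := by
  refine ⟨Submodule.comap (e : V →ₛₗ[(τ : K →+* K)] Module.Dual K V) A.dualAnnihilator, ?_⟩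
  rw [corr, Submodule.map_comap_eq_of_surjective (by simpa using e.surjective),
    Subspace.dualAnnihilator_dualCoannihilator_eq]

lemma corr_bot : corr τ e (⊥ : Submodule K V) = ⊤ := by
  rw [corr, Submodule.map_bot, Submodule.dualCoannihilator_bot]

lemma corr_top : corr τ e (⊤ : Submodule K V) = ⊥ := by
  rw [eq_bot_iff]
  intro v hv
  rw [mem_corr] at hv
  rw [mem_bot]
  rw [← Module.forall_dual_apply_eq_zero_iff K v]
  intro φ
  obtain ⟨w, hw⟩ := e.surjective φ
  rw [← hw]
  exact hv w trivial

lemma dualCoann_inf (Φ Ψ : Submodule K (Module.Dual K V)) :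
    (Φ ⊓ Ψ).dualCoannihilator = Φ.dualCoannihilator ⊔ Ψ.dualCoannihilator := by
  conv_lhs => rw [← Subspace.dualCoannihilator_dualAnnihilator_eq (W := Φ),
    ← Subspace.dualCoannihilator_dualAnnihilator_eq (W := Ψ),
    ← Submodule.dualAnnihilator_sup_eq, Subspace.dualAnnihilator_dualCoannihilator_eq]

lemma corr_inf (S U : Submodule K V) :
    corr τ e (S ⊓ U) = corr τ e S ⊔ corr τ e U := by
  have hinj : Function.Injective (e : V →ₛₗ[(τ : K →+* K)] Module.Dual K V) := by
    simpa using e.injective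
  rw [corr, corr, corr, Submodule.map_inf _ hinj, dualCoann_inf]

lemma corr_sup (S U : Submodule K V) :
    corr τ e (S ⊔ U) = corr τ e S ⊓ corr τ e U := by
  rw [corr, corr, corr, Submodule.map_sup, Submodule.dualCoannihilator_sup_eq]

lemma corr_compl (S U : Submodule K V) :
    (S ⊓ U = ⊥ ∧ S ⊔ U = ⊤) ↔
      (corr τ e S ⊓ corr τ e U = ⊥ ∧ corr τ e S ⊔ corr τ e U = ⊤) := by
  constructor
  · rintro ⟨h1, h2⟩
    refine ⟨?_, ?_⟩
    · rw [← corr_sup, h2, corr_top]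
    · rw [← corr_inf, h1, corr_bot]
  · rintro ⟨h1, h2⟩
    refine ⟨corr_inj τ e ?_, corr_inj τ e ?_⟩
    · rw [corr_inf, corr_bot]
      exact h2
    · rw [corr_sup, corr_top]
      exact h1

end Corr

end DSP


/-- If semilinear bijections `s₁, s₂ : V → V*` are such that `S` and `U` are
complementary iff `(s₂(U))°` and `(s₁(S))°` are complementary (for `dim S = k`,
`dim U = n - k`), then `(s₁(W))° = (s₂(W))°` for every subspace `W`. -/
theorem dual_semilinear_pair_compatible_with_compl_agree
    {K V : Type*} [Field K] [AddCommGroup V] [Module K V]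
    [FiniteDimensional K V] {n k : ℕ} (hn : 2 ≤ n) (hV : finrank K V = n)
    (hk1 : 1 ≤ k) (hk2 : k ≤ n - 1)
    (τ₁ τ₂ : K ≃+* K) (s₁ s₂ : V → Module.Dual K V)
    (hb₁ : Function.Bijective s₁) (hb₂ : Function.Bijective s₂)
    (hadd₁ : ∀ x y : V, s₁ (x + y) = s₁ x + s₁ y)
    (hadd₂ : ∀ x y : V, s₂ (x + y) = s₂ x + s₂ y)
    (hsmul₁ : ∀ (c : K) (v : V), s₁ (c • v) = τ₁ c • s₁ v)
    (hsmul₂ : ∀ (c : K) (v : V), s₂ (c • v) = τ₂ c • s₂ v)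
    (hcompl : ∀ S U A B : Submodule K V,
      finrank K S = k → finrank K U = n - k →
      (A : Set V) = {v : V | ∀ u ∈ U, s₂ u v = 0} →
      (B : Set V) = {v : V | ∀ x ∈ S, s₁ x v = 0} →
      (SubCompl K V S U ↔ SubCompl K V A B)) :
    ∀ W : Submodule K V,
      {v : V | ∀ w ∈ W, s₁ w v = 0} = {v : V | ∀ w ∈ W, s₂ w v = 0} := by
  haveI i1 : RingHomInvPair (τ₁ : K →+* K) (τ₁.symm : K →+* K) :=
    RingHomInvPair.of_ringEquiv τ₁
  haveI i1' : RingHomInvPair (τ₁.symm : K →+* K) (τ₁ : K →+* K) :=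
    RingHomInvPair.symm (τ₁ : K →+* K) (τ₁.symm : K →+* K)
  haveI i2 : RingHomInvPair (τ₂ : K →+* K) (τ₂.symm : K →+* K) :=
    RingHomInvPair.of_ringEquiv τ₂
  haveI i2' : RingHomInvPair (τ₂.symm : K →+* K) (τ₂ : K →+* K) :=
    RingHomInvPair.symm (τ₂ : K →+* K) (τ₂.symm : K →+* K)
  let f₁ : V →ₛₗ[(τ₁ : K →+* K)] Module.Dual K V :=
    { toFun := s₁, map_add' := hadd₁, map_smul' := hsmul₁ }
  let e₁ : V ≃ₛₗ[(τ₁ : K →+* K)] Module.Dual K V := LinearEquiv.ofBijective f₁ hb₁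
  let f₂ : V →ₛₗ[(τ₂ : K →+* K)] Module.Dual K V :=
    { toFun := s₂, map_add' := hadd₂, map_smul' := hsmul₂ }
  let e₂ : V ≃ₛₗ[(τ₂ : K →+* K)] Module.Dual K V := LinearEquiv.ofBijective f₂ hb₂
  have hcoe₁ : ∀ W : Submodule K V,
      ((DSP.corr τ₁ e₁ W : Submodule K V) : Set V) = {v : V | ∀ w ∈ W, s₁ w v = 0} :=
    fun W => DSP.corr_coe τ₁ e₁ W
  have hcoe₂ : ∀ W : Submodule K V,
      ((DSP.corr τ₂ e₂ W : Submodule K V) : Set V) = {v : V | ∀ w ∈ W, s₂ w v = 0} :=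
    fun W => DSP.corr_coe τ₂ e₂ W
  -- Step 1: the two correlations agree on k-dimensional subspaces.
  have hstar : ∀ S : Submodule K V, finrank K S = k →
      DSP.corr τ₁ e₁ S = DSP.corr τ₂ e₂ S := by
    intro S hS
    have hXdim : finrank K (DSP.corr τ₁ e₁ S) = n - k := by
      have h := DSP.finrank_corr τ₁ e₁ S; omega
    have hYdim : finrank K (DSP.corr τ₂ e₂ S) = n - k := by
      have h := DSP.finrank_corr τ₂ e₂ S; omega
    have hsame : ∀ A : Submodule K V, finrank K A = k →
        (SubCompl K V A (DSP.corr τ₁ e₁ S) ↔ SubCompl K V A (DSP.corr τ₂ e₂ S)) := by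
      intro A hA
      obtain ⟨U, hU⟩ := DSP.corr_surj τ₂ e₂ A
      have hUdim : finrank K U = n - k := by
        have h := DSP.finrank_corr τ₂ e₂ U
        rw [hU, hA] at h
        omega
      have h1 : SubCompl K V S U ↔ SubCompl K V A (DSP.corr τ₁ e₁ S) :=
        hcompl S U A (DSP.corr τ₁ e₁ S) hS hUdim (by rw [← hU]; exact hcoe₂ U) (hcoe₁ S)
      have h2 : SubCompl K V S U ↔ SubCompl K V A (DSP.corr τ₂ e₂ S) := by
        constructor
        · intro h
          have h' : U ⊓ S = ⊥ ∧ U ⊔ S = ⊤ := ⟨by rw [inf_comm]; exact h.1,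
            by rw [sup_comm]; exact h.2⟩
          have h'' := (DSP.corr_compl τ₂ e₂ U S).mp h'
          rw [hU] at h''
          exact h''
        · intro h
          have h' : A ⊓ DSP.corr τ₂ e₂ S = ⊥ ∧ A ⊔ DSP.corr τ₂ e₂ S = ⊤ := h
          rw [← hU] at h'
          have h'' := (DSP.corr_compl τ₂ e₂ U S).mpr h'
          exact ⟨by rw [inf_comm]; exact h''.1, by rw [sup_comm]; exact h''.2⟩
      rw [← h1, h2]
    have incl : ∀ X Y : Submodule K V, finrank K Y = n - k →
        (∀ A : Submodule K V, finrank K A = k → (SubCompl K V A Y → SubCompl K V A X)) →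
        X ≤ Y := by
      intro X Y hY himp x hx
      by_contra hxY
      have hx0 : x ≠ 0 := fun h => hxY (h ▸ Y.zero_mem)
      have hinf : (K ∙ x) ⊓ Y = ⊥ := by
        rw [eq_bot_iff]
        rintro y ⟨hy1, hy2⟩
        obtain ⟨c, rfl⟩ := Submodule.mem_span_singleton.mp hy1
        rcases eq_or_ne c 0 with rfl | hc
        · simp
        · have hm := Y.smul_mem c⁻¹ hy2
          rw [smul_smul, inv_mul_cancel₀ hc, one_smul] at hm
          exact absurd hm hxY
      obtain ⟨A, hA1, hA2, hA3⟩ := DSP.exists_compl_ge Y (K ∙ x) hinf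
      have hAdim : finrank K A = k := by
        have h4 := Submodule.finrank_sup_add_finrank_inf_eq A Y
        rw [hA2, hA3, finrank_bot, finrank_top, hV] at h4
        omega
      have hCX : SubCompl K V A X := himp A hAdim ⟨hA2, hA3⟩
      have hmem : x ∈ A ⊓ X := ⟨hA1 (Submodule.mem_span_singleton_self x), hx⟩
      rw [hCX.1] at hmem
      exact hx0 ((Submodule.mem_bot K).mp hmem)
    exact le_antisymm
      (incl _ _ hYdim (fun A hA h => (hsame A hA).mpr h))
      (incl _ _ hXdim (fun A hA h => (hsame A hA).mp h))
  -- Step 2: conclude for arbitrary subspaces.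
  intro W
  ext v
  simp only [Set.mem_setOf_eq]
  by_cases hv : v = 0
  · subst hv
    constructor <;> intro _ w hw <;> simp
  have hs0₁ : s₁ (0 : V) = 0 := by
    have h0 := hadd₁ 0 0
    rw [add_zero] at h0
    exact (left_eq_add.mp h0)
  have hs0₂ : s₂ (0 : V) = 0 := by
    have h0 := hadd₂ 0 0
    rw [add_zero] at h0
    exact (left_eq_add.mp h0)
  have hne : Module.Dual.eval K V v ≠ 0 := by
    intro hcon
    exact hv ((Module.eval_apply_eq_zero_iff K v).mp hcon)
  have hkerdim : finrank K (LinearMap.ker (Module.Dual.eval K V v)) = n - 1 := by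
    have hsurj : LinearMap.range (Module.Dual.eval K V v) = ⊤ := by
      rw [LinearMap.range_eq_top]
      intro a
      have : ∃ φ : Module.Dual K V, Module.Dual.eval K V v φ ≠ 0 := by
        by_contra hcon
        push_neg at hcon
        exact hne (LinearMap.ext fun φ => hcon φ)
      obtain ⟨φ, hφ⟩ := this
      refine ⟨(a * (Module.Dual.eval K V v φ)⁻¹) • φ, ?_⟩
      rw [map_smul, smul_eq_mul, mul_assoc, inv_mul_cancel₀ hφ, mul_one]
    have hrn := LinearMap.finrank_range_add_finrank_ker (Module.Dual.eval K V v)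
    rw [hsurj, finrank_top, Module.finrank_self, Subspace.dual_finrank_eq, hV] at hrn
    omega
  constructor
  · intro h w hw
    rcases eq_or_ne w 0 with rfl | hw0
    · rw [hs0₂]; simp
    have hZeq : Submodule.comap (e₁ : V →ₛₗ[(τ₁ : K →+* K)] Module.Dual K V)
        (LinearMap.ker (Module.Dual.eval K V v)) =
        Submodule.map (e₁.symm : Module.Dual K V →ₛₗ[(τ₁.symm : K →+* K)] V)
        (LinearMap.ker (Module.Dual.eval K V v)) := by
      ext u
      simp only [Submodule.mem_comap, Submodule.mem_map, LinearMap.mem_ker]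
      constructor
      · intro hu
        exact ⟨e₁ u, hu, e₁.symm_apply_apply u⟩
      · rintro ⟨φ, hφ, rfl⟩
        rwa [LinearEquiv.coe_coe, LinearEquiv.coe_coe, e₁.apply_symm_apply]
    set Z : Submodule K V := Submodule.comap (e₁ : V →ₛₗ[(τ₁ : K →+* K)] Module.Dual K V)
      (LinearMap.ker (Module.Dual.eval K V v)) with hZdef
    have hmemZ : ∀ u : V, u ∈ Z ↔ s₁ u v = 0 := by
      intro u
      rw [hZdef, Submodule.mem_comap, LinearMap.mem_ker]
      exact Iff.rfl
    have hZrank : finrank K Z = n - 1 := by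
      rw [hZeq,
        DSP.finrank_map_eq' (σ := (τ₁.symm : K →+* K)) (σ' := (τ₁ : K →+* K))
          (show Function.Bijective ⇑((τ₁.symm : K →+* K)) from τ₁.symm.bijective) e₁.symm _]
      exact hkerdim
    have hwZ : w ∈ Z := (hmemZ w).mpr (h w hw)
    have hw1 : finrank K (K ∙ w) = 1 := finrank_span_singleton hw0
    obtain ⟨S, hS1, hS2, hS3⟩ := DSP.exists_between Z (k - 1) (K ∙ w)
      ((Submodule.span_singleton_le_iff_mem w Z).mpr hwZ) (by rw [hw1, hZrank]; omega)
    have hSdim : finrank K S = k := by rw [hS3, hw1]; omega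
    have hvS : v ∈ DSP.corr τ₁ e₁ S := by
      rw [DSP.mem_corr]
      intro u hu
      exact (hmemZ u).mp (hS2 hu)
    rw [hstar S hSdim, DSP.mem_corr] at hvS
    exact hvS w (hS1 (Submodule.mem_span_singleton_self w))
  · intro h w hw
    rcases eq_or_ne w 0 with rfl | hw0
    · rw [hs0₁]; simp
    have hZeq : Submodule.comap (e₂ : V →ₛₗ[(τ₂ : K →+* K)] Module.Dual K V)
        (LinearMap.ker (Module.Dual.eval K V v)) =
        Submodule.map (e₂.symm : Module.Dual K V →ₛₗ[(τ₂.symm : K →+* K)] V)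
        (LinearMap.ker (Module.Dual.eval K V v)) := by
      ext u
      simp only [Submodule.mem_comap, Submodule.mem_map, LinearMap.mem_ker]
      constructor
      · intro hu
        exact ⟨e₂ u, hu, e₂.symm_apply_apply u⟩
      · rintro ⟨φ, hφ, rfl⟩
        rwa [LinearEquiv.coe_coe, LinearEquiv.coe_coe, e₂.apply_symm_apply]
    set Z : Submodule K V := Submodule.comap (e₂ : V →ₛₗ[(τ₂ : K →+* K)] Module.Dual K V)
      (LinearMap.ker (Module.Dual.eval K V v)) with hZdef
    have hmemZ : ∀ u : V, u ∈ Z ↔ s₂ u v = 0 := by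
      intro u
      rw [hZdef, Submodule.mem_comap, LinearMap.mem_ker]
      exact Iff.rfl
    have hZrank : finrank K Z = n - 1 := by
      rw [hZeq,
        DSP.finrank_map_eq' (σ := (τ₂.symm : K →+* K)) (σ' := (τ₂ : K →+* K))
          (show Function.Bijective ⇑((τ₂.symm : K →+* K)) from τ₂.symm.bijective) e₂.symm _]
      exact hkerdim
    have hwZ : w ∈ Z := (hmemZ w).mpr (h w hw)
    have hw1 : finrank K (K ∙ w) = 1 := finrank_span_singleton hw0
    obtain ⟨S, hS1, hS2, hS3⟩ := DSP.exists_between Z (k - 1) (K ∙ w)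
      ((Submodule.span_singleton_le_iff_mem w Z).mpr hwZ) (by rw [hw1, hZrank]; omega)
    have hSdim : finrank K S = k := by rw [hS3, hw1]; omega
    have hvS : v ∈ DSP.corr τ₂ e₂ S := by
      rw [DSP.mem_corr]
      intro u hu
      exact (hmemZ u).mp (hS2 hu)
    rw [← hstar S hSdim, DSP.mem_corr] at hvS
    exact hvS w (hS1 (Submodule.mem_span_singleton_self w))
end

section
/- Let K be a field and suppose n = 2k > 2. Then for every semilinear bijection l : V → V and every semilinear bijection s : V → Dual V (each over some automorphism of K) it is NOT the case that for all k-dimensional subspaces S, U of V: S and U are complementary if and only if l(S) and (s(U))° are complementary. -/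
open Module

variable (K V : Type*) [DivisionRing K] [AddCommGroup V] [Module K V]

open Module Submodule

section Aux

variable {K V W : Type*} [Field K] [AddCommGroup V] [Module K V]
  [AddCommGroup W] [Module K W]

/-- finrank is preserved by additive bijections semilinear over a ring automorphism. -/
lemma finrank_image_eq_aux (σ : K ≃+* K) (f : V → W)
    (hinj : Function.Injective f)
    (hadd : ∀ x y : V, f (x + y) = f x + f y)
    (hsmul : ∀ (c : K) (v : V), f (c • v) = σ c • f v)
    (S : Submodule K V) (T : Submodule K W) (hT : (T : Set W) = f '' (S : Set V)) :
    finrank K T = finrank K S := by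
  have hmem : ∀ x : V, x ∈ S → f x ∈ T := by
    intro x hx
    have : f x ∈ (T : Set W) := by rw [hT]; exact ⟨x, hx, rfl⟩
    exact this
  have hsurj : ∀ y : W, y ∈ T → ∃ x, x ∈ S ∧ f x = y := by
    intro y hy
    have : y ∈ (T : Set W) := hy
    rw [hT] at this
    obtain ⟨x, hx, hfx⟩ := this
    exact ⟨x, hx, hfx⟩
  -- build an additive equiv S ≃+ T
  let g : S → T := fun x => ⟨f x, hmem x x.2⟩
  have hgbij : Function.Bijective g := by
    constructor
    · intro a b hab
      apply Subtype.ext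
      exact hinj (congrArg Subtype.val hab)
    · intro y
      obtain ⟨x, hx, hfx⟩ := hsurj y y.2
      exact ⟨⟨x, hx⟩, Subtype.ext hfx⟩
  let j : S ≃+ T :=
    { Equiv.ofBijective g hgbij with
      map_add' := by
        intro a b
        apply Subtype.ext
        exact hadd a b }
  have hrank := lift_rank_eq_of_equiv_equiv (⟨σ, map_zero σ⟩ : ZeroHom K K) j σ.bijective
    (fun r m => Subtype.ext (hsmul r m))
  have := congrArg Cardinal.toNat hrank
  rwa [Cardinal.toNat_lift, Cardinal.toNat_lift, ← Module.finrank, ← Module.finrank, eq_comm] at this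

end Aux



open Module Submodule

section Aux2

variable {K V : Type*} [Field K] [AddCommGroup V] [Module K V] [FiniteDimensional K V]

lemma exists_superset_finrank_eq_aux :
    ∀ (j : ℕ) (W : Submodule K V) (k : ℕ), finrank K W + j = k → k ≤ finrank K V →
      ∃ A : Submodule K V, W ≤ A ∧ finrank K A = k := by
  intro j
  induction j with
  | zero =>
    intro W k hW hk
    exact ⟨W, le_refl _, by omega⟩
  | succ j ih =>
    intro W k hW hk
    have hlt : finrank K W < finrank K V := by omega
    obtain ⟨m, hm⟩ := Submodule.exists_of_finrank_lt W hlt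
    have hmW : m ∉ W := by
      intro h
      exact hm 1 one_ne_zero (by simpa using h)
    have hm0 : m ≠ 0 := by
      intro h
      exact hmW (h ▸ W.zero_mem)
    have hinf : W ⊓ span K {m} = ⊥ := by
      rw [eq_bot_iff]
      intro x hx
      obtain ⟨hxW, hxm⟩ := hx
      obtain ⟨c, rfl⟩ := mem_span_singleton.mp hxm
      rcases eq_or_ne c 0 with rfl | hc
      · simp
      · exact absurd hxW (hm c hc)
    have hfin : finrank K ↥(W ⊔ span K {m}) = finrank K W + 1 := by
      have := Submodule.finrank_sup_add_finrank_inf_eq W (span K {m})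
      rw [hinf, finrank_span_singleton hm0] at this
      simpa using this
    obtain ⟨A, hWA, hA⟩ := ih (W ⊔ span K {m}) k (by omega) hk
    exact ⟨A, le_trans le_sup_left hWA, hA⟩

lemma exists_superset_finrank_eq {W : Submodule K V} {k : ℕ}
    (h1 : finrank K W ≤ k) (h2 : k ≤ finrank K V) :
    ∃ A : Submodule K V, W ≤ A ∧ finrank K A = k :=
  exists_superset_finrank_eq_aux (k - finrank K W) W k (by omega) h2

/-- For a `k`-dimensional `W` in a `2k`-dimensional space and `x ∉ W`, there is a
complement of `W` containing `x`. -/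
lemma exists_compl_through_point {k : ℕ} (hV : finrank K V = 2 * k)
    {W : Submodule K V} (hW : finrank K W = k) {x : V} (hx : x ∉ W) (hk : 1 ≤ k) :
    ∃ A : Submodule K V, finrank K A = k ∧ x ∈ A ∧ A ⊓ W = ⊥ ∧ A ⊔ W = ⊤ := by
  have hx0 : x ≠ 0 := fun h => hx (h ▸ W.zero_mem)
  have hinf : W ⊓ span K {x} = ⊥ := by
    rw [eq_bot_iff]
    intro y hy
    obtain ⟨hyW, hym⟩ := hy
    obtain ⟨c, rfl⟩ := mem_span_singleton.mp hym
    rcases eq_or_ne c 0 with rfl | hc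
    · simp
    · exact absurd (W.smul_mem c⁻¹ hyW) (by rwa [smul_smul, inv_mul_cancel₀ hc, one_smul])
  have hWx : finrank K ↥(W ⊔ span K {x}) = k + 1 := by
    have := Submodule.finrank_sup_add_finrank_inf_eq W (span K {x})
    rw [hinf, finrank_span_singleton hx0, hW] at this
    simpa using this
  obtain ⟨C, hC⟩ := Submodule.exists_isCompl (W ⊔ span K {x})
  have hCfin : finrank K C = k - 1 := by
    have h1 := Submodule.finrank_sup_add_finrank_inf_eq (W ⊔ span K {x}) C
    rw [hC.disjoint.eq_bot, hC.codisjoint.eq_top, finrank_bot, finrank_top, hV, hWx] at h1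
    omega
  have hspanC : span K {x} ⊓ C = ⊥ := by
    rw [eq_bot_iff]
    intro y hy
    have : y ∈ (W ⊔ span K {x}) ⊓ C := ⟨le_sup_right (α := Submodule K V) hy.1, hy.2⟩
    rwa [hC.disjoint.eq_bot] at this
  set A := span K {x} ⊔ C with hA
  have hAfin : finrank K A = k := by
    have h2 := Submodule.finrank_sup_add_finrank_inf_eq (span K {x}) C
    rw [hspanC, finrank_span_singleton hx0, hCfin] at h2
    simp only [finrank_bot, add_zero] at h2
    rw [hA]
    omega
  have hsup : A ⊔ W = ⊤ := by
    rw [eq_top_iff, ← hC.codisjoint.eq_top, hA]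
    exact sup_le (sup_le le_sup_right (le_trans le_sup_left le_sup_left))
      (le_trans le_sup_right le_sup_left)
  have hAinf : A ⊓ W = ⊥ := by
    have h1 := Submodule.finrank_sup_add_finrank_inf_eq A W
    rw [hsup, finrank_top, hV, hAfin, hW] at h1
    have : finrank K ↥(A ⊓ W) = 0 := by omega
    exact (Submodule.finrank_eq_zero).mp this
  exact ⟨A, hAfin, le_sup_left (α := Submodule K V) (mem_span_singleton_self x), hAinf, hsup⟩

end Aux2



open Module Submodule

section AuxMain

variable {K V W : Type*} [Field K] [AddCommGroup V] [Module K V]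
  [AddCommGroup W] [Module K W]

/-- The image of a submodule under an additive, `σ`-semilinear map, as a submodule. -/
def imageSubAux (σ : K ≃+* K) (f : V → W)
    (hadd : ∀ x y : V, f (x + y) = f x + f y)
    (hsmul : ∀ (c : K) (v : V), f (c • v) = σ c • f v)
    (S : Submodule K V) : Submodule K W where
  carrier := f '' S
  add_mem' := by
    rintro a b ⟨x, hx, rfl⟩ ⟨y, hy, rfl⟩
    exact ⟨x + y, S.add_mem hx hy, hadd x y⟩
  zero_mem' := by
    refine ⟨0, S.zero_mem, ?_⟩
    have h := hadd 0 0
    rw [add_zero] at h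
    exact (add_eq_left.mp h.symm)
  smul_mem' := by
    rintro c w ⟨x, hx, rfl⟩
    refine ⟨σ.symm c • x, S.smul_mem _ hx, ?_⟩
    rw [hsmul, RingEquiv.apply_symm_apply]

lemma imageSubAux_coe (σ : K ≃+* K) (f : V → W)
    (hadd : ∀ x y : V, f (x + y) = f x + f y)
    (hsmul : ∀ (c : K) (v : V), f (c • v) = σ c • f v)
    (S : Submodule K V) :
    (imageSubAux σ f hadd hsmul S : Set W) = f '' (S : Set V) := rfl

/-- The preimage of a submodule under an additive, `σ`-semilinear map, as a submodule. -/
def preSubAux (σ : K ≃+* K) (f : V → W)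
    (hadd : ∀ x y : V, f (x + y) = f x + f y)
    (hsmul : ∀ (c : K) (v : V), f (c • v) = σ c • f v)
    (A : Submodule K W) : Submodule K V where
  carrier := f ⁻¹' A
  add_mem' := by
    intro x y hx hy
    simp only [Set.mem_preimage, SetLike.mem_coe] at *
    rw [hadd]; exact A.add_mem hx hy
  zero_mem' := by
    simp only [Set.mem_preimage, SetLike.mem_coe]
    have h := hadd 0 0
    rw [add_zero] at h
    rw [add_eq_left.mp h.symm]
    exact A.zero_mem
  smul_mem' := by
    intro c x hx
    simp only [Set.mem_preimage, SetLike.mem_coe] at *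
    rw [hsmul]; exact A.smul_mem _ hx

end AuxMain


/-- For `n = 2k > 2` there are no semilinear bijections `l : V → V` and
`s : V → V*` such that `S, U` are complementary iff `l(S), (s(U))°` are
complementary, for all `k`-dimensional `S`, `U`. -/
theorem no_mixed_pair_compatible_with_compl
    {K V : Type*} [Field K] [AddCommGroup V] [Module K V]
    [FiniteDimensional K V] {n k : ℕ} (hn : n = 2 * k) (hk : 2 ≤ k)
    (hV : finrank K V = n)
    (σ τ : K ≃+* K) (l : V → V) (s : V → Module.Dual K V)
    (hbl : Function.Bijective l) (hbs : Function.Bijective s)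
    (haddl : ∀ x y : V, l (x + y) = l x + l y)
    (hadds : ∀ x y : V, s (x + y) = s x + s y)
    (hsmull : ∀ (c : K) (v : V), l (c • v) = σ c • l v)
    (hsmuls : ∀ (c : K) (v : V), s (c • v) = τ c • s v) :
    ¬ (∀ S U S' U' : Submodule K V,
        finrank K S = k → finrank K U = k →
        (S' : Set V) = l '' (S : Set V) →
        (U' : Set V) = {v : V | ∀ u ∈ U, s u v = 0} →
        (SubCompl K V S U ↔ SubCompl K V S' U')) := by

  intro H
  have hV2 : finrank K V = 2 * k := by rw [hV, hn]
  have hk1 : 1 ≤ k := by omega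
  have hl0 : l 0 = 0 := by
    have h := haddl 0 0
    rw [add_zero] at h
    exact (add_eq_left.mp h.symm)
  let D : Submodule K V → Submodule K V := fun U =>
    { carrier := {v : V | ∀ u ∈ U, s u v = 0}
      add_mem' := by
        intro a b ha hb u hu
        rw [map_add, ha u hu, hb u hu, add_zero]
      zero_mem' := by intro u hu; rw [map_zero]
      smul_mem' := by
        intro c v hv u hu
        rw [map_smul, smul_eq_mul, hv u hu, mul_zero] }
  have hDmem : ∀ (U : Submodule K V) (v : V), v ∈ D U ↔ ∀ u ∈ U, s u v = 0 :=
    fun _ _ => Iff.rfl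
  have hDcoe : ∀ U : Submodule K V,
      ((D U : Submodule K V) : Set V) = {v : V | ∀ u ∈ U, s u v = 0} := fun _ => rfl
  have hDeq : ∀ U : Submodule K V,
      D U = (imageSubAux τ s hadds hsmuls U).dualCoannihilator := by
    intro U
    ext v
    rw [hDmem, Submodule.mem_dualCoannihilator]
    constructor
    · rintro hv φ ⟨u, hu, rfl⟩
      exact hv u hu
    · intro hv u hu
      exact hv (s u) ⟨u, hu, rfl⟩
  have hDfin : ∀ U : Submodule K V, finrank K U = k → finrank K (D U) = k := by
    intro U hU
    have h1 : finrank K (imageSubAux τ s hadds hsmuls U) = k := by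
      rw [finrank_image_eq_aux τ s hbs.1 hadds hsmuls U _ (imageSubAux_coe τ s hadds hsmuls U),
        hU]
    have h2 := Subspace.finrank_add_finrank_dualCoannihilator_eq
      (imageSubAux τ s hadds hsmuls U)
    rw [hDeq U]
    rw [h1, hV2] at h2
    omega
  have key : ∀ B : Submodule K V, finrank K B = k →
      ∀ b ∈ B, ∀ u ∈ B, s u (l b) = 0 := by
    intro B hB b hb u hu
    by_contra hne
    have hxD : l b ∉ D B := fun h => hne ((hDmem B (l b)).mp h u hu)
    obtain ⟨A, hAfin, hxA, hAinf, hAsup⟩ :=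
      exists_compl_through_point hV2 (hDfin B hB) hxD hk1
    set S := preSubAux σ l haddl hsmull A with hSdef
    have hScoeA : (A : Set V) = l '' (S : Set V) := by
      have h := Set.image_preimage_eq (A : Set V) hbl.2
      exact h.symm
    have hSfin : finrank K S = k := by
      rw [← finrank_image_eq_aux σ l hbl.1 haddl hsmull S A hScoeA, hAfin]
    have hiff := H S B A (D B) hSfin hB hScoeA (hDcoe B)
    have hcompl : SubCompl K V S B := hiff.mpr ⟨hAinf, hAsup⟩
    have hbS : b ∈ S := hxA
    have hmem : b ∈ S ⊓ B := ⟨hbS, hb⟩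
    rw [hcompl.1] at hmem
    have hb0 : b = 0 := hmem
    apply hxD
    rw [hb0, hl0]
    exact (D B).zero_mem
  have hpos : 0 < finrank K V := by omega
  obtain ⟨b, hb0⟩ := Module.finrank_pos_iff_exists_ne_zero.mp hpos
  have hall : ∀ u : V, s u (l b) = 0 := by
    intro u
    have hsb : finrank K (span K ({b} : Set V)) ≤ 1 := by
      rw [finrank_span_singleton hb0]
    have hsu : finrank K (span K ({u} : Set V)) ≤ 1 := by
      rcases eq_or_ne u 0 with rfl | hu0
      · rw [Submodule.span_zero_singleton]
        simp
      · rw [finrank_span_singleton hu0]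
    have hWle : finrank K ↥(span K ({b} : Set V) ⊔ span K ({u} : Set V)) ≤ k := by
      have h := Submodule.finrank_sup_add_finrank_inf_eq
        (span K ({b} : Set V)) (span K ({u} : Set V))
      omega
    obtain ⟨B, hWB, hBfin⟩ := exists_superset_finrank_eq hWle (by omega)
    exact key B hBfin b (hWB (le_sup_left (α := Submodule K V) (mem_span_singleton_self b)))
      u (hWB (le_sup_right (α := Submodule K V) (mem_span_singleton_self u)))
  have hlb0 : l b = 0 := by
    rw [← Module.forall_dual_apply_eq_zero_iff K (l b)]
    intro φ
    obtain ⟨u, rfl⟩ := hbs.2 φ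
    exact hall u
  exact hb0 (hbl.1 (hlb0.trans hl0.symm))
end

section
/- A subset X of G is a maximal C-subset if and only if either there exists a k-dimensional subspace S of V with X = {(S',U') ∈ G : S' = S}, or there exists an (n−k)-dimensional subspace U of V with X = {(S',U') ∈ G : U' = U}. -/
open Module

variable (K V : Type*) [DivisionRing K] [AddCommGroup V] [Module K V]

/-- A C-subset: a subset of 𝒢 any two distinct elements of which are close. -/
def IsCSubset (n k : ℕ) (X : Set (Submodule K V × Submodule K V)) : Prop :=
  X ⊆ GSet K V n k ∧ ∀ p ∈ X, ∀ q ∈ X, p ≠ q → PairClose K V p q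

/-- A maximal C-subset: a C-subset not properly contained in any C-subset. -/
def IsMaxCSubset (n k : ℕ) (X : Set (Submodule K V × Submodule K V)) : Prop :=
  IsCSubset K V n k X ∧ ¬ ∃ Y, IsCSubset K V n k Y ∧ X ⊂ Y

lemma compl_iff_isCompl (S U : Submodule K V) : SubCompl K V S U ↔ IsCompl S U :=
  ⟨fun ⟨h1, h2⟩ => ⟨disjoint_iff.2 h1, codisjoint_iff.2 h2⟩,
   fun h => ⟨disjoint_iff.1 h.disjoint, codisjoint_iff.1 h.codisjoint⟩⟩

lemma exists_other_compl {S U : Submodule K V} (hbot : S ≠ ⊥) (htop : S ≠ ⊤)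
    (hc : IsCompl S U) : ∃ U' : Submodule K V, U' ≠ U ∧ IsCompl S U' := by
  obtain ⟨s, hsS, hs0⟩ := Submodule.exists_mem_ne_zero_of_ne_bot hbot
  have hUbot : U ≠ ⊥ := by
    rintro rfl
    exact htop (by simpa using codisjoint_iff.1 hc.codisjoint)
  obtain ⟨u, huU, hu0⟩ := Submodule.exists_mem_ne_zero_of_ne_bot hUbot
  have hu0' : (⟨u, huU⟩ : U) ≠ 0 := by simpa using hu0
  obtain ⟨Qu, hQu⟩ := (K ∙ (⟨u, huU⟩ : U)).exists_isCompl
  set ψ : U →ₗ[K] K :=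
    (LinearEquiv.coord K U (⟨u, huU⟩ : U) hu0').toLinearMap.comp
      ((K ∙ (⟨u, huU⟩ : U)).projectionOnto Qu hQu) with hψdef
  have hψ1 : ψ ⟨u, huU⟩ = 1 := by
    have h1 := Submodule.projectionOnto_apply_left hQu
      (⟨⟨u, huU⟩, Submodule.mem_span_singleton_self _⟩ : (K ∙ (⟨u, huU⟩ : U)))
    simp only [hψdef, LinearMap.comp_apply, LinearEquiv.coe_coe]
    rw [h1]
    exact LinearEquiv.coord_self K U _ hu0'
  have hψ : ψ ⟨u, huU⟩ ≠ 0 := by rw [hψ1]; exact one_ne_zero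
  set π := U.projectionOnto S hc.symm with hπ
  set φ : V →ₗ[K] K := ψ.comp π with hφ
  have hφS : ∀ x ∈ S, φ x = 0 := by
    intro x hx
    have := Submodule.projectionOnto_apply_of_mem_right hc.symm hx
    simp [hφ, hπ, this]
  have hφu : φ u = ψ ⟨u, huU⟩ := by
    simp [hφ, hπ, Submodule.projectionOnto_apply_of_mem_left hc.symm huU]
  set g : V →ₗ[K] V := (LinearMap.toSpanSingleton K V s).comp φ with hgdef
  have hg : ∀ x, g x = φ x • s := fun x => rfl
  have hgS : ∀ x ∈ S, g x = 0 := by intro x hx; rw [hg, hφS x hx, zero_smul]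
  have hgg : ∀ x, g (g x) = 0 := by
    intro x
    rw [hg, hg, map_smul, hφS s hsS, smul_eq_mul, mul_zero, zero_smul]
  set f₁ : V →ₗ[K] V := LinearMap.id + g with hf₁
  set f₂ : V →ₗ[K] V := LinearMap.id - g with hf₂
  have h12 : f₁.comp f₂ = LinearMap.id := by
    ext x
    simp only [hf₁, hf₂, LinearMap.comp_apply, LinearMap.add_apply, LinearMap.sub_apply,
      LinearMap.id_apply, map_sub, hgg x, sub_zero]
    abel
  have h21 : f₂.comp f₁ = LinearMap.id := by
    ext x
    simp only [hf₁, hf₂, LinearMap.comp_apply, LinearMap.add_apply, LinearMap.sub_apply,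
      LinearMap.id_apply, map_add, hgg x, add_zero]
    abel
  set e : V ≃ₗ[K] V := LinearEquiv.ofLinear f₁ f₂ h12 h21 with hedef
  have heapp : ∀ x, e x = x + g x := fun x => rfl
  have hfix : ∀ x ∈ S, e x = x := by
    intro x hx; rw [heapp, hgS x hx, add_zero]
  have hmapS : Submodule.map (e : V →ₗ[K] V) S = S := by
    apply le_antisymm
    · rintro x ⟨y, hy, rfl⟩
      simpa [hfix y hy] using hy
    · intro x hx
      exact ⟨x, hx, hfix x hx⟩
  have hcompl' : IsCompl S (Submodule.map (e : V →ₗ[K] V) U) := by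
    rw [← hmapS]
    constructor
    · rw [disjoint_iff, ← Submodule.map_inf _ e.injective, disjoint_iff.1 hc.disjoint,
        Submodule.map_bot]
    · rw [codisjoint_iff, ← Submodule.map_sup, codisjoint_iff.1 hc.codisjoint]
      simp [Submodule.map_top, LinearEquiv.range]
  refine ⟨Submodule.map (e : V →ₗ[K] V) U, ?_, hcompl'⟩
  intro hEq
  have hmem : e u ∈ Submodule.map (e : V →ₗ[K] V) U := Submodule.mem_map_of_mem huU
  rw [hEq] at hmem
  rw [heapp, hg] at hmem
  have h2 : φ u • s ∈ U := by
    have := U.sub_mem hmem huU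
    simpa using this
  have h3 : φ u • s ∈ S := S.smul_mem _ hsS
  have h4 : φ u • s = 0 := Submodule.disjoint_def.1 hc.disjoint _ h3 h2
  rcases smul_eq_zero.1 h4 with h | h
  · rw [hφu] at h; exact hψ h
  · exact hs0 h

lemma fiber1_max [FiniteDimensional K V] {n k : ℕ} (hn : 2 ≤ n) (hV : finrank K V = n)
    (hk1 : 1 ≤ k) (hk2 : k ≤ n - 1) {S : Submodule K V} (hS : finrank K S = k) :
    IsMaxCSubset K V n k {p ∈ GSet K V n k | p.1 = S} := by
  have hSb : S ≠ ⊥ := by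
    intro h; rw [h, finrank_bot] at hS; omega
  have hSt : S ≠ ⊤ := by
    intro h; rw [h, finrank_top, hV] at hS; omega
  have hGmem : ∀ T : Submodule K V, IsCompl S T → (S, T) ∈ GSet K V n k := by
    intro T hc
    have hsum := Submodule.finrank_add_eq_of_isCompl hc
    rw [hV, hS] at hsum
    exact ⟨hS, show finrank K T = n - k by omega, (compl_iff_isCompl K V S T).2 hc⟩
  obtain ⟨U, hcU⟩ := S.exists_isCompl
  obtain ⟨U', hU'ne, hcU'⟩ := exists_other_compl K V hSb hSt hcU
  have hp : (S, U) ∈ {p ∈ GSet K V n k | p.1 = S} := ⟨hGmem U hcU, rfl⟩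
  have hq : (S, U') ∈ {p ∈ GSet K V n k | p.1 = S} := ⟨hGmem U' hcU', rfl⟩
  constructor
  · refine ⟨Set.sep_subset _ _, ?_⟩
    rintro p ⟨hpG, hp1⟩ q ⟨hqG, hq1⟩ hne
    exact Or.inl ⟨hp1.trans hq1.symm,
      fun h2 => hne (Prod.ext (hp1.trans hq1.symm) h2)⟩
  · rintro ⟨Y, hYC, hXY⟩
    obtain ⟨y, hyY, hyX⟩ := Set.exists_of_ssubset hXY
    have h1 : y ≠ (S, U) := fun h => hyX (h ▸ hp)
    have h2 : y ≠ (S, U') := fun h => hyX (h ▸ hq)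
    have hy1 : y.1 ≠ S := fun h => hyX ⟨hYC.1 hyY, h⟩
    rcases hYC.2 y hyY (S, U) (hXY.1 hp) h1 with ⟨ha, _⟩ | ⟨_, hb⟩
    · exact hy1 ha
    rcases hYC.2 y hyY (S, U') (hXY.1 hq) h2 with ⟨ha', _⟩ | ⟨_, hb'⟩
    · exact hy1 ha'
    exact hU'ne (hb'.symm.trans hb)

lemma fiber2_max [FiniteDimensional K V] {n k : ℕ} (hn : 2 ≤ n) (hV : finrank K V = n)
    (hk1 : 1 ≤ k) (hk2 : k ≤ n - 1) {U : Submodule K V} (hU : finrank K U = n - k) :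
    IsMaxCSubset K V n k {p ∈ GSet K V n k | p.2 = U} := by
  have hUb : U ≠ ⊥ := by
    intro h; rw [h, finrank_bot] at hU; omega
  have hUt : U ≠ ⊤ := by
    intro h; rw [h, finrank_top, hV] at hU; omega
  have hGmem : ∀ T : Submodule K V, IsCompl T U → (T, U) ∈ GSet K V n k := by
    intro T hc
    have hsum := Submodule.finrank_add_eq_of_isCompl hc
    rw [hV, hU] at hsum
    exact ⟨show finrank K T = k by omega, hU, (compl_iff_isCompl K V T U).2 hc⟩
  obtain ⟨S, hcS⟩ := U.exists_isCompl
  obtain ⟨S', hS'ne, hcS'⟩ := exists_other_compl K V hUb hUt hcS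
  have hp : (S, U) ∈ {p ∈ GSet K V n k | p.2 = U} := ⟨hGmem S hcS.symm, rfl⟩
  have hq : (S', U) ∈ {p ∈ GSet K V n k | p.2 = U} := ⟨hGmem S' hcS'.symm, rfl⟩
  constructor
  · refine ⟨Set.sep_subset _ _, ?_⟩
    rintro p ⟨hpG, hp2⟩ q ⟨hqG, hq2⟩ hne
    exact Or.inr ⟨fun h1 => hne (Prod.ext h1 (hp2.trans hq2.symm)),
      hp2.trans hq2.symm⟩
  · rintro ⟨Y, hYC, hXY⟩
    obtain ⟨y, hyY, hyX⟩ := Set.exists_of_ssubset hXY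
    have h1 : y ≠ (S, U) := fun h => hyX (h ▸ hp)
    have h2 : y ≠ (S', U) := fun h => hyX (h ▸ hq)
    have hy2 : y.2 ≠ U := fun h => hyX ⟨hYC.1 hyY, h⟩
    rcases hYC.2 y hyY (S, U) (hXY.1 hp) h1 with ⟨ha, _⟩ | ⟨_, hb⟩
    · rcases hYC.2 y hyY (S', U) (hXY.1 hq) h2 with ⟨ha', _⟩ | ⟨_, hb'⟩
      · exact hS'ne (ha'.symm.trans ha)
      · exact hy2 hb'
    · exact hy2 hb

/-- The maximal C-subsets of 𝒢 are exactly the sets 𝒢(S,V) with `dim S = k` and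
the sets 𝒢(V,U) with `dim U = n - k`. -/
theorem maximal_C_subsets
    {K V : Type*} [DivisionRing K] [AddCommGroup V] [Module K V]
    [FiniteDimensional K V] {n k : ℕ} (hn : 2 ≤ n) (hV : finrank K V = n)
    (hk1 : 1 ≤ k) (hk2 : k ≤ n - 1)
    (X : Set (Submodule K V × Submodule K V)) :
    IsMaxCSubset K V n k X ↔
      ((∃ S : Submodule K V, finrank K S = k ∧
          X = {p ∈ GSet K V n k | p.1 = S}) ∨
       (∃ U : Submodule K V, finrank K U = n - k ∧
          X = {p ∈ GSet K V n k | p.2 = U})) := by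
  constructor
  · rintro ⟨⟨hXG, hXcl⟩, hmax⟩
    by_cases hX2 : ∃ p ∈ X, ∃ q ∈ X, p ≠ q
    · obtain ⟨p, hp, q, hq, hpq⟩ := hX2
      rcases hXcl p hp q hq hpq with ⟨h1, h2⟩ | ⟨h1, h2⟩
      · left
        refine ⟨p.1, (hXG hp).1, ?_⟩
        have hsub : X ⊆ {r ∈ GSet K V n k | r.1 = p.1} := by
          intro r hr
          refine ⟨hXG hr, ?_⟩
          by_contra hr1
          have hrp : r ≠ p := fun h => hr1 (by rw [h])
          have hrq : r ≠ q := fun h => hr1 (by rw [h]; exact h1.symm)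
          rcases hXcl r hr p hp hrp with ⟨ha, _⟩ | ⟨_, hb⟩
          · exact hr1 ha
          rcases hXcl r hr q hq hrq with ⟨ha', _⟩ | ⟨_, hb'⟩
          · exact hr1 (ha'.trans h1.symm)
          exact h2 (hb.symm.trans hb')
        by_contra hne
        exact hmax ⟨_, (fiber1_max K V hn hV hk1 hk2 (hXG hp).1).1,
          hsub.ssubset_of_ne hne⟩
      · right
        refine ⟨p.2, (hXG hp).2.1, ?_⟩
        have hsub : X ⊆ {r ∈ GSet K V n k | r.2 = p.2} := by
          intro r hr
          refine ⟨hXG hr, ?_⟩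
          by_contra hr2
          have hrp : r ≠ p := fun h => hr2 (by rw [h])
          have hrq : r ≠ q := fun h => hr2 (by rw [h]; exact h2.symm)
          rcases hXcl r hr p hp hrp with ⟨ha, _⟩ | ⟨_, hb⟩
          · rcases hXcl r hr q hq hrq with ⟨ha', _⟩ | ⟨_, hb'⟩
            · exact h1 (ha.symm.trans ha')
            · exact hr2 (hb'.trans h2.symm)
          · exact hr2 hb
        by_contra hne
        exact hmax ⟨_, (fiber2_max K V hn hV hk1 hk2 (hXG hp).2.1).1,
          hsub.ssubset_of_ne hne⟩
    · push_neg at hX2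
      exfalso
      rcases Set.eq_empty_or_nonempty X with hE | ⟨p, hp⟩
      · have hkn : k ≤ finrank K V := by omega
        set b := Module.finBasis K V with hb
        set c : Fin k → V := fun i => b (Fin.castLE hkn i) with hcdef
        have hli : LinearIndependent K c :=
          b.linearIndependent.comp _ (Fin.castLE_injective hkn)
        have hrank : finrank K (Submodule.span K (Set.range c)) = k := by
          rw [finrank_span_eq_card hli, Fintype.card_fin]
        obtain ⟨U₀, hc₀⟩ := (Submodule.span K (Set.range c)).exists_isCompl
        have hmem : (Submodule.span K (Set.range c), U₀) ∈ GSet K V n k := by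
          have hsum := Submodule.finrank_add_eq_of_isCompl hc₀
          rw [hV, hrank] at hsum
          exact ⟨hrank, show finrank K U₀ = n - k by omega, (compl_iff_isCompl K V _ _).2 hc₀⟩
        refine hmax ⟨{(Submodule.span K (Set.range c), U₀)}, ⟨?_, ?_⟩, ?_⟩
        · simpa using hmem
        · rintro a ha b' hb' hne
          rw [Set.mem_singleton_iff] at ha hb'
          exact absurd (ha.trans hb'.symm) hne
        · rw [hE]
          exact Set.empty_ssubset.2 (Set.singleton_nonempty _)
      · have hpG := hXG hp
        have hc : IsCompl p.1 p.2 := (compl_iff_isCompl K V _ _).1 hpG.2.2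
        have hSb : p.1 ≠ ⊥ := by
          intro h
          have h' := hpG.1
          rw [h, finrank_bot] at h'
          omega
        have hSt : p.1 ≠ ⊤ := by
          intro h
          have h' := hpG.1
          rw [h, finrank_top, hV] at h'
          omega
        obtain ⟨U', hU'ne, hcU'⟩ := exists_other_compl K V hSb hSt hc
        have hmem : (p.1, U') ∈ GSet K V n k := by
          have hsum := Submodule.finrank_add_eq_of_isCompl hcU'
          rw [hV, hpG.1] at hsum
          exact ⟨hpG.1, show finrank K U' = n - k by omega, (compl_iff_isCompl K V _ _).2 hcU'⟩
        have hnotin : (p.1, U') ∉ X := by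
          intro h
          exact hU'ne (congrArg Prod.snd (hX2 _ h p hp))
        refine hmax ⟨insert (p.1, U') X, ⟨?_, ?_⟩, Set.ssubset_insert hnotin⟩
        · exact Set.insert_subset hmem hXG
        · intro a ha b' hb' hne
          rcases Set.mem_insert_iff.1 ha with rfl | haX
          · rcases Set.mem_insert_iff.1 hb' with rfl | hbX
            · exact absurd rfl hne
            · have hbp : b' = p := hX2 _ hbX _ hp
              subst hbp
              exact Or.inl ⟨rfl, hU'ne⟩
          · rcases Set.mem_insert_iff.1 hb' with rfl | hbX
            · have hap : a = p := hX2 _ haX _ hp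
              subst hap
              exact Or.inl ⟨rfl, fun h => hU'ne h.symm⟩
            · exact absurd ((hX2 _ haX _ hp).trans (hX2 _ hbX _ hp).symm) hne
  · rintro (⟨S, hS, rfl⟩ | ⟨U, hU, rfl⟩)
    · exact fiber1_max K V hn hV hk1 hk2 hS
    · exact fiber2_max K V hn hV hk1 hk2 hU
end

section
/- Let S be a k-dimensional subspace of V and let U, U' be two (n−k)-dimensional subspaces both complementary to S. Then there is a finite sequence U = U₀, U₁, …, U_i = U' of (n−k)-dimensional subspaces, each complementary to S, such that consecutive terms are adjacent. -/
open Module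

variable (K V : Type*) [DivisionRing K] [AddCommGroup V] [Module K V]

section Aux

variable {F M : Type*} [DivisionRing F] [AddCommGroup M] [Module F M]
  [FiniteDimensional F M]

lemma aux_finrank_sup_span_s14 (p : Submodule F M) (v : M) (hv : v ∉ p) :
    finrank F ↥(p ⊔ Submodule.span F {v}) = finrank F p + 1 := by
  have hv0 : v ≠ 0 := fun h => hv (h ▸ p.zero_mem)
  have hinf : p ⊓ Submodule.span F {v} = ⊥ := by
    rw [eq_bot_iff]
    rintro x ⟨hxp, hxs⟩
    obtain ⟨a, rfl⟩ := Submodule.mem_span_singleton.mp hxs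
    rcases eq_or_ne a 0 with rfl | ha
    · simp
    · exact absurd (by simpa [ha] using p.smul_mem a⁻¹ hxp) hv
  have h := Submodule.finrank_sup_add_finrank_inf_eq p (Submodule.span F {v})
  rw [hinf, finrank_bot, finrank_span_singleton hv0] at h
  omega

omit [FiniteDimensional F M] in
lemma aux_rel_compl (T U : Submodule F M) (h : T ≤ U) :
    ∃ C ≤ U, T ⊓ C = ⊥ ∧ T ⊔ C = U := by
  obtain ⟨q, hq⟩ := Submodule.exists_isCompl (T.comap U.subtype)
  have hT : (T.comap U.subtype).map U.subtype = T := by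
    rw [Submodule.map_comap_subtype, inf_eq_right.mpr h]
  refine ⟨q.map U.subtype, Submodule.map_subtype_le U q, ?_, ?_⟩
  · calc T ⊓ q.map U.subtype
        = ((T.comap U.subtype) ⊓ q).map U.subtype := by
          rw [Submodule.map_inf _ (Submodule.injective_subtype U), hT]
      _ = ⊥ := by rw [hq.inf_eq_bot, Submodule.map_bot]
  · calc T ⊔ q.map U.subtype
        = ((T.comap U.subtype) ⊔ q).map U.subtype := by rw [Submodule.map_sup, hT]
      _ = U := by rw [hq.sup_eq_top, Submodule.map_top, Submodule.range_subtype]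

lemma aux_step (S U U' : Submodule F M)
    (hU : SubCompl F M S U) (hU' : SubCompl F M S U') (hne : ¬ U' ≤ U) :
    ∃ U'' : Submodule F M, finrank F U'' = finrank F U ∧ SubCompl F M S U'' ∧
      SubAdj F M U U'' ∧ finrank F ↥(U ⊓ U') + 1 ≤ finrank F ↥(U'' ⊓ U') := by
  obtain ⟨u', hu'U', hu'U⟩ := SetLike.not_le_iff_exists.mp hne
  have hu'top : u' ∈ S ⊔ U := hU.2.symm ▸ Submodule.mem_top
  obtain ⟨s, hs, u, hu, hsu⟩ := Submodule.mem_sup.mp hu'top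
  set W := U ⊓ U' with hW
  have huU' : u ∉ U' := by
    intro huU'
    have hsU' : s ∈ U' := by
      have : s = u' - u := by rw [← hsu]; abel
      exact this ▸ Submodule.sub_mem U' hu'U' huU'
    have : s = 0 := by
      have := hU'.1.le ⟨hs, hsU'⟩
      simpa using this
    exact hu'U (by rw [← hsu, this, zero_add]; exact hu)
  have huW : u ∉ W := fun h => huU' h.2
  set T := W ⊔ Submodule.span F {u} with hT
  have hTU : T ≤ U := sup_le inf_le_left ((Submodule.span_singleton_le_iff_mem u U).mpr hu)
  obtain ⟨C, hCU, hTC_bot, hTC_sup⟩ := aux_rel_compl T U hTU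
  set D := W ⊔ C with hD
  have hDU : D ≤ U := sup_le inf_le_left hCU
  have huD : u ∉ D := by
    intro h
    obtain ⟨w, hw, c, hc, hwc⟩ := Submodule.mem_sup.mp h
    have hcT : c ∈ T := by
      have : c = u - w := by rw [← hwc]; abel
      exact this ▸ Submodule.sub_mem T
        (Submodule.mem_sup_right (Submodule.mem_span_singleton_self u))
        (Submodule.mem_sup_left hw)
    have : c = 0 := by simpa using hTC_bot.le ⟨hcT, hc⟩
    exact huW (by rw [← hwc, this, add_zero] at h ⊢; exact hw)
  have hUD : U = D ⊔ Submodule.span F {u} := by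
    rw [← hTC_sup, hT, hD]
    rw [sup_right_comm]
  have hu'D : u' ∉ D := fun h => hu'U (hDU h)
  refine ⟨D ⊔ Submodule.span F {u'}, ?_, ?_, ?_, ?_⟩
  · rw [aux_finrank_sup_span_s14 D u' hu'D, hUD, aux_finrank_sup_span_s14 D u huD]
  · constructor
    · rw [eq_bot_iff]
      rintro x ⟨hxS, hxU''⟩
      obtain ⟨d, hd, y, hy, hdy⟩ := Submodule.mem_sup.mp hxU''
      obtain ⟨a, rfl⟩ := Submodule.mem_span_singleton.mp hy
      have key : x - a • s = d + a • u := by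
        rw [← hdy, ← hsu, smul_add]; abel
      have h1 : x - a • s ∈ S := Submodule.sub_mem S hxS (Submodule.smul_mem S a hs)
      have h2 : x - a • s ∈ U := key ▸ Submodule.add_mem U (hDU hd) (Submodule.smul_mem U a hu)
      have h0 : x - a • s = 0 := by simpa using hU.1.le ⟨h1, h2⟩
      have hau : a • u = -d := by
        have := key.symm.trans h0
        linear_combination (norm := abel) this
      have ha : a = 0 := by
        by_contra ha
        have h' := D.smul_mem a⁻¹ (hau ▸ D.neg_mem hd)
        rw [smul_smul, inv_mul_cancel₀ ha, one_smul] at h'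
        exact huD h'
      rw [ha, zero_smul, sub_zero] at h0
      simpa using h0
    · have hfin : finrank F ↥(S ⊔ (D ⊔ Submodule.span F {u'})) = finrank F M := by
        have hSbot : S ⊓ (D ⊔ Submodule.span F {u'}) = ⊥ := by
          rw [eq_bot_iff]
          rintro x ⟨hxS, hxU''⟩
          obtain ⟨d, hd, y, hy, hdy⟩ := Submodule.mem_sup.mp hxU''
          obtain ⟨a, rfl⟩ := Submodule.mem_span_singleton.mp hy
          have key : x - a • s = d + a • u := by
            rw [← hdy, ← hsu, smul_add]; abel
          have h1 : x - a • s ∈ S := Submodule.sub_mem S hxS (Submodule.smul_mem S a hs)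
          have h2 : x - a • s ∈ U := key ▸ Submodule.add_mem U (hDU hd) (Submodule.smul_mem U a hu)
          have h0 : x - a • s = 0 := by simpa using hU.1.le ⟨h1, h2⟩
          have hau : a • u = -d := by
            have := key.symm.trans h0
            linear_combination (norm := abel) this
          have ha : a = 0 := by
            by_contra ha
            have h' := D.smul_mem a⁻¹ (hau ▸ D.neg_mem hd)
            rw [smul_smul, inv_mul_cancel₀ ha, one_smul] at h'
            exact huD h'
          rw [ha, zero_smul, sub_zero] at h0
          simpa using h0
        have e1 := Submodule.finrank_sup_add_finrank_inf_eq S (D ⊔ Submodule.span F {u'})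
        have e2 := Submodule.finrank_sup_add_finrank_inf_eq S U
        rw [hSbot, finrank_bot] at e1
        rw [hU.1, hU.2, finrank_bot, finrank_top] at e2
        have e3 : finrank F ↥(D ⊔ Submodule.span F {u'}) = finrank F U := by
          rw [aux_finrank_sup_span_s14 D u' hu'D, hUD, aux_finrank_sup_span_s14 D u huD]
        omega
      exact Submodule.eq_top_of_finrank_eq hfin
  · have hinfD : U ⊓ (D ⊔ Submodule.span F {u'}) = D := by
      apply le_antisymm
      · rintro x ⟨hxU, hxU''⟩
        obtain ⟨d, hd, y, hy, hdy⟩ := Submodule.mem_sup.mp hxU''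
        obtain ⟨a, rfl⟩ := Submodule.mem_span_singleton.mp hy
        have hauU : a • u' ∈ U := by
          have : a • u' = x - d := by rw [← hdy]; abel
          exact this ▸ Submodule.sub_mem U hxU (hDU hd)
        have ha : a = 0 := by
          by_contra ha
          exact hu'U (by simpa [ha] using U.smul_mem a⁻¹ hauU)
        rw [ha, zero_smul, add_zero] at hdy
        exact hdy ▸ hd
      · exact le_inf hDU le_sup_left
    constructor
    · rw [aux_finrank_sup_span_s14 D u' hu'D, hUD, aux_finrank_sup_span_s14 D u huD]
    · rw [hinfD, hUD, aux_finrank_sup_span_s14 D u huD]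
  · have hle : W ⊔ Submodule.span F {u'} ≤ (D ⊔ Submodule.span F {u'}) ⊓ U' := by
      apply le_inf
      · exact sup_le (le_sup_left.trans le_sup_left) le_sup_right
      · exact sup_le inf_le_right ((Submodule.span_singleton_le_iff_mem u' U').mpr hu'U')
    have hu'W : u' ∉ W := fun h => hu'U h.1
    have := Submodule.finrank_mono hle
    rw [aux_finrank_sup_span_s14 W u' hu'W] at this
    exact this

end Aux


lemma aux_main {F M : Type*} [DivisionRing F] [AddCommGroup M] [Module F M]
    [FiniteDimensional F M] {m : ℕ} (S : Submodule F M)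
    (j : ℕ) (A B : {W : Submodule F M // finrank F W = m ∧ SubCompl F M S W})
    (hj : m - finrank F ↥(A.val ⊓ B.val) ≤ j) :
    Relation.ReflTransGen
      (fun A B : {W : Submodule F M // finrank F W = m ∧ SubCompl F M S W} =>
        SubAdj F M A.val B.val) A B := by
  induction j generalizing A with
  | zero =>
    have hle : A.val ⊓ B.val ≤ A.val := inf_le_left
    have hA : A.val ⊓ B.val = A.val := by
      apply Submodule.eq_of_le_of_finrank_le hle
      have := Submodule.finrank_mono (inf_le_left : A.val ⊓ B.val ≤ A.val)
      omega
    have hAB : A.val ≤ B.val := by rw [← hA]; exact inf_le_right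
    have : A.val = B.val := Submodule.eq_of_le_of_finrank_le hAB (by rw [A.2.1, B.2.1])
    rw [Subtype.ext this]
  | succ j ih =>
    by_cases hAB : A = B
    · rw [hAB]
    · have hne : ¬ B.val ≤ A.val := by
        intro hle
        exact hAB (Subtype.ext (Submodule.eq_of_le_of_finrank_le hle
          (by rw [A.2.1, B.2.1])).symm)
      obtain ⟨U'', hdim, hCompl, hAdj, hrank⟩ := aux_step S A.val B.val A.2.2 B.2.2 hne
      have hdim' : finrank F U'' = m := by rw [hdim, A.2.1]
      have hstrict : finrank F ↥(A.val ⊓ B.val) < m := by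
        by_contra hge
        push_neg at hge
        have hA : A.val ⊓ B.val = A.val :=
          Submodule.eq_of_le_of_finrank_le inf_le_left (by omega)
        have hAB' : A.val ≤ B.val := by rw [← hA]; exact inf_le_right
        exact hAB (Subtype.ext (Submodule.eq_of_le_of_finrank_le hAB'
          (by rw [A.2.1, B.2.1])))
      refine Relation.ReflTransGen.head (b := ⟨U'', hdim', hCompl⟩) hAdj ?_
      apply ih
      simp only
      omega

/-- Any two `(n-k)`-dimensional complements `U`, `U'` of a `k`-dimensional
subspace `S` can be connected by a finite sequence of `(n-k)`-dimensional
complements of `S` in which consecutive terms are adjacent. -/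
theorem complements_connected
    {K V : Type*} [DivisionRing K] [AddCommGroup V] [Module K V]
    [FiniteDimensional K V] {n k : ℕ} (hn : 2 ≤ n) (hV : finrank K V = n)
    (hk1 : 1 ≤ k) (hk2 : k ≤ n - 1)
    (S : Submodule K V) (hS : finrank K S = k)
    (U U' : {W : Submodule K V // finrank K W = n - k ∧ SubCompl K V S W}) :
    Relation.ReflTransGen
      (fun A B : {W : Submodule K V // finrank K W = n - k ∧ SubCompl K V S W} =>
        SubAdj K V A.val B.val) U U' := by
  exact aux_main S (n - k) U U' (Nat.sub_le _ _)
end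

section
/- Let f be a closeness preserving transformation of G. Then either there exist bijections g' of G_k and g'' of G_{n−k} such that f(S,U) = (g'(S), g''(U)) for all (S,U) ∈ G, or there exist bijections g' : G_k → G_{n−k} and g'' : G_{n−k} → G_k such that f(S,U) = (g''(U), g'(S)) for all (S,U) ∈ G. -/
open Module

variable (K V : Type*) [DivisionRing K] [AddCommGroup V] [Module K V]

section LA
variable {K V : Type*} [DivisionRing K] [AddCommGroup V] [Module K V]

lemma aux_exists_not_mem {A B : Submodule K V} (hA : A ≠ ⊤) (hB : B ≠ ⊤) :
    ∃ x : V, x ∉ A ∧ x ∉ B := by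
  obtain ⟨a, -, ha⟩ := SetLike.exists_of_lt (lt_top_iff_ne_top.2 hA : A < ⊤)
  obtain ⟨b, -, hb⟩ := SetLike.exists_of_lt (lt_top_iff_ne_top.2 hB : B < ⊤)
  by_cases hab : a ∈ B
  · by_cases hba : b ∈ A
    · refine ⟨a + b, fun h => ha ?_, fun h => hb ?_⟩
      · simpa using A.sub_mem h hba
      · simpa using B.sub_mem h hab
    · exact ⟨b, hba, hb⟩
  · exact ⟨a, ha, hab⟩

variable [FiniteDimensional K V]

lemma aux_step_s15 {S W : Submodule K V} {x : V} (hx : x ∉ S)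
    (h1 : (S ⊔ Submodule.span K {x}) ⊓ W = ⊥)
    (h2 : (S ⊔ Submodule.span K {x}) ⊔ W = ⊤) :
    S ⊓ (Submodule.span K {x} ⊔ W) = ⊥ ∧ S ⊔ (Submodule.span K {x} ⊔ W) = ⊤ := by
  have hx0 : x ≠ 0 := fun h => hx (h ▸ S.zero_mem)
  set L := Submodule.span K {x} with hL
  have hSL : S ⊓ L = ⊥ := by
    rw [eq_bot_iff]
    rintro v ⟨hvS, hvL⟩
    obtain ⟨c, rfl⟩ := Submodule.mem_span_singleton.1 hvL
    rcases eq_or_ne c 0 with rfl | hc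
    · simp
    · refine absurd ?_ hx
      have := S.smul_mem c⁻¹ hvS
      rwa [inv_smul_smul₀ hc] at this
  have hsupx : S ⊔ (L ⊔ W) = ⊤ := by rw [← sup_assoc]; exact h2
  refine ⟨?_, hsupx⟩
  have hfL : finrank K L = 1 := finrank_span_singleton hx0
  have e1 : finrank K ↥(S ⊔ L) + finrank K ↥(S ⊓ L) = finrank K S + finrank K L :=
    Submodule.finrank_sup_add_finrank_inf_eq S L
  rw [hSL, hfL] at e1
  have e2 : finrank K ↥((S ⊔ L) ⊔ W) + finrank K ↥((S ⊔ L) ⊓ W)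
      = finrank K ↥(S ⊔ L) + finrank K W := Submodule.finrank_sup_add_finrank_inf_eq _ W
  rw [h1, h2] at e2
  have e3 : finrank K ↥(L ⊔ W) + finrank K ↥(L ⊓ W) = finrank K L + finrank K W :=
    Submodule.finrank_sup_add_finrank_inf_eq L W
  have e4 : finrank K ↥(S ⊔ (L ⊔ W)) + finrank K ↥(S ⊓ (L ⊔ W))
      = finrank K S + finrank K ↥(L ⊔ W) := Submodule.finrank_sup_add_finrank_inf_eq _ _
  rw [hsupx] at e4
  have hz : finrank K ↥(S ⊓ (L ⊔ W)) = 0 := by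
    simp only [finrank_top, finrank_bot] at e1 e2 e3 e4
    omega
  exact Submodule.finrank_eq_zero.1 hz

lemma aux_common_compl : ∀ (m : ℕ) (S S' : Submodule K V),
    finrank K S = finrank K S' → finrank K S + m = finrank K V →
    ∃ W : Submodule K V, finrank K W = m ∧
      (S ⊓ W = ⊥ ∧ S ⊔ W = ⊤) ∧ (S' ⊓ W = ⊥ ∧ S' ⊔ W = ⊤) := by
  intro m
  induction m with
  | zero =>
    intro S S' hEq hsum
    have hS : S = ⊤ := Submodule.eq_top_of_finrank_eq (by omega)
    have hS' : S' = ⊤ := Submodule.eq_top_of_finrank_eq (by omega)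
    exact ⟨⊥, by simp [hS, hS']⟩
  | succ m ih =>
    intro S S' hEq hsum
    have hSne : S ≠ ⊤ := by
      intro h; rw [h, finrank_top] at hsum; omega
    have hS'ne : S' ≠ ⊤ := by
      intro h; rw [h, finrank_top] at hEq; omega
    obtain ⟨x, hxS, hxS'⟩ := aux_exists_not_mem hSne hS'ne
    have hx0 : x ≠ 0 := fun h => hxS (h ▸ S.zero_mem)
    have hdim : ∀ (T : Submodule K V), x ∉ T →
        finrank K ↥(T ⊔ Submodule.span K {x}) = finrank K T + 1 := by
      intro T hxT
      have hTL : T ⊓ Submodule.span K {x} = ⊥ := by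
        rw [eq_bot_iff]
        rintro v ⟨hvS, hvL⟩
        obtain ⟨c, rfl⟩ := Submodule.mem_span_singleton.1 hvL
        rcases eq_or_ne c 0 with rfl | hc
        · simp
        · refine absurd ?_ hxT
          have := T.smul_mem c⁻¹ hvS
          rwa [inv_smul_smul₀ hc] at this
      have := Submodule.finrank_sup_add_finrank_inf_eq T (Submodule.span K {x})
      rw [hTL, finrank_span_singleton hx0] at this
      simpa using this
    obtain ⟨W, hWrank, ⟨h1, h2⟩, ⟨h1', h2'⟩⟩ :=
      ih (S ⊔ Submodule.span K {x}) (S' ⊔ Submodule.span K {x})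
        (by rw [hdim S hxS, hdim S' hxS', hEq]) (by rw [hdim S hxS]; omega)
    obtain ⟨c1, c2⟩ := aux_step_s15 hxS h1 h2
    obtain ⟨c1', c2'⟩ := aux_step_s15 hxS' h1' h2'
    refine ⟨Submodule.span K {x} ⊔ W, ?_, ⟨c1, c2⟩, ⟨c1', c2'⟩⟩
    have e4 := Submodule.finrank_sup_add_finrank_inf_eq S (Submodule.span K {x} ⊔ W)
    rw [c1, c2] at e4
    simp only [finrank_top, finrank_bot] at e4
    omega

lemma aux_second_compl {S U : Submodule K V} (h : IsCompl S U) (hSb : S ≠ ⊥) (hSt : S ≠ ⊤) :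
    ∃ U' : Submodule K V, IsCompl S U' ∧ U' ≠ U := by
  obtain ⟨s, hsS, hs0⟩ := Submodule.exists_mem_ne_zero_of_ne_bot hSb
  have hUb : U ≠ ⊥ := by
    rintro rfl
    exact hSt (by simpa using h.codisjoint.eq_top)
  obtain ⟨u, huU, hu0⟩ := Submodule.exists_mem_ne_zero_of_ne_bot hUb
  set x := s + u with hxdef
  have hxS : x ∉ S := by
    intro hxm
    have : u ∈ S ⊓ U := ⟨by have := S.sub_mem hxm hsS; simpa [hxdef] using this, huU⟩
    rw [h.inf_eq_bot] at this
    exact hu0 (by simpa using this)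
  have hxU : x ∉ U := by
    intro hxm
    have : s ∈ S ⊓ U := ⟨hsS, by simpa [hxdef] using U.sub_mem hxm huU⟩
    rw [h.inf_eq_bot] at this
    exact hs0 (by simpa using this)
  obtain ⟨W, hW⟩ := Submodule.exists_isCompl (S ⊔ Submodule.span K {x})
  obtain ⟨c1, c2⟩ := aux_step_s15 hxS (disjoint_iff.1 hW.disjoint) (codisjoint_iff.1 hW.codisjoint)
  refine ⟨Submodule.span K {x} ⊔ W, ⟨disjoint_iff.2 c1, codisjoint_iff.2 c2⟩, ?_⟩
  intro hEq
  exact hxU (hEq ▸ le_sup_left (a := Submodule.span K {x}) (Submodule.mem_span_singleton_self x))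

end LA


set_option linter.unusedSectionVars false
section Comb
variable {K V : Type*} [DivisionRing K] [AddCommGroup V] [Module K V]
  [FiniteDimensional K V] {n k : ℕ}

lemma pairclose_symm {a b : Submodule K V × Submodule K V}
    (h : PairClose K V a b) : PairClose K V b a := by
  rcases h with ⟨h1, h2⟩ | ⟨h1, h2⟩
  · exact Or.inl ⟨h1.symm, h2.symm⟩
  · exact Or.inr ⟨h1.symm, h2.symm⟩

lemma gset_ext {p q : GSet K V n k} (h1 : p.val.1 = q.val.1) (h2 : p.val.2 = q.val.2) :
    p = q := Subtype.ext (Prod.ext h1 h2)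

lemma mem_gset {S U : Submodule K V} (hn : 2 ≤ n) (hV : finrank K V = n)
    (hk1 : 1 ≤ k) (hk2 : k ≤ n - 1) (hS : finrank K S = k) (h : IsCompl S U) :
    (S, U) ∈ GSet K V n k := by
  have hadd := Submodule.finrank_add_eq_of_isCompl h
  rw [hV, hS] at hadd
  exact ⟨hS, show finrank K ↥U = n - k by omega,
    disjoint_iff.1 h.disjoint, codisjoint_iff.1 h.codisjoint⟩

lemma mem_gset' {S U : Submodule K V} (hn : 2 ≤ n) (hV : finrank K V = n)
    (hk1 : 1 ≤ k) (hk2 : k ≤ n - 1) (hU : finrank K U = n - k) (h : IsCompl S U) :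
    (S, U) ∈ GSet K V n k := by
  have hadd := Submodule.finrank_add_eq_of_isCompl h
  rw [hV, hU] at hadd
  exact mem_gset hn hV hk1 hk2 (by omega) h

/-- Every point has a type-1 neighbour (same first coordinate, different second). -/
lemma star1_exists (hn : 2 ≤ n) (hV : finrank K V = n) (hk1 : 1 ≤ k) (hk2 : k ≤ n - 1)
    (p : GSet K V n k) :
    ∃ q : GSet K V n k, p.val.1 = q.val.1 ∧ p.val.2 ≠ q.val.2 := by
  obtain ⟨hS, hU, hc1, hc2⟩ := p.property
  have h : IsCompl p.val.1 p.val.2 := ⟨disjoint_iff.2 hc1, codisjoint_iff.2 hc2⟩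
  have hSb : p.val.1 ≠ ⊥ := by
    intro hb; rw [hb, finrank_bot] at hS; omega
  have hSt : p.val.1 ≠ ⊤ := by
    intro hb; rw [hb, finrank_top, hV] at hS; omega
  obtain ⟨U', hU', hne⟩ := aux_second_compl h hSb hSt
  exact ⟨⟨(p.val.1, U'), mem_gset hn hV hk1 hk2 hS hU'⟩, rfl, fun hEq => hne hEq.symm⟩

/-- Every point has a type-2 neighbour (same second coordinate, different first). -/
lemma star2_exists (hn : 2 ≤ n) (hV : finrank K V = n) (hk1 : 1 ≤ k) (hk2 : k ≤ n - 1)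
    (p : GSet K V n k) :
    ∃ q : GSet K V n k, p.val.1 ≠ q.val.1 ∧ p.val.2 = q.val.2 := by
  obtain ⟨hS, hU, hc1, hc2⟩ := p.property
  have h : IsCompl p.val.2 p.val.1 :=
    IsCompl.symm ⟨disjoint_iff.2 hc1, codisjoint_iff.2 hc2⟩
  have hUb : p.val.2 ≠ ⊥ := by
    intro hb; rw [hb, finrank_bot] at hU; omega
  have hUt : p.val.2 ≠ ⊤ := by
    intro hb; rw [hb, finrank_top, hV] at hU; omega
  obtain ⟨S', hS', hne⟩ := aux_second_compl h hUb hUt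
  exact ⟨⟨(S', p.val.2), mem_gset' hn hV hk1 hk2 hU hS'.symm⟩,
    fun hEq => hne hEq.symm, rfl⟩

/-- The closeness graph on `GSet` is connected. -/
lemma gset_conn (hn : 2 ≤ n) (hV : finrank K V = n) (hk1 : 1 ≤ k) (hk2 : k ≤ n - 1)
    (p q : GSet K V n k) :
    Relation.ReflTransGen (fun a b : GSet K V n k => PairClose K V a.val b.val) p q := by
  have step : ∀ a b : GSet K V n k, (a.val.1 = b.val.1 ∨ a.val.2 = b.val.2) →
      Relation.ReflTransGen (fun a b : GSet K V n k => PairClose K V a.val b.val) a b := by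
    intro a b h
    by_cases hab : a = b
    · rw [hab]
    · refine Relation.ReflTransGen.single ?_
      rcases h with h1 | h2
      · exact Or.inl ⟨h1, fun h2 => hab (gset_ext h1 h2)⟩
      · exact Or.inr ⟨fun h1 => hab (gset_ext h1 h2), h2⟩
  obtain ⟨W, hWrank, ⟨a1, a2⟩, ⟨b1, b2⟩⟩ :=
    aux_common_compl (n - k) p.val.1 q.val.1
      (p.property.1.trans q.property.1.symm) (by rw [p.property.1, hV]; omega)
  have hWr : finrank K W = n - k := hWrank
  let mid1 : GSet K V n k := ⟨(p.val.1, W), p.property.1, hWr, a1, a2⟩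
  let mid2 : GSet K V n k := ⟨(q.val.1, W), q.property.1, hWr, b1, b2⟩
  exact (step p mid1 (Or.inl rfl)).trans ((step mid1 mid2 (Or.inr rfl)).trans
    (step mid2 q (Or.inl rfl)))

variable (f : GSet K V n k → GSet K V n k)

/-- `f` maps type-1 edges at `p` to type-1 edges. -/
def EP (p : GSet K V n k) : Prop :=
  ∀ q : GSet K V n k, p.val.1 = q.val.1 → p.val.2 ≠ q.val.2 →
    (f p).val.1 = (f q).val.1

variable (hf : Function.Bijective f)
  (hclose : ∀ p q : GSet K V n k,
    PairClose K V p.val q.val ↔ PairClose K V (f p).val (f q).val)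

include hf hclose in
/-- If one type-1 edge at `p` goes to a type-1 edge, then all type-1 edges at `p`
go to type-1 edges, and all type-2 edges go to type-2 edges. -/
lemma loc1 (p q₁ : GSet K V n k) (h1 : p.val.1 = q₁.val.1) (h2 : p.val.2 ≠ q₁.val.2)
    (himg : (f p).val.1 = (f q₁).val.1) :
    EP f p ∧
    (∀ r : GSet K V n k, p.val.1 ≠ r.val.1 → p.val.2 = r.val.2 →
      (f p).val.2 = (f r).val.2) := by
  constructor
  · intro q hq1 hq2
    by_cases hqq : q = q₁
    · rw [hqq]; exact himg
    · rcases (hclose p q).1 (Or.inl ⟨hq1, hq2⟩) with ⟨e1, -⟩ | ⟨ne1, e2⟩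
      · exact e1
      · exfalso
        have hq21 : q.val.2 ≠ q₁.val.2 := fun h => hqq (gset_ext (hq1.symm.trans h1) h)
        rcases (hclose q q₁).1 (Or.inl ⟨hq1.symm.trans h1, hq21⟩) with ⟨e1', -⟩ | ⟨-, e2'⟩
        · exact ne1 (himg.trans e1'.symm)
        · rcases (hclose p q₁).1 (Or.inl ⟨h1, h2⟩) with ⟨-, ne⟩ | ⟨ne, -⟩
          · exact ne (e2.trans e2')
          · exact ne himg
  · intro r hr1 hr2
    rcases (hclose p r).1 (Or.inr ⟨hr1, hr2⟩) with ⟨e1, -⟩ | ⟨-, e2⟩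
    · exfalso
      have hnc : ¬ PairClose K V q₁.val r.val := by
        rintro (⟨a, -⟩ | ⟨-, b⟩)
        · exact hr1 (h1.trans a)
        · exact h2 (b.trans hr2.symm).symm
      have hncf : ¬ PairClose K V (f q₁).val (f r).val := fun h => hnc ((hclose q₁ r).2 h)
      have hfirst : (f q₁).val.1 = (f r).val.1 := himg.symm.trans e1
      have hsecond : (f q₁).val.2 = (f r).val.2 := by
        by_contra hne
        exact hncf (Or.inl ⟨hfirst, hne⟩)
      have : q₁ = r := hf.1 (gset_ext hfirst hsecond)
      exact h2 (by rw [this]; exact hr2)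
    · exact e2

include hf hclose in
/-- Dichotomy at a point: either both edge types are preserved, or both are swapped. -/
lemma dichotomy (hn : 2 ≤ n) (hV : finrank K V = n) (hk1 : 1 ≤ k) (hk2 : k ≤ n - 1)
    (p : GSet K V n k) :
    (EP f p ∧
      (∀ r : GSet K V n k, p.val.1 ≠ r.val.1 → p.val.2 = r.val.2 →
        (f p).val.2 = (f r).val.2)) ∨
    ((∀ q : GSet K V n k, p.val.1 = q.val.1 → p.val.2 ≠ q.val.2 →
        (f p).val.2 = (f q).val.2) ∧
      (∀ r : GSet K V n k, p.val.1 ≠ r.val.1 → p.val.2 = r.val.2 →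
        (f p).val.1 = (f r).val.1)) := by
  obtain ⟨q₁, h1, h2⟩ := star1_exists hn hV hk1 hk2 p
  rcases (hclose p q₁).1 (Or.inl ⟨h1, h2⟩) with ⟨e1, -⟩ | ⟨ne1, e2⟩
  · exact Or.inl (loc1 f hf hclose p q₁ h1 h2 e1)
  · right
    constructor
    · intro q hq1 hq2
      rcases (hclose p q).1 (Or.inl ⟨hq1, hq2⟩) with ⟨e1', -⟩ | ⟨-, e2'⟩
      · exact absurd ((loc1 f hf hclose p q hq1 hq2 e1').1 q₁ h1 h2) ne1
      · exact e2'
    · intro r hr1 hr2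
      rcases (hclose p r).1 (Or.inr ⟨hr1, hr2⟩) with ⟨e1', -⟩ | ⟨-, e2'⟩
      · exact e1'
      · exfalso
        have hnc : ¬ PairClose K V q₁.val r.val := by
          rintro (⟨a, -⟩ | ⟨-, b⟩)
          · exact hr1 (h1.trans a)
          · exact h2 (b.trans hr2.symm).symm
        have hncf : ¬ PairClose K V (f q₁).val (f r).val := fun h => hnc ((hclose q₁ r).2 h)
        have hsecond : (f q₁).val.2 = (f r).val.2 := e2.symm.trans e2'
        have hfirst : (f q₁).val.1 = (f r).val.1 := by
          by_contra hne
          exact hncf (Or.inr ⟨hne, hsecond⟩)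
        have : q₁ = r := hf.1 (gset_ext hfirst hsecond)
        exact hr1 (h1.trans (this ▸ rfl))

include hf hclose in
lemma E_full (hn : 2 ≤ n) (hV : finrank K V = n) (hk1 : 1 ≤ k) (hk2 : k ≤ n - 1)
    (p : GSet K V n k) (hE : EP f p) :
    EP f p ∧
    (∀ r : GSet K V n k, p.val.1 ≠ r.val.1 → p.val.2 = r.val.2 →
      (f p).val.2 = (f r).val.2) := by
  obtain ⟨q₁, h1, h2⟩ := star1_exists hn hV hk1 hk2 p
  exact loc1 f hf hclose p q₁ h1 h2 (hE q₁ h1 h2)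

include hf hclose in
lemma notE_full (hn : 2 ≤ n) (hV : finrank K V = n) (hk1 : 1 ≤ k) (hk2 : k ≤ n - 1)
    (p : GSet K V n k) (hE : ¬ EP f p) :
    (∀ q : GSet K V n k, p.val.1 = q.val.1 → p.val.2 ≠ q.val.2 →
        (f p).val.2 = (f q).val.2) ∧
    (∀ r : GSet K V n k, p.val.1 ≠ r.val.1 → p.val.2 = r.val.2 →
        (f p).val.1 = (f r).val.1) := by
  rcases dichotomy f hf hclose hn hV hk1 hk2 p with ⟨h, -⟩ | h
  · exact absurd h hE
  · exact h

include hf hclose in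
lemma E_imp (hn : 2 ≤ n) (hV : finrank K V = n) (hk1 : 1 ≤ k) (hk2 : k ≤ n - 1)
    (p q : GSet K V n k) (hpq : PairClose K V p.val q.val) (hE : EP f p) : EP f q := by
  rcases dichotomy f hf hclose hn hV hk1 hk2 q with ⟨h, -⟩ | ⟨d1, d2⟩
  · exact h
  · exfalso
    rcases hpq with ⟨a, b⟩ | ⟨a, b⟩
    · have e1 : (f p).val.1 = (f q).val.1 := hE q a b
      have e2 : (f q).val.2 = (f p).val.2 := d1 p a.symm (Ne.symm b)
      have : p = q := hf.1 (gset_ext e1 e2.symm)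
      exact b (this ▸ rfl)
    · have e1 : (f q).val.1 = (f p).val.1 := d2 p (Ne.symm a) b.symm
      have e2 : (f p).val.2 = (f q).val.2 :=
        (E_full f hf hclose hn hV hk1 hk2 p hE).2 q a b
      have : p = q := hf.1 (gset_ext e1.symm e2)
      exact a (this ▸ rfl)

include hf hclose in
lemma E_const (hn : 2 ≤ n) (hV : finrank K V = n) (hk1 : 1 ≤ k) (hk2 : k ≤ n - 1)
    (p q : GSet K V n k) (hE : EP f p) : EP f q := by
  have hpath := gset_conn hn hV hk1 hk2 p q
  induction hpath with
  | refl => exact hE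
  | tail h₁ h₂ ih => exact E_imp f hf hclose hn hV hk1 hk2 _ _ h₂ ih

end Comb

/-- Every closeness preserving transformation of 𝒢 is the restriction of `g' × g''`
or of `g' ⋈ g''` for bijections between the Grassmannians. -/
theorem closeness_preserving_factors
    {K V : Type*} [DivisionRing K] [AddCommGroup V] [Module K V]
    [FiniteDimensional K V] {n k : ℕ} (hn : 2 ≤ n) (hV : finrank K V = n)
    (hk1 : 1 ≤ k) (hk2 : k ≤ n - 1)
    (f : GSet K V n k → GSet K V n k) (hf : Function.Bijective f)
    (hclose : ∀ p q : GSet K V n k,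
      PairClose K V p.val q.val ↔ PairClose K V (f p).val (f q).val) :
    (∃ (g' : {S : Submodule K V // finrank K S = k} →
             {S : Submodule K V // finrank K S = k})
       (g'' : {U : Submodule K V // finrank K U = n - k} →
              {U : Submodule K V // finrank K U = n - k}),
        Function.Bijective g' ∧ Function.Bijective g'' ∧
        ∀ p : GSet K V n k,
          (f p).val.1 = (g' ⟨p.val.1, p.property.1⟩).val ∧
          (f p).val.2 = (g'' ⟨p.val.2, p.property.2.1⟩).val) ∨
    (∃ (g' : {S : Submodule K V // finrank K S = k} →
             {U : Submodule K V // finrank K U = n - k})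
       (g'' : {U : Submodule K V // finrank K U = n - k} →
              {S : Submodule K V // finrank K S = k}),
        Function.Bijective g' ∧ Function.Bijective g'' ∧
        ∀ p : GSet K V n k,
          (f p).val.1 = (g'' ⟨p.val.2, p.property.2.1⟩).val ∧
          (f p).val.2 = (g' ⟨p.val.1, p.property.1⟩).val) := by
  classical
  by_cases hne : Nonempty (GSet K V n k)
  case neg =>
    exact Or.inl ⟨id, id, Function.bijective_id, Function.bijective_id,
      fun p => absurd ⟨p⟩ hne⟩
  case pos =>
  obtain ⟨p₀⟩ := hne
  have hptE : ∀ S : {S : Submodule K V // finrank K S = k},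
      ∃ p : GSet K V n k, p.val.1 = S.val := by
    intro S
    obtain ⟨U, hU⟩ := Submodule.exists_isCompl S.val
    exact ⟨⟨(S.val, U), mem_gset hn hV hk1 hk2 S.property hU⟩, rfl⟩
  choose pt hpt using hptE
  have hpt2E : ∀ Uu : {U : Submodule K V // finrank K U = n - k},
      ∃ p : GSet K V n k, p.val.2 = Uu.val := by
    intro Uu
    obtain ⟨S, hS⟩ := Submodule.exists_isCompl Uu.val
    exact ⟨⟨(S, Uu.val), mem_gset' hn hV hk1 hk2 Uu.property hS.symm⟩, rfl⟩
  choose pt2 hpt2 using hpt2E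
  set e := Equiv.ofBijective f hf with he
  set f' : GSet K V n k → GSet K V n k := ⇑e.symm with hf'def
  have hff' : ∀ p, f (f' p) = p := fun p => e.apply_symm_apply p
  have hf'f : ∀ p, f' (f p) = p := fun p => e.symm_apply_apply p
  have hclose' : ∀ p q : GSet K V n k,
      PairClose K V p.val q.val ↔ PairClose K V (f' p).val (f' q).val := by
    intro p q
    have h := hclose (f' p) (f' q)
    rw [hff' p, hff' q] at h
    exact h.symm
  by_cases hE : EP f p₀
  · -- direct case
    have hA : ∀ p, EP f p := fun p => E_const f hf hclose hn hV hk1 hk2 p₀ p hE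
    have wd1 : ∀ p q : GSet K V n k, p.val.1 = q.val.1 →
        (f p).val.1 = (f q).val.1 := by
      intro p q h
      by_cases h2 : p.val.2 = q.val.2
      · rw [gset_ext h h2]
      · exact hA p q h h2
    have wd2 : ∀ p q : GSet K V n k, p.val.2 = q.val.2 →
        (f p).val.2 = (f q).val.2 := by
      intro p q h
      by_cases h1 : p.val.1 = q.val.1
      · rw [gset_ext h1 h]
      · exact (E_full f hf hclose hn hV hk1 hk2 p (hA p)).2 q h1 h
    have wd1' : ∀ p q : GSet K V n k, p.val.1 = q.val.1 →
        (f' p).val.1 = (f' q).val.1 := by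
      intro p q h
      by_cases h2 : p.val.2 = q.val.2
      · rw [gset_ext h h2]
      · rcases (hclose' p q).1 (Or.inl ⟨h, h2⟩) with ⟨a, -⟩ | ⟨-, b⟩
        · exact a
        · exfalso
          have hh := wd2 (f' p) (f' q) b
          rw [hff' p, hff' q] at hh
          exact h2 hh
    have wd2' : ∀ p q : GSet K V n k, p.val.2 = q.val.2 →
        (f' p).val.2 = (f' q).val.2 := by
      intro p q h
      by_cases h1 : p.val.1 = q.val.1
      · rw [gset_ext h1 h]
      · rcases (hclose' p q).1 (Or.inr ⟨h1, h⟩) with ⟨a, -⟩ | ⟨-, b⟩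
        · exfalso
          have hh := wd1 (f' p) (f' q) a
          rw [hff' p, hff' q] at hh
          exact h1 hh
        · exact b
    refine Or.inl ⟨fun S => ⟨(f (pt S)).val.1, (f (pt S)).property.1⟩,
      fun Uu => ⟨(f (pt2 Uu)).val.2, (f (pt2 Uu)).property.2.1⟩, ?_, ?_, ?_⟩
    · refine Function.bijective_iff_has_inverse.2
        ⟨fun S => ⟨(f' (pt S)).val.1, (f' (pt S)).property.1⟩, ?_, ?_⟩
      · intro S
        apply Subtype.ext
        have hh := wd1' (pt ⟨(f (pt S)).val.1, (f (pt S)).property.1⟩) (f (pt S))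
          (hpt ⟨(f (pt S)).val.1, (f (pt S)).property.1⟩)
        rw [hf'f (pt S)] at hh
        exact hh.trans (hpt S)
      · intro S
        apply Subtype.ext
        have hh := wd1 (pt ⟨(f' (pt S)).val.1, (f' (pt S)).property.1⟩) (f' (pt S))
          (hpt ⟨(f' (pt S)).val.1, (f' (pt S)).property.1⟩)
        rw [hff' (pt S)] at hh
        exact hh.trans (hpt S)
    · refine Function.bijective_iff_has_inverse.2
        ⟨fun Uu => ⟨(f' (pt2 Uu)).val.2, (f' (pt2 Uu)).property.2.1⟩, ?_, ?_⟩
      · intro Uu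
        apply Subtype.ext
        have hh := wd2' (pt2 ⟨(f (pt2 Uu)).val.2, (f (pt2 Uu)).property.2.1⟩) (f (pt2 Uu))
          (hpt2 ⟨(f (pt2 Uu)).val.2, (f (pt2 Uu)).property.2.1⟩)
        rw [hf'f (pt2 Uu)] at hh
        exact hh.trans (hpt2 Uu)
      · intro Uu
        apply Subtype.ext
        have hh := wd2 (pt2 ⟨(f' (pt2 Uu)).val.2, (f' (pt2 Uu)).property.2.1⟩) (f' (pt2 Uu))
          (hpt2 ⟨(f' (pt2 Uu)).val.2, (f' (pt2 Uu)).property.2.1⟩)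
        rw [hff' (pt2 Uu)] at hh
        exact hh.trans (hpt2 Uu)
    · intro p
      exact ⟨wd1 p (pt ⟨p.val.1, p.property.1⟩) (hpt ⟨p.val.1, p.property.1⟩).symm,
        wd2 p (pt2 ⟨p.val.2, p.property.2.1⟩) (hpt2 ⟨p.val.2, p.property.2.1⟩).symm⟩
  · -- swap case
    have hB : ∀ p, ¬ EP f p := fun p h =>
      hE (E_const f hf hclose hn hV hk1 hk2 p p₀ h)
    have nf := fun p => notE_full f hf hclose hn hV hk1 hk2 p (hB p)
    have wd1 : ∀ p q : GSet K V n k, p.val.1 = q.val.1 →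
        (f p).val.2 = (f q).val.2 := by
      intro p q h
      by_cases h2 : p.val.2 = q.val.2
      · rw [gset_ext h h2]
      · exact (nf p).1 q h h2
    have wd2 : ∀ p q : GSet K V n k, p.val.2 = q.val.2 →
        (f p).val.1 = (f q).val.1 := by
      intro p q h
      by_cases h1 : p.val.1 = q.val.1
      · rw [gset_ext h1 h]
      · exact (nf p).2 q h1 h
    have wd1' : ∀ p q : GSet K V n k, p.val.1 = q.val.1 →
        (f' p).val.2 = (f' q).val.2 := by
      intro p q h
      by_cases h2 : p.val.2 = q.val.2
      · rw [gset_ext h h2]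
      · rcases (hclose' p q).1 (Or.inl ⟨h, h2⟩) with ⟨a, -⟩ | ⟨-, b⟩
        · exfalso
          have hh := wd1 (f' p) (f' q) a
          rw [hff' p, hff' q] at hh
          exact h2 hh
        · exact b
    have wd2' : ∀ p q : GSet K V n k, p.val.2 = q.val.2 →
        (f' p).val.1 = (f' q).val.1 := by
      intro p q h
      by_cases h1 : p.val.1 = q.val.1
      · rw [gset_ext h1 h]
      · rcases (hclose' p q).1 (Or.inr ⟨h1, h⟩) with ⟨a, -⟩ | ⟨-, b⟩
        · exact a
        · exfalso
          have hh := wd2 (f' p) (f' q) b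
          rw [hff' p, hff' q] at hh
          exact h1 hh
    refine Or.inr ⟨fun S => ⟨(f (pt S)).val.2, (f (pt S)).property.2.1⟩,
      fun Uu => ⟨(f (pt2 Uu)).val.1, (f (pt2 Uu)).property.1⟩, ?_, ?_, ?_⟩
    · refine Function.bijective_iff_has_inverse.2
        ⟨fun Uu => ⟨(f' (pt2 Uu)).val.1, (f' (pt2 Uu)).property.1⟩, ?_, ?_⟩
      · intro S
        apply Subtype.ext
        have hh := wd2' (pt2 ⟨(f (pt S)).val.2, (f (pt S)).property.2.1⟩) (f (pt S))
          (hpt2 ⟨(f (pt S)).val.2, (f (pt S)).property.2.1⟩)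
        rw [hf'f (pt S)] at hh
        exact hh.trans (hpt S)
      · intro Uu
        apply Subtype.ext
        have hh := wd1 (pt ⟨(f' (pt2 Uu)).val.1, (f' (pt2 Uu)).property.1⟩) (f' (pt2 Uu))
          (hpt ⟨(f' (pt2 Uu)).val.1, (f' (pt2 Uu)).property.1⟩)
        rw [hff' (pt2 Uu)] at hh
        exact hh.trans (hpt2 Uu)
    · refine Function.bijective_iff_has_inverse.2
        ⟨fun S => ⟨(f' (pt S)).val.2, (f' (pt S)).property.2.1⟩, ?_, ?_⟩
      · intro Uu
        apply Subtype.ext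
        have hh := wd1' (pt ⟨(f (pt2 Uu)).val.1, (f (pt2 Uu)).property.1⟩) (f (pt2 Uu))
          (hpt ⟨(f (pt2 Uu)).val.1, (f (pt2 Uu)).property.1⟩)
        rw [hf'f (pt2 Uu)] at hh
        exact hh.trans (hpt2 Uu)
      · intro S
        apply Subtype.ext
        have hh := wd2 (pt2 ⟨(f' (pt S)).val.2, (f' (pt S)).property.2.1⟩) (f' (pt S))
          (hpt2 ⟨(f' (pt S)).val.2, (f' (pt S)).property.2.1⟩)
        rw [hff' (pt S)] at hh
        exact hh.trans (hpt S)
    · intro p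
      exact ⟨wd2 p (pt2 ⟨p.val.2, p.property.2.1⟩) (hpt2 ⟨p.val.2, p.property.2.1⟩).symm,
        wd1 p (pt ⟨p.val.1, p.property.1⟩) (hpt ⟨p.val.1, p.property.1⟩).symm⟩
end
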